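/- arXiv:math/0511693 — 8 statements merged into one kernel-verified Lean document; each statement's English description precedes it below -/
import Mathlib

section
/- Let μ be a nonzero complex number with |μ−1| ≤ 1, let β ∈ [0,1), let σ be a probability measure on the unit circle, and define f(z) = (1−z)^μ · exp(−μ(1−β) ∫_{|ζ|=1} log(1−z ζ̄) dσ(ζ)) for z in the open unit disk (using the principal branch of log, which is well defined since Re(1−zζ̄) > 0). Then for all z in the open unit disk, Re( (2/μ)·(z f'(z)/f(z)) + (1+z)/(1−z) ) > β. -/
open Complex MeasureTheory Metric Topology Filter
lemma aux_re_pos {w a : ℂ} (hw : ‖w‖ < 1) (ha : ‖a‖ = 1) :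
    0 < (1 - w * a).re := by
  have h1 : ‖(w * a)‖ < 1 := by rw [norm_mul, ha, mul_one]; exact hw
  have h2 : (w * a).re ≤ ‖(w * a)‖ := Complex.re_le_norm _
  have : (1 - w * a).re = 1 - (w * a).re := by simp
  linarith

-- aux 2: pointwise lower bound
lemma aux_herglotz {w : ℂ} {r : ℝ} (hw : ‖w‖ ≤ r) (hr : r < 1) :
    -1/2 + (1 - r^2)/8 ≤ (w / (1 - w)).re := by
  have hr0 : 0 ≤ r := le_trans (norm_nonneg w) hw
  have hwn : Complex.normSq w ≤ r^2 := by
    rw [← Complex.sq_norm]; exact pow_le_pow_left₀ (norm_nonneg w) hw 2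
  have hne : (1 : ℂ) - w ≠ 0 := by
    intro h
    have : w = 1 := by linear_combination -h
    rw [this] at hw; simp at hw; linarith
  have hn0 : 0 < Complex.normSq (1 - w) := Complex.normSq_pos.2 hne
  have key : (w / (1 - w)).re + 1/2 = (1 - Complex.normSq w) / (2 * Complex.normSq (1 - w)) := by
    rw [Complex.div_re]
    have h1 : (1 - w).re = 1 - w.re := by simp
    have h2 : (1 - w).im = -w.im := by simp
    have h3 : Complex.normSq (1 - w) = (1 - w.re)^2 + w.im^2 := by
      rw [Complex.normSq_apply, h1, h2]; ring
    rw [h1, h2, h3, Complex.normSq_apply]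
    have h4 : (0:ℝ) < (1 - w.re)^2 + w.im^2 := by rw [← h3]; exact hn0
    field_simp
    ring
  have hub : Complex.normSq (1 - w) ≤ 4 := by
    have : ‖(1 - w)‖ ≤ 2 := by
      calc ‖(1 - w)‖ ≤ ‖(1:ℂ)‖ + ‖w‖ := by
            simpa [sub_eq_add_neg] using norm_add_le 1 (-w)
        _ ≤ 2 := by simp; linarith
    calc Complex.normSq (1 - w) = ‖(1 - w)‖ ^ 2 := (Complex.sq_norm _).symm
      _ ≤ 2^2 := pow_le_pow_left₀ (norm_nonneg _) this 2
      _ = 4 := by norm_num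
  have hnum : 1 - r^2 ≤ 1 - Complex.normSq w := by linarith
  have hpos : 0 < 1 - r^2 := by nlinarith
  have : (1 - r^2)/8 ≤ (1 - Complex.normSq w) / (2 * Complex.normSq (1 - w)) := by
    apply div_le_div₀ (by linarith) hnum (by linarith) (by linarith)
  linarith [key]
lemma aux_abs_coe (ζ : sphere (0:ℂ) 1) : ‖(ζ : ℂ)‖ = 1 := by
  have := mem_sphere_zero_iff_norm.mp ζ.2
  simpa using this

lemma aux_integrable (σ : Measure (sphere (0:ℂ) 1)) [IsProbabilityMeasure σ]
    (g : sphere (0:ℂ) 1 → ℂ) (hg : Continuous g) : Integrable g σ :=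
  hg.integrable_of_hasCompactSupport (HasCompactSupport.of_compactSpace g)

lemma aux_integrable_re (σ : Measure (sphere (0:ℂ) 1)) [IsProbabilityMeasure σ]
    (g : sphere (0:ℂ) 1 → ℝ) (hg : Continuous g) : Integrable g σ :=
  hg.integrable_of_hasCompactSupport (HasCompactSupport.of_compactSpace g)

lemma aux_cont_log (σ : Measure (sphere (0:ℂ) 1)) (x : ℂ) (hx : ‖x‖ < 1) :
    Continuous (fun ζ : sphere (0:ℂ) 1 => Complex.log (1 - x * (starRingEnd ℂ) (ζ:ℂ))) := by
  apply Continuous.clog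
  · exact continuous_const.sub (continuous_const.mul
      ((Complex.continuous_conj).comp continuous_subtype_val))
  · intro ζ
    exact Or.inl (aux_re_pos hx (by simpa [Complex.norm_conj] using aux_abs_coe ζ))

lemma aux_deriv_int (σ : Measure (sphere (0:ℂ) 1)) [IsProbabilityMeasure σ]
    (z : ℂ) (hz : ‖z‖ < 1) :
    Integrable (fun ζ : sphere (0:ℂ) 1 => -(starRingEnd ℂ) (ζ:ℂ) / (1 - z * (starRingEnd ℂ) (ζ:ℂ))) σ ∧
    HasDerivAt (fun x : ℂ => ∫ ζ : sphere (0:ℂ) 1, Complex.log (1 - x * (starRingEnd ℂ) (ζ:ℂ)) ∂σ)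
      (∫ ζ : sphere (0:ℂ) 1, -(starRingEnd ℂ) (ζ:ℂ) / (1 - z * (starRingEnd ℂ) (ζ:ℂ)) ∂σ) z := by
  set ε : ℝ := (1 - ‖z‖) / 2 with hε
  have hε_pos : 0 < ε := by simp only [hε]; linarith
  have habs : ∀ ζ : sphere (0:ℂ) 1, ‖((starRingEnd ℂ) (ζ:ℂ))‖ = 1 := by
    intro ζ; rw [Complex.norm_conj]; exact aux_abs_coe ζ
  have hball : ∀ x ∈ ball z ε, ‖x‖ < 1 - ε := by
    intro x hx
    have : ‖(x - z)‖ < ε := by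
      simpa [Complex.dist_eq] using (mem_ball.mp hx)
    calc ‖x‖ ≤ ‖(x - z)‖ + ‖z‖ := by
          simpa using norm_add_le (x - z) z
      _ < ε + ‖z‖ := by linarith
      _ = 1 - ε := by simp only [hε]; ring
  have hεlt : ε < 1 := by
    have := norm_nonneg z; simp only [hε]; linarith
  apply hasDerivAt_integral_of_dominated_loc_of_deriv_le (s := ball z ε)
    (F := fun x (ζ : sphere (0:ℂ) 1) => Complex.log (1 - x * (starRingEnd ℂ) (ζ:ℂ)))
    (F' := fun x (ζ : sphere (0:ℂ) 1) => -(starRingEnd ℂ) (ζ:ℂ) / (1 - x * (starRingEnd ℂ) (ζ:ℂ)))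
    (bound := fun _ => ε⁻¹) (ball_mem_nhds z hε_pos)
  · filter_upwards [ball_mem_nhds z hε_pos] with x hx
    exact ((aux_cont_log σ x (lt_trans (hball x hx) (by linarith))).aestronglyMeasurable)
  · exact aux_integrable σ _ (aux_cont_log σ z hz)
  · apply Continuous.aestronglyMeasurable
    apply Continuous.div
    · exact ((Complex.continuous_conj).comp continuous_subtype_val).neg
    · exact continuous_const.sub (continuous_const.mul
        ((Complex.continuous_conj).comp continuous_subtype_val))
    · intro ζ
      intro h
      have := aux_re_pos hz (habs ζ)
      rw [h] at this; simp at this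
  · apply Filter.Eventually.of_forall
    intro ζ x hx
    have h1 : ‖(1 - x * (starRingEnd ℂ) (ζ:ℂ))‖ ≥ ε := by
      have hxa : ‖(x * (starRingEnd ℂ) (ζ:ℂ))‖ < 1 - ε := by
        rw [norm_mul, habs ζ, mul_one]; exact hball x hx
      calc ‖(1 - x * (starRingEnd ℂ) (ζ:ℂ))‖
          ≥ 1 - ‖(x * (starRingEnd ℂ) (ζ:ℂ))‖ := by
            have := norm_sub_norm_le (1:ℂ) (x * (starRingEnd ℂ) (ζ:ℂ))
            simpa using this
        _ ≥ ε := by linarith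
    rw [norm_div, norm_neg, habs ζ]
    rw [div_le_iff₀ (by linarith)]
    calc (1:ℝ) = ε⁻¹ * ε := by field_simp
      _ ≤ ε⁻¹ * ‖(1 - x * (starRingEnd ℂ) (ζ:ℂ))‖ := by
          apply mul_le_mul_of_nonneg_left h1 (by positivity)
  · exact integrable_const _
  · apply Filter.Eventually.of_forall
    intro ζ x hx
    set a := (starRingEnd ℂ) (ζ:ℂ)
    have hd : HasDerivAt (fun x : ℂ => 1 - x * a) (-a) x := by
      simpa using ((hasDerivAt_id x).mul_const a).const_sub 1
    have hx1 : ‖x‖ < 1 := lt_trans (hball x hx) (by linarith)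
    have := hd.clog (Or.inl (aux_re_pos hx1 (habs ζ)))
    simpa [neg_div] using this

theorem stmt0 (μ : ℂ) (hμ0 : μ ≠ 0) (hμ : ‖μ - 1‖ ≤ 1)
    (β : ℝ) (hβ : 0 ≤ β) (hβ1 : β < 1)
    (σ : Measure (sphere (0:ℂ) 1)) [IsProbabilityMeasure σ]
    (f : ℂ → ℂ)
    (hf : ∀ z ∈ ball (0 : ℂ) 1,
      f z = (1 - z) ^ μ *
        Complex.exp (-μ * (1 - (β : ℂ)) *
          ∫ ζ : sphere (0:ℂ) 1, Complex.log (1 - z * (starRingEnd ℂ) (ζ : ℂ)) ∂σ)) :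
    ∀ z ∈ ball (0 : ℂ) 1,
      (β : ℝ) < ((2 / μ) * (z * deriv f z / f z) + (1 + z) / (1 - z)).re := by
  intro z hz
  have hz1 : ‖z‖ < 1 := by simpa [Complex.dist_eq] using mem_ball.mp hz
  set c : ℂ := -μ * (1 - (β : ℂ)) with hc
  set I : ℂ → ℂ := fun x => ∫ ζ : sphere (0:ℂ) 1, Complex.log (1 - x * (starRingEnd ℂ) (ζ:ℂ)) ∂σ with hI
  set D : ℂ := ∫ ζ : sphere (0:ℂ) 1, -(starRingEnd ℂ) (ζ:ℂ) / (1 - z * (starRingEnd ℂ) (ζ:ℂ)) ∂σ with hD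
  obtain ⟨hDint, hDderiv⟩ := aux_deriv_int σ z hz1
  -- slit plane facts
  have h1z_re : 0 < (1 - z).re := by
    have := aux_re_pos hz1 (norm_one); simpa using this
  have h1z_ne : (1 : ℂ) - z ≠ 0 := by
    intro h; rw [h] at h1z_re; simp at h1z_re
  set B : ℂ := (1 - z) ^ (μ - 1) with hB
  have hB_ne : B ≠ 0 := by
    rw [hB, Ne, Complex.cpow_eq_zero_iff]; tauto
  have hA_split : (1 - z) ^ μ = B * (1 - z) := by
    have hm : (μ - 1) + 1 = μ := by ring
    calc (1 - z) ^ μ = (1 - z) ^ ((μ - 1) + (1:ℂ)) := by rw [hm]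
      _ = (1 - z) ^ (μ - 1) * (1 - z) ^ (1:ℂ) := Complex.cpow_add _ _ h1z_ne
      _ = B * (1 - z) := by rw [Complex.cpow_one, hB]
  set E : ℂ := Complex.exp (c * I z) with hE
  have hE_ne : E ≠ 0 := Complex.exp_ne_zero _
  -- derivative of f at z
  have h1 : HasDerivAt (fun x : ℂ => (1 - x) ^ μ) (μ * B * (-1)) z := by
    have := (((hasDerivAt_id z).const_sub 1).cpow_const (c := μ) (Or.inl h1z_re))
    simpa [hB] using this
  have h2 : HasDerivAt (fun x : ℂ => Complex.exp (c * I x)) (E * (c * D)) z :=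
    (hDderiv.const_mul c).cexp
  have hg : HasDerivAt (fun x : ℂ => (1 - x) ^ μ * Complex.exp (c * I x))
      ((μ * B * (-1)) * E + (1 - z) ^ μ * (E * (c * D))) z := h1.mul h2
  have hev : f =ᶠ[𝓝 z] fun x : ℂ => (1 - x) ^ μ * Complex.exp (c * I x) := by
    filter_upwards [isOpen_ball.mem_nhds hz] with x hx
    rw [hf x hx]
  have hfd : HasDerivAt f ((μ * B * (-1)) * E + (1 - z) ^ μ * (E * (c * D))) z :=
    hg.congr_of_eventuallyEq hev
  have hderiv : deriv f z = (μ * B * (-1)) * E + (1 - z) ^ μ * (E * (c * D)) := hfd.deriv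
  have hfz : f z = (1 - z) ^ μ * E := by rw [hf z hz]
  -- the integral J
  set J : ℂ := ∫ ζ : sphere (0:ℂ) 1, z * (starRingEnd ℂ) (ζ:ℂ) / (1 - z * (starRingEnd ℂ) (ζ:ℂ)) ∂σ with hJ
  have hzD : z * D = -J := by
    rw [hD, hJ, ← smul_eq_mul, ← integral_smul, ← integral_neg]
    congr 1; funext ζ
    simp only [smul_eq_mul]
    ring
  -- main algebraic identity
  have step1 : z * deriv f z / f z = -μ * z / (1 - z) + c * (z * D) := by
    rw [hderiv, hfz, hA_split]
    field_simp
  have key : (2 / μ) * (z * deriv f z / f z) + (1 + z) / (1 - z)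
      = 1 + 2 * (1 - (β : ℂ)) * J := by
    rw [step1, hzD, hc]
    field_simp
    ring
  rw [key]
  -- real part computation
  have hre : (1 + 2 * (1 - (β : ℂ)) * J).re = 1 + (2 * (1 - β)) * J.re := by
    have : (2 : ℂ) * (1 - (β : ℂ)) = ((2 * (1 - β) : ℝ) : ℂ) := by push_cast; ring
    rw [Complex.add_re, Complex.one_re, this, Complex.re_ofReal_mul]
  rw [hre]
  -- integrability and continuity of the integrand of J
  have hcont : Continuous (fun ζ : sphere (0:ℂ) 1 =>
      z * (starRingEnd ℂ) (ζ:ℂ) / (1 - z * (starRingEnd ℂ) (ζ:ℂ))) := by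
    apply Continuous.div
    · exact continuous_const.mul ((Complex.continuous_conj).comp continuous_subtype_val)
    · exact continuous_const.sub (continuous_const.mul
        ((Complex.continuous_conj).comp continuous_subtype_val))
    · intro ζ h
      have := aux_re_pos hz1 (by simpa [Complex.norm_conj] using aux_abs_coe ζ :
        ‖((starRingEnd ℂ) (ζ:ℂ))‖ = 1)
      rw [h] at this; simp at this
  have hint : Integrable (fun ζ : sphere (0:ℂ) 1 =>
      z * (starRingEnd ℂ) (ζ:ℂ) / (1 - z * (starRingEnd ℂ) (ζ:ℂ))) σ :=
    aux_integrable σ _ hcont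
  have hJre : J.re = ∫ ζ : sphere (0:ℂ) 1,
      (z * (starRingEnd ℂ) (ζ:ℂ) / (1 - z * (starRingEnd ℂ) (ζ:ℂ))).re ∂σ := by
    rw [hJ]
    simpa using (integral_re hint).symm
  -- lower bound
  set r : ℝ := ‖z‖ with hr
  have hbound : ∀ ζ : sphere (0:ℂ) 1,
      -1/2 + (1 - r^2)/8 ≤ (z * (starRingEnd ℂ) (ζ:ℂ) / (1 - z * (starRingEnd ℂ) (ζ:ℂ))).re := by
    intro ζ
    apply aux_herglotz _ hz1
    rw [norm_mul]
    rw [show ‖((starRingEnd ℂ) (ζ:ℂ))‖ = 1 from by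
      simpa [Complex.norm_conj] using aux_abs_coe ζ]
    simp [hr]
  have hJre_ge : -1/2 + (1 - r^2)/8 ≤ J.re := by
    rw [hJre]
    have := integral_mono (μ := σ) (integrable_const (-1/2 + (1 - r^2)/8))
      (aux_integrable_re σ _ (Complex.continuous_re.comp hcont)) hbound
    simpa using this
  have hr2 : r^2 < 1 := by
    have hr0 : 0 ≤ r := norm_nonneg z
    nlinarith
  nlinarith [mul_le_mul_of_nonneg_left hJre_ge (by linarith : (0:ℝ) ≤ 2 * (1 - β))]
end

section
/- Let μ₁ = r μ₂ with μ₁, μ₂ nonzero complex numbers satisfying |μᵢ−1| ≤ 1 and 0 < r ≤ 1, and let 0 ≤ β₂ ≤ r β₁ < 1. If a holomorphic nonvanishing function f on the open unit disk with f(0)=1 satisfies Re((2/μ₁)·(zf'(z)/f(z)) + (1+z)/(1−z)) > β₁ on Δ, then it satisfies Re((2/μ₂)·(zf'(z)/f(z)) + (1+z)/(1−z)) > β₂ on Δ. -/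
open Complex MeasureTheory Metric

theorem stmt4 (μ₁ μ₂ : ℂ) (r : ℝ) (hr0 : 0 < r) (hr1 : r ≤ 1)
    (hμ : μ₁ = (r : ℂ) * μ₂)
    (hμ₁0 : μ₁ ≠ 0) (hμ₂0 : μ₂ ≠ 0)
    (hμ₁ : ‖μ₁ - 1‖ ≤ 1) (hμ₂ : ‖μ₂ - 1‖ ≤ 1)
    (β₁ β₂ : ℝ) (hβ₁0 : 0 ≤ β₁) (hβ₁lt : β₁ < 1)
    (hβ₂0 : 0 ≤ β₂) (hβ₂lt : β₂ < 1) (hβ₂ : β₂ ≤ r * β₁)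
    (f : ℂ → ℂ) (hfd : DifferentiableOn ℂ f (ball (0 : ℂ) 1))
    (hf0 : f 0 = 1) (hfne : ∀ z ∈ ball (0 : ℂ) 1, f z ≠ 0)
    (hre : ∀ z ∈ ball (0 : ℂ) 1,
      (β₁ : ℝ) < ((2 / μ₁) * (z * deriv f z / f z) + (1 + z) / (1 - z)).re) :
    ∀ z ∈ ball (0 : ℂ) 1,
      (β₂ : ℝ) < ((2 / μ₂) * (z * deriv f z / f z) + (1 + z) / (1 - z)).re := by
  intro z hz
  have hzlt : ‖z‖ < 1 := by simpa [Complex.dist_eq] using mem_ball.mp hz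
  have hn : Complex.normSq z < 1 := by
    have := Complex.sq_norm z
    nlinarith [norm_nonneg z]
  have hz1 : (1 : ℂ) - z ≠ 0 := by
    intro h
    have : z = 1 := by linear_combination -h
    simp [this] at hzlt
  set w := z * deriv f z / f z with hw
  set q := (1 + z) / (1 - z) with hq
  have hqre : 0 < q.re := by
    rw [hq, Complex.div_re, ← add_div]
    apply div_pos
    · simp only [Complex.add_re, Complex.sub_re, Complex.one_re, Complex.add_im,
        Complex.sub_im, Complex.one_im]
      have : Complex.normSq z = z.re * z.re + z.im * z.im := Complex.normSq_apply z
      nlinarith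
    · exact Complex.normSq_pos.mpr hz1
  have hr0' : (r : ℂ) ≠ 0 := by exact_mod_cast hr0.ne'
  have hc : (2 / μ₂) * w + q = (r : ℂ) * ((2 / μ₁) * w + q) + (1 - (r : ℂ)) * q := by
    rw [hμ]
    field_simp
    ring
  have hre1 := hre z hz
  have : ((2 / μ₂) * w + q).re = r * ((2 / μ₁) * w + q).re + (1 - r) * q.re := by
    rw [hc]
    simp [Complex.add_re, Complex.re_ofReal_mul, Complex.sub_re, Complex.mul_re,
      Complex.ofReal_re, Complex.ofReal_im, Complex.one_re, Complex.one_im]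
  rw [this]
  nlinarith [mul_lt_mul_of_pos_left hre1 hr0, mul_nonneg (sub_nonneg.mpr hr1) hqre.le]
end

section
/- Let β ∈ [0,1) and let σ be a probability measure on the unit circle. Then for every z in the open unit disk there exists λ ∈ ℂ with |λ| ≤ 1 such that exp((1−β)∫_{|ζ|=1} log(1−zζ̄) dσ(ζ)) = (1+λz)^{1−β}. Conversely, for every z ∈ Δ and every λ with |λ| ≤ 1, there exists a probability measure σ on the unit circle with exp((1−β)∫ log(1−zζ̄) dσ(ζ)) = (1+λz)^{1−β}. -/
open Complex MeasureTheory Metric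

noncomputable section
namespace Stmt6Aux
open Set


/-- The convex region: principal log image of the closed disk `D(1,r)`. -/
def Sset (r : ℝ) : Set ℂ :=
  {v | |v.im| ≤ Real.pi / 2 ∧
    Real.exp v.re + (1 - r ^ 2) * Real.exp (-v.re) ≤ 2 * Real.cos v.im}

lemma Sset_closed (r : ℝ) : IsClosed (Sset r) := by
  have h1 : IsClosed {v : ℂ | |v.im| ≤ Real.pi / 2} :=
    isClosed_le (continuous_abs.comp Complex.continuous_im) continuous_const
  have h2 : IsClosed {v : ℂ |
      Real.exp v.re + (1 - r ^ 2) * Real.exp (-v.re) ≤ 2 * Real.cos v.im} := by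
    apply isClosed_le
    · exact (Real.continuous_exp.comp Complex.continuous_re).add
        (continuous_const.mul (Real.continuous_exp.comp Complex.continuous_re.neg))
    · exact continuous_const.mul (Real.continuous_cos.comp Complex.continuous_im)
  exact h1.inter h2

lemma Sset_convex {r : ℝ} (hr0 : 0 ≤ r) (hr1 : r ≤ 1) : Convex ℝ (Sset r) := by
  have h1r : 0 ≤ 1 - r ^ 2 := by nlinarith
  intro v hv w hw a b ha hb hab
  obtain ⟨hv1, hv2⟩ := hv
  obtain ⟨hw1, hw2⟩ := hw
  have hre : (a • v + b • w).re = a * v.re + b * w.re := by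
    simp [Complex.add_re, Complex.smul_re]
  have him : (a • v + b • w).im = a * v.im + b * w.im := by
    simp [Complex.add_im, Complex.smul_im]
  constructor
  · rw [him]
    calc |a * v.im + b * w.im| ≤ |a * v.im| + |b * w.im| := abs_add_le _ _
      _ = a * |v.im| + b * |w.im| := by
          rw [abs_mul, abs_mul, _root_.abs_of_nonneg ha, _root_.abs_of_nonneg hb]
      _ ≤ a * (Real.pi / 2) + b * (Real.pi / 2) := by
          gcongr
      _ = Real.pi / 2 := by rw [← add_mul, hab, one_mul]
  · rw [hre, him]
    have e1 : Real.exp (a * v.re + b * w.re) ≤ a * Real.exp v.re + b * Real.exp w.re := by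
      have := convexOn_exp.2 (Set.mem_univ v.re) (Set.mem_univ w.re) ha hb hab
      simpa [smul_eq_mul] using this
    have e2 : Real.exp (-(a * v.re + b * w.re))
        ≤ a * Real.exp (-v.re) + b * Real.exp (-w.re) := by
      have := convexOn_exp.2 (Set.mem_univ (-v.re)) (Set.mem_univ (-w.re)) ha hb hab
      rw [show -(a * v.re + b * w.re) = a * (-v.re) + b * (-w.re) by ring]
      simpa [smul_eq_mul] using this
    have e3 : a * Real.cos v.im + b * Real.cos w.im ≤ Real.cos (a * v.im + b * w.im) := by
      have hmv : v.im ∈ Set.Icc (-(Real.pi / 2)) (Real.pi / 2) := by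
        rw [Set.mem_Icc]; constructor <;> [linarith [abs_le.mp hv1]; exact (abs_le.mp hv1).2]
      have hmw : w.im ∈ Set.Icc (-(Real.pi / 2)) (Real.pi / 2) := by
        rw [Set.mem_Icc]; constructor <;> [linarith [abs_le.mp hw1]; exact (abs_le.mp hw1).2]
      have := strictConcaveOn_cos_Icc.concaveOn.2 hmv hmw ha hb hab
      simpa [smul_eq_mul] using this
    nlinarith [mul_le_mul_of_nonneg_left hv2 ha, mul_le_mul_of_nonneg_left hw2 hb,
      mul_le_mul_of_nonneg_left e2 h1r]

lemma sq_iff {x y : ℝ} (hx : 0 ≤ x) (hy : 0 ≤ y) : x ≤ y ↔ x ^ 2 ≤ y ^ 2 :=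
  ⟨fun h => by nlinarith, fun h => by nlinarith⟩

lemma mem_Sset_iff {r : ℝ} (hr : 0 ≤ r) (v : ℂ) :
    v ∈ Sset r ↔ |v.im| ≤ Real.pi / 2 ∧ ‖Complex.exp v - 1‖ ≤ r := by
  have hE : 0 < Real.exp v.re := Real.exp_pos _
  have hEinv : Real.exp v.re * Real.exp (-v.re) = 1 := by
    rw [← Real.exp_add]; simp
  have hns : ‖Complex.exp v - 1‖ ^ 2
      = Real.exp v.re ^ 2 - 2 * Real.exp v.re * Real.cos v.im + 1 := by
    rw [Complex.sq_norm, Complex.normSq_sub]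
    simp [Complex.normSq_one, Complex.normSq_apply, Complex.exp_re, Complex.exp_im]
    nlinarith [Real.sin_sq_add_cos_sq v.im]
  have habs : ‖Complex.exp v - 1‖ ≤ r
      ↔ Real.exp v.re ^ 2 - 2 * Real.exp v.re * Real.cos v.im + 1 ≤ r ^ 2 := by
    rw [sq_iff (norm_nonneg _) hr, hns]
  constructor
  · rintro ⟨h1, h2⟩
    refine ⟨h1, habs.mpr ?_⟩
    nlinarith [mul_le_mul_of_nonneg_left h2 hE.le]
  · rintro ⟨h1, h2⟩
    refine ⟨h1, ?_⟩
    have h2' := habs.mp h2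
    nlinarith [mul_le_mul_of_nonneg_left h2' (inv_nonneg.mpr hE.le),
      mul_inv_cancel₀ hE.ne']



lemma sphere_abs {ζ : Metric.sphere (0:ℂ) 1} : ‖(ζ : ℂ)‖ = 1 := by
  have := ζ.2
  rw [mem_sphere_zero_iff_norm] at this
  simpa using this

lemma re_pos {z : ℂ} (hz : ‖z‖ < 1) (c : ℂ) (hc : ‖c‖ ≤ 1) :
    0 < (1 - z * (starRingEnd ℂ) c).re := by
  have h1 : ‖z * (starRingEnd ℂ) c‖ < 1 := by
    rw [norm_mul, Complex.norm_conj]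
    calc ‖z‖ * ‖c‖ ≤ ‖z‖ * 1 := by
          gcongr
      _ < 1 := by rwa [mul_one]
  have h2 : (z * (starRingEnd ℂ) c).re < 1 :=
    lt_of_le_of_lt (Complex.re_le_norm _) h1
  simp only [Complex.sub_re, Complex.one_re, Complex.mul_re]
  simp only [Complex.mul_re] at h2
  linarith

lemma myCont (z : ℂ) (hz : ‖z‖ < 1) :
    Continuous (fun ζ : Metric.sphere (0:ℂ) 1 =>
      Complex.log (1 - z * (starRingEnd ℂ) (ζ : ℂ))) := by
  have h1 : Continuous (fun ζ : Metric.sphere (0:ℂ) 1 => 1 - z * (starRingEnd ℂ) (ζ : ℂ)) := by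
    continuity
  rw [continuous_iff_continuousAt]
  intro ζ
  exact h1.continuousAt.clog (Or.inl (re_pos hz _ sphere_abs.le))

lemma myInt (z : ℂ) (hz : ‖z‖ < 1) (σ : Measure (Metric.sphere (0:ℂ) 1))
    [IsFiniteMeasure σ] :
    Integrable (fun ζ : Metric.sphere (0:ℂ) 1 =>
      Complex.log (1 - z * (starRingEnd ℂ) (ζ : ℂ))) σ :=
  (myCont z hz).integrable_of_hasCompactSupport (HasCompactSupport.of_compactSpace _)


-- placeholders from previous parts
lemma part1 (c : ℂ) (σ : Measure (Metric.sphere (0:ℂ) 1)) (hσ : IsProbabilityMeasure σ)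
    (z : ℂ) (hz : ‖z‖ < 1) :
    ∃ l : ℂ, ‖l‖ ≤ 1 ∧
      Complex.exp (c * ∫ ζ : Metric.sphere (0:ℂ) 1,
          Complex.log (1 - z * (starRingEnd ℂ) (ζ : ℂ)) ∂σ)
        = (1 + l * z) ^ c := by
  haveI := hσ
  set L := ∫ ζ : Metric.sphere (0:ℂ) 1,
      Complex.log (1 - z * (starRingEnd ℂ) (ζ : ℂ)) ∂σ with hLdef
  have hmem : L ∈ Sset (‖z‖) := by
    apply (Sset_convex (norm_nonneg z) hz.le).integral_mem (Sset_closed _)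
      ?_ (myInt z hz σ)
    refine Filter.Eventually.of_forall fun ζ => ?_
    rw [mem_Sset_iff (norm_nonneg z)]
    have hw0 : (1 - z * (starRingEnd ℂ) (ζ : ℂ)) ≠ 0 := by
      intro h
      have h2 := re_pos hz (ζ : ℂ) sphere_abs.le
      rw [h] at h2; simp at h2
    refine ⟨?_, ?_⟩
    · rw [Complex.log_im]
      exact Complex.abs_arg_le_pi_div_two_iff.mpr (re_pos hz _ sphere_abs.le).le
    · rw [Complex.exp_log hw0]
      have h3 : (1 - z * (starRingEnd ℂ) (ζ : ℂ)) - 1 = -(z * (starRingEnd ℂ) (ζ : ℂ)) := by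
        ring
      rw [h3]
      simp [map_mul, Complex.norm_conj, sphere_abs]
  obtain ⟨him, habs⟩ := (mem_Sset_iff (norm_nonneg z) L).mp hmem
  have hpi := Real.pi_pos
  obtain ⟨him1', him2'⟩ := abs_le.mp him
  have hlogexp : Complex.log (Complex.exp L) = L :=
    Complex.log_exp (by linarith) (by linarith)
  by_cases hz0 : z = 0
  · refine ⟨0, by norm_num, ?_⟩
    have h1 : Complex.exp L = 1 := by
      have h2 : ‖Complex.exp L - 1‖ ≤ 0 := by rwa [hz0, norm_zero] at habs
      have h3 : Complex.exp L - 1 = 0 :=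
        norm_eq_zero.mp (le_antisymm h2 (norm_nonneg _))
      linear_combination h3
    have hL0 : L = 0 := by rw [← hlogexp, h1, Complex.log_one]
    rw [hz0, hL0, mul_zero, Complex.exp_zero, mul_zero, add_zero, Complex.one_cpow]
  · refine ⟨(Complex.exp L - 1) / z, ?_, ?_⟩
    · rw [norm_div]
      exact (div_le_one (norm_pos_iff.mpr hz0)).mpr habs
    · have h1 : 1 + (Complex.exp L - 1) / z * z = Complex.exp L := by field_simp; ring
      rw [h1, Complex.cpow_def_of_ne_zero (Complex.exp_ne_zero L), hlogexp, mul_comm]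


lemma exists_s (w : ℂ) (r : ℝ) (hr0 : 0 < r) (hr1 : r < 1) (hw : w ≠ 0)
    (him : |w.im| < Real.pi / 2) (habs : ‖Complex.exp w - 1‖ ≤ r) :
    ∃ s : ℝ, 0 < s ∧ s ≤ 1 ∧ ‖Complex.exp (s⁻¹ • w) - 1‖ = r ∧
      |(s⁻¹ • w).im| ≤ Real.pi / 2 := by
  have hpi := Real.pi_pos
  obtain ⟨s₀, hs₀0, hs₀1, hgs₀⟩ :
      ∃ s₀ : ℝ, 0 < s₀ ∧ s₀ ≤ 1 ∧ r ≤ ‖Complex.exp (s₀⁻¹ • w) - 1‖ := by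
    rcases eq_or_ne w.im 0 with him0 | him0
    · have hwre : w.re ≠ 0 := fun h => hw (Complex.ext h him0)
      have key : ∀ s : ℝ, Complex.exp (s⁻¹ • w) = ((Real.exp (s⁻¹ * w.re) : ℝ) : ℂ) := by
        intro s
        have h4 : s⁻¹ • w = ((s⁻¹ * w.re : ℝ) : ℂ) := by
          apply Complex.ext <;> simp [Complex.smul_re, Complex.smul_im, him0]
        rw [h4, Complex.ofReal_exp]
      rcases lt_or_gt_of_ne hwre with hre | hre
      · have hlog : Real.log (1 - r) < 0 := Real.log_neg (by linarith) (by linarith)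
        have hqpos : 0 < w.re / Real.log (1 - r) := div_pos_of_neg_of_neg hre hlog
        set s := min 1 (w.re / Real.log (1 - r)) with hs
        have hspos : 0 < s := lt_min one_pos hqpos
        refine ⟨s, hspos, min_le_left _ _, ?_⟩
        have hsle : s ≤ w.re / Real.log (1 - r) := min_le_right _ _
        have h1 : w.re ≤ s * Real.log (1 - r) := by
          have h2 := mul_le_mul_of_nonpos_right hsle hlog.le
          rw [div_mul_cancel₀ _ hlog.ne] at h2
          linarith
        have ht : s⁻¹ * w.re ≤ Real.log (1 - r) := (inv_mul_le_iff₀ hspos).mpr h1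
        have hexp : Real.exp (s⁻¹ * w.re) ≤ 1 - r := by
          calc Real.exp (s⁻¹ * w.re) ≤ Real.exp (Real.log (1 - r)) := Real.exp_le_exp.mpr ht
            _ = 1 - r := Real.exp_log (by linarith)
        rw [key s, ← Complex.ofReal_one, ← Complex.ofReal_sub, Complex.norm_real, Real.norm_eq_abs]
        rw [_root_.abs_of_nonpos (by linarith)]
        linarith
      · have hlog : 0 < Real.log 2 := Real.log_pos (by norm_num)
        have hqpos : 0 < w.re / Real.log 2 := div_pos hre hlog
        set s := min 1 (w.re / Real.log 2) with hs
        have hspos : 0 < s := lt_min one_pos hqpos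
        refine ⟨s, hspos, min_le_left _ _, ?_⟩
        have hsle : s ≤ w.re / Real.log 2 := min_le_right _ _
        have h1 : s * Real.log 2 ≤ w.re := by
          have h2 := mul_le_mul_of_nonneg_right hsle hlog.le
          rwa [div_mul_cancel₀ _ hlog.ne'] at h2
        have ht : Real.log 2 ≤ s⁻¹ * w.re := by
          rw [le_inv_mul_iff₀ hspos]
          linarith [mul_comm s (Real.log 2)]
        have hexp : (2:ℝ) ≤ Real.exp (s⁻¹ * w.re) := by
          calc (2:ℝ) = Real.exp (Real.log 2) := (Real.exp_log (by norm_num)).symm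
            _ ≤ _ := Real.exp_le_exp.mpr ht
        rw [key s, ← Complex.ofReal_one, ← Complex.ofReal_sub, Complex.norm_real, Real.norm_eq_abs]
        rw [_root_.abs_of_nonneg (by linarith)]
        linarith
    · refine ⟨|w.im| / Real.pi, by positivity, ?_, ?_⟩
      · rw [div_le_one hpi]; linarith
      · set s := |w.im| / Real.pi with hs
        have hwim : 0 < |w.im| := abs_pos.mpr him0
        have hspos : 0 < s := by positivity
        have him_s : (s⁻¹ • w).im = s⁻¹ * w.im := Complex.smul_im _ _
        have habs1 : |s⁻¹ * w.im| = Real.pi := by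
          rw [abs_mul, abs_inv, abs_of_pos hspos, hs]
          field_simp
        have hcos : Real.cos ((s⁻¹ • w).im) = -1 := by
          rw [him_s, ← Real.cos_abs, habs1, Real.cos_pi]
        have hre : (Complex.exp (s⁻¹ • w)).re = -Real.exp ((s⁻¹ • w).re) := by
          rw [Complex.exp_re, hcos]; ring
        calc r ≤ 1 := hr1.le
          _ ≤ |(Complex.exp (s⁻¹ • w) - 1).re| := by
              rw [Complex.sub_re, Complex.one_re, hre]
              rw [abs_of_nonpos (by linarith [Real.exp_pos ((s⁻¹ • w).re)])]
              linarith [Real.exp_pos ((s⁻¹ • w).re)]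
          _ ≤ _ := Complex.abs_re_le_norm _
  set g : ℝ → ℝ := fun s => ‖Complex.exp ((max s s₀)⁻¹ • w) - 1‖ with hg
  have hgc : Continuous g := by
    have h1 : Continuous fun s : ℝ => (max s s₀)⁻¹ := by
      apply Continuous.inv₀ (continuous_id.max continuous_const)
      intro x
      exact (lt_of_lt_of_le hs₀0 (le_max_right x s₀)).ne'
    exact continuous_norm.comp (((h1.smul continuous_const).cexp).sub continuous_const)
  have hB : ∀ s : ℝ, s₀ ≤ s → g s = ‖Complex.exp (s⁻¹ • w) - 1‖ := by
    intro s hss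
    simp only [hg, max_eq_left hss]
  set B : Set ℝ := Icc s₀ 1 ∩ g ⁻¹' (Ici r) with hBdef
  have hBne : s₀ ∈ B := by
    refine ⟨⟨le_refl _, hs₀1⟩, ?_⟩
    rw [mem_preimage, mem_Ici, hB s₀ le_rfl]
    exact hgs₀
  have hBcomp : IsCompact B := isCompact_Icc.inter_right (isClosed_Ici.preimage hgc)
  set sm := sSup B with hsm
  have hsmB : sm ∈ B := hBcomp.sSup_mem ⟨s₀, hBne⟩
  obtain ⟨⟨hsm0, hsm1⟩, hsmg⟩ := hsmB
  rw [mem_preimage, mem_Ici] at hsmg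
  have hg1 : g 1 ≤ r := by
    rw [hB 1 hs₀1]
    simpa using habs
  obtain ⟨s', hs'mem, hgs'⟩ :=
    intermediate_value_Icc' hsm1 hgc.continuousOn (⟨hg1, hsmg⟩ : r ∈ Icc (g 1) (g sm))
  obtain ⟨hs'l, hs'r⟩ := hs'mem
  have hs'B : s' ∈ B := by
    refine ⟨⟨le_trans hsm0 hs'l, hs'r⟩, ?_⟩
    rw [mem_preimage, mem_Ici, hgs']
  have hseq : s' = sm := le_antisymm (le_csSup hBcomp.bddAbove hs'B) hs'l
  have hgsm : g sm = r := by rw [← hseq]; exact hgs'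
  have hsmpos : 0 < sm := lt_of_lt_of_le hs₀0 hsm0
  have him_sm : |w.im| ≤ Real.pi / 2 * sm := by
    by_contra hcon
    push_neg at hcon
    have him0 : w.im ≠ 0 := by
      intro h
      rw [h, abs_zero] at hcon
      nlinarith
    have hwim : 0 < |w.im| := abs_pos.mpr him0
    set s₃ := |w.im| / (Real.pi / 2) with hs₃
    have hs₃sm : sm < s₃ := by
      rw [lt_div_iff₀ (by linarith)]
      linarith [mul_comm sm (Real.pi / 2)]
    have hs₃1 : s₃ ≤ 1 := by
      rw [div_le_one (by linarith)]
      linarith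
    have hs₃0 : s₀ ≤ s₃ := le_trans hsm0 hs₃sm.le
    have hs₃pos : 0 < s₃ := by positivity
    have him_s : (s₃⁻¹ • w).im = s₃⁻¹ * w.im := Complex.smul_im _ _
    have habs3 : |s₃⁻¹ * w.im| = Real.pi / 2 := by
      rw [abs_mul, abs_inv, abs_of_pos hs₃pos, hs₃]
      field_simp
    have hcos3 : Real.cos ((s₃⁻¹ • w).im) = 0 := by
      rw [him_s, ← Real.cos_abs, habs3, Real.cos_pi_div_two]
    have hre3 : (Complex.exp (s₃⁻¹ • w)).re = 0 := by
      rw [Complex.exp_re, hcos3, mul_zero]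
    have hg3 : r ≤ g s₃ := by
      rw [hB s₃ hs₃0]
      calc r ≤ 1 := hr1.le
        _ = |(Complex.exp (s₃⁻¹ • w) - 1).re| := by
            rw [Complex.sub_re, Complex.one_re, hre3]; norm_num
        _ ≤ _ := Complex.abs_re_le_norm _
    have h5 : s₃ ∈ B := ⟨⟨hs₃0, hs₃1⟩, by rw [mem_preimage, mem_Ici]; exact hg3⟩
    have := le_csSup hBcomp.bddAbove h5
    linarith
  refine ⟨sm, hsmpos, hsm1, ?_, ?_⟩
  · rw [← hB sm hsm0]; exact hgsm
  · rw [Complex.smul_im, smul_eq_mul, abs_mul, abs_inv, abs_of_pos hsmpos, inv_mul_le_iff₀ hsmpos]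
    linarith [mul_comm sm (Real.pi / 2)]



lemma isProb_comb (c₁ c₂ c₃ : ℝ) (h₁ : 0 ≤ c₁) (h₂ : 0 ≤ c₂) (h₃ : 0 ≤ c₃)
    (hsum : c₁ + c₂ + c₃ = 1) (x₁ x₂ x₃ : Metric.sphere (0:ℂ) 1) :
    IsProbabilityMeasure (ENNReal.ofReal c₁ • Measure.dirac x₁
      + ENNReal.ofReal c₂ • Measure.dirac x₂ + ENNReal.ofReal c₃ • Measure.dirac x₃) := by
  constructor
  simp only [Measure.add_apply, Measure.smul_apply, measure_univ, smul_eq_mul, mul_one]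
  rw [← ENNReal.ofReal_add h₁ h₂, ← ENNReal.ofReal_add (add_nonneg h₁ h₂) h₃, hsum,
    ENNReal.ofReal_one]

lemma integral_comb (z : ℂ) (hz : ‖z‖ < 1) (c₁ c₂ c₃ : ℝ)
    (h₁ : 0 ≤ c₁) (h₂ : 0 ≤ c₂) (h₃ : 0 ≤ c₃) (x₁ x₂ x₃ : Metric.sphere (0:ℂ) 1) :
    (∫ ζ : Metric.sphere (0:ℂ) 1, Complex.log (1 - z * (starRingEnd ℂ) (ζ : ℂ))
      ∂(ENNReal.ofReal c₁ • Measure.dirac x₁ + ENNReal.ofReal c₂ • Measure.dirac x₂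
        + ENNReal.ofReal c₃ • Measure.dirac x₃))
    = (c₁:ℂ) * Complex.log (1 - z * (starRingEnd ℂ) (x₁ : ℂ))
      + (c₂:ℂ) * Complex.log (1 - z * (starRingEnd ℂ) (x₂ : ℂ))
      + (c₃:ℂ) * Complex.log (1 - z * (starRingEnd ℂ) (x₃ : ℂ)) := by
  have i1 : Integrable (fun ζ : Metric.sphere (0:ℂ) 1 =>
      Complex.log (1 - z * (starRingEnd ℂ) (ζ : ℂ))) (ENNReal.ofReal c₁ • Measure.dirac x₁) :=
    (myInt z hz _).smul_measure ENNReal.ofReal_ne_top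
  have i2 : Integrable (fun ζ : Metric.sphere (0:ℂ) 1 =>
      Complex.log (1 - z * (starRingEnd ℂ) (ζ : ℂ))) (ENNReal.ofReal c₂ • Measure.dirac x₂) :=
    (myInt z hz _).smul_measure ENNReal.ofReal_ne_top
  have i3 : Integrable (fun ζ : Metric.sphere (0:ℂ) 1 =>
      Complex.log (1 - z * (starRingEnd ℂ) (ζ : ℂ))) (ENNReal.ofReal c₃ • Measure.dirac x₃) :=
    (myInt z hz _).smul_measure ENNReal.ofReal_ne_top
  rw [integral_add_measure (i1.add_measure i2) i3, integral_add_measure i1 i2,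
    integral_smul_measure, integral_smul_measure, integral_smul_measure,
    integral_dirac, integral_dirac, integral_dirac,
    ENNReal.toReal_ofReal h₁, ENNReal.toReal_ofReal h₂, ENNReal.toReal_ofReal h₃]
  simp [Complex.real_smul]

lemma part2 (c : ℂ) (z : ℂ) (hz : ‖z‖ < 1) (l : ℂ) (hl : ‖l‖ ≤ 1) :
    ∃ σ : Measure (Metric.sphere (0:ℂ) 1), IsProbabilityMeasure σ ∧
      Complex.exp (c * ∫ ζ : Metric.sphere (0:ℂ) 1,
          Complex.log (1 - z * (starRingEnd ℂ) (ζ : ℂ)) ∂σ)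
        = (1 + l * z) ^ c := by
  have hpi := Real.pi_pos
  by_cases hz0 : z = 0
  · subst hz0
    refine ⟨Measure.dirac ⟨1, by rw [mem_sphere_zero_iff_norm]; simp⟩, inferInstance, ?_⟩
    rw [integral_dirac]
    simp [Complex.one_cpow]
  · set r := ‖z‖ with hr
    have hr0 : 0 < r := norm_pos_iff.mpr hz0
    have hr1 : r < 1 := hz
    have hlz : ‖l * z‖ ≤ r := by
      rw [norm_mul]
      nlinarith [norm_nonneg z, norm_nonneg l]
    have hrepos : 0 < (1 + l * z).re := by
      have h5 := abs_le.mp ((Complex.abs_re_le_norm (l * z)).trans hlz)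
      simp only [Complex.add_re, Complex.one_re]
      linarith
    have h1lz : (1 + l * z) ≠ 0 := by
      intro h
      rw [h] at hrepos
      simp at hrepos
    set w := Complex.log (1 + l * z) with hw
    have hexpw : Complex.exp w = 1 + l * z := Complex.exp_log h1lz
    have hwim : |w.im| < Real.pi / 2 := by
      rw [hw, Complex.log_im]
      exact Complex.abs_arg_lt_pi_div_two_iff.mpr (Or.inl hrepos)
    -- produce s ∈ [0,1] and a sphere point whose log-value times s equals w
    obtain ⟨s, hs0, hs1, ζu, hfu⟩ : ∃ s : ℝ, 0 ≤ s ∧ s ≤ 1 ∧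
        ∃ ζu : Metric.sphere (0:ℂ) 1,
          (s : ℂ) * Complex.log (1 - z * (starRingEnd ℂ) (ζu : ℂ)) = w := by
      by_cases hw0 : w = 0
      · exact ⟨0, le_refl _, zero_le_one,
          ⟨1, by rw [mem_sphere_zero_iff_norm]; simp⟩, by rw [hw0]; simp⟩
      · have habs : ‖Complex.exp w - 1‖ ≤ r := by
          rw [hexpw]
          simpa using hlz
        obtain ⟨s, hs0, hs1, heq, him2⟩ := exists_s w r hr0 hr1 hw0 hwim habs
        set v := s⁻¹ • w with hv
        set q := (Complex.exp v - 1) / z with hq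
        have hqabs : ‖q‖ = 1 := by
          rw [hq, norm_div, heq, ← hr, div_self hr0.ne']
        refine ⟨s, hs0.le, hs1, ⟨-(starRingEnd ℂ) q, ?_⟩, ?_⟩
        · rw [mem_sphere_zero_iff_norm]
          simp [Complex.norm_conj, hqabs]
        · have hconj : (starRingEnd ℂ) (-(starRingEnd ℂ) q) = -q := by simp
          have hzq : 1 - z * (-q) = Complex.exp v := by
            rw [hq]
            field_simp
            ring
          have hfu2 : Complex.log (1 - z * (-q)) = v := by
            rw [hzq]
            apply Complex.log_exp
            · linarith [abs_le.mp him2]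
            · linarith [abs_le.mp him2]
          show (s : ℂ) * Complex.log (1 - z * (starRingEnd ℂ) ((-(starRingEnd ℂ) q : ℂ))) = w
          have hsne : (s : ℂ) ≠ 0 := Complex.ofReal_ne_zero.mpr hs0.ne'
          rw [hconj, hfu2, hv, Complex.real_smul]
          push_cast
          field_simp
    -- the two-point zero-mass measure data
    set A := Real.log (1 + r) with hA
    set Bq := Real.log (1 - r) with hBq
    have hApos : 0 < A := Real.log_pos (by linarith)
    have hBneg : Bq < 0 := Real.log_neg (by linarith) (by linarith)
    have hAB : 0 < A - Bq := by linarith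
    set t := -Bq / (A - Bq) with ht
    have ht0 : 0 ≤ t := div_nonneg (by linarith) hAB.le
    have ht1 : t ≤ 1 := by
      rw [ht, div_le_one hAB]
      linarith
    have htzero : t * A + (1 - t) * Bq = 0 := by
      rw [ht]
      field_simp
      ring
    have hmemp : -(z / (r : ℂ)) ∈ Metric.sphere (0:ℂ) 1 := by
      rw [mem_sphere_zero_iff_norm]
      simp [map_div₀, Complex.norm_real, abs_of_pos hr0, ← hr,
        div_self hr0.ne']
    have hmemq : z / (r : ℂ) ∈ Metric.sphere (0:ℂ) 1 := by
      rw [mem_sphere_zero_iff_norm]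
      simp [map_div₀, Complex.norm_real, abs_of_pos hr0, ← hr,
        div_self hr0.ne']
    set ζp : Metric.sphere (0:ℂ) 1 := ⟨-(z / (r : ℂ)), hmemp⟩ with hζp
    set ζq : Metric.sphere (0:ℂ) 1 := ⟨z / (r : ℂ), hmemq⟩ with hζq
    have hzconj : z * (starRingEnd ℂ) z = ((r ^ 2 : ℝ) : ℂ) := by
      rw [Complex.mul_conj]
      norm_cast
      rw [Complex.normSq_eq_norm_sq, ← hr]
    have hfp : Complex.log (1 - z * (starRingEnd ℂ) (ζp : ℂ)) = ((A : ℝ) : ℂ) := by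
      have h6 : 1 - z * (starRingEnd ℂ) ((-(z / (r : ℂ)) : ℂ)) = ((1 + r : ℝ) : ℂ) := by
        rw [map_neg, map_div₀, mul_neg, sub_neg_eq_add, mul_div_assoc']
        rw [hzconj]
        have : (starRingEnd ℂ) ((r : ℝ) : ℂ) = ((r : ℝ) : ℂ) := Complex.conj_ofReal r
        rw [this]
        have hrc : ((r : ℝ) : ℂ) ≠ 0 := Complex.ofReal_ne_zero.mpr hr0.ne'
        push_cast
        field_simp
      rw [hζp]
      show Complex.log (1 - z * (starRingEnd ℂ) ((-(z / (r : ℂ)) : ℂ))) = _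
      rw [h6, hA, Complex.ofReal_log (by linarith)]
    have hfq : Complex.log (1 - z * (starRingEnd ℂ) (ζq : ℂ)) = ((Bq : ℝ) : ℂ) := by
      have h6 : 1 - z * (starRingEnd ℂ) ((z / (r : ℂ) : ℂ)) = ((1 - r : ℝ) : ℂ) := by
        rw [map_div₀, mul_div_assoc', hzconj]
        have : (starRingEnd ℂ) ((r : ℝ) : ℂ) = ((r : ℝ) : ℂ) := Complex.conj_ofReal r
        rw [this]
        have hrc : ((r : ℝ) : ℂ) ≠ 0 := Complex.ofReal_ne_zero.mpr hr0.ne'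
        push_cast
        field_simp
      rw [hζq]
      show Complex.log (1 - z * (starRingEnd ℂ) ((z / (r : ℂ) : ℂ))) = _
      rw [h6, hBq, Complex.ofReal_log (by linarith)]
    refine ⟨ENNReal.ofReal s • Measure.dirac ζu + ENNReal.ofReal ((1 - s) * t) • Measure.dirac ζp
      + ENNReal.ofReal ((1 - s) * (1 - t)) • Measure.dirac ζq, ?_, ?_⟩
    · exact isProb_comb s ((1 - s) * t) ((1 - s) * (1 - t)) hs0
        (mul_nonneg (by linarith) ht0) (mul_nonneg (by linarith) (by linarith))
        (by ring) _ _ _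
    · rw [integral_comb z hz s ((1 - s) * t) ((1 - s) * (1 - t)) hs0
        (mul_nonneg (by linarith) ht0) (mul_nonneg (by linarith) (by linarith)) ζu ζp ζq]
      rw [hfu, hfp, hfq]
      have h7 : w + (((1 - s) * t : ℝ) : ℂ) * ((A : ℝ) : ℂ)
          + (((1 - s) * (1 - t) : ℝ) : ℂ) * ((Bq : ℝ) : ℂ) = w := by
        have h8 : ((1 - s) * t : ℝ) * A + ((1 - s) * (1 - t) : ℝ) * Bq = 0 := by
          nlinarith [htzero]
        have h9 : (((1 - s) * t * A + (1 - s) * (1 - t) * Bq : ℝ) : ℂ) = 0 := by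
          rw [h8]; norm_num
        push_cast at h9 ⊢
        linear_combination h9
      rw [h7, hw, Complex.cpow_def_of_ne_zero h1lz, mul_comm]

end Stmt6Aux
end

theorem stmt6 (β : ℝ) (hβ : 0 ≤ β) (hβ1 : β < 1) :
    (∀ (σ : Measure (sphere (0:ℂ) 1)), IsProbabilityMeasure σ →
      ∀ z ∈ ball (0 : ℂ) 1, ∃ l : ℂ, ‖l‖ ≤ 1 ∧
        Complex.exp ((1 - (β : ℂ)) *
            ∫ ζ : sphere (0:ℂ) 1, Complex.log (1 - z * (starRingEnd ℂ) (ζ : ℂ)) ∂σ)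
          = (1 + l * z) ^ (1 - (β : ℂ))) ∧
    (∀ z ∈ ball (0 : ℂ) 1, ∀ l : ℂ, ‖l‖ ≤ 1 →
      ∃ σ : Measure (sphere (0:ℂ) 1), IsProbabilityMeasure σ ∧
        Complex.exp ((1 - (β : ℂ)) *
            ∫ ζ : sphere (0:ℂ) 1, Complex.log (1 - z * (starRingEnd ℂ) (ζ : ℂ)) ∂σ)
          = (1 + l * z) ^ (1 - (β : ℂ))) := by
  constructor
  · intro σ hσ z hzb
    have hz : ‖z‖ < 1 := by rwa [mem_ball_zero_iff] at hzb
    exact Stmt6Aux.part1 (1 - (β : ℂ)) σ hσ z hz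
  · intro z hzb l hl
    have hz : ‖z‖ < 1 := by rwa [mem_ball_zero_iff] at hzb
    exact Stmt6Aux.part2 (1 - (β : ℂ)) z hz l hl
end

section
/- Let β ∈ [0,1), μ ∈ (0,2] real, σ a probability measure on the unit circle, and f(z) = (1−z)^μ exp(−μ(1−β)∫ log(1−zζ̄) dσ(ζ)). Then for all z ∈ Δ: |f'(z)| ≤ 2μ|1−z|^μ / ((1−|z|²)(1−|z|)^{μ(1−β)}). -/
open Complex MeasureTheory Metric

private lemma absSphere (ζ : sphere (0:ℂ) 1) : ‖(ζ:ℂ)‖ = 1 := by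
  have h := mem_sphere_zero_iff_norm.mp ζ.2
  simpa using h

private lemma slit_aux {w : ℂ} (h : ‖w‖ < 1) : 1 - w ∈ Complex.slitPlane := by
  have := Complex.mem_slitPlane_of_norm_lt_one (z := -w) (by simpa using h)
  simpa [sub_eq_add_neg] using this

private lemma ne_aux {w : ℂ} (h : ‖w‖ < 1) : 1 - w ≠ 0 :=
  Complex.slitPlane_ne_zero (slit_aux h)

private lemma abs_one_sub_ge {w : ℂ} : 1 - ‖w‖ ≤ ‖1 - w‖ := by
  have := norm_sub_norm_le (1:ℂ) w
  simpa using this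

/-- The key circle identity: for `|a| = 1` and `|z| < 1`,
`|conj a / (1 - z conj a) - conj z / (1 - z conj z)| = 1/(1-|z|²)`. -/
private lemma key_id {z a : ℂ} (hz : ‖z‖ < 1) (ha : ‖a‖ = 1) :
    ‖(starRingEnd ℂ) a / (1 - z * (starRingEnd ℂ) a)
      - (starRingEnd ℂ) z / (1 - z * (starRingEnd ℂ) z)‖
      = 1 / (1 - ‖z‖ ^ 2) := by
  have ha1 : ‖(starRingEnd ℂ) a‖ = 1 := by simpa using ha
  have hd1 : (1 - z * (starRingEnd ℂ) a) ≠ 0 := by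
    apply ne_aux; rw [norm_mul, ha1, mul_one]; exact hz
  have hd2 : (1 - z * (starRingEnd ℂ) z) ≠ 0 := by
    apply ne_aux; rw [norm_mul, Complex.norm_conj]; nlinarith [norm_nonneg z]
  have hid : (starRingEnd ℂ) a / (1 - z * (starRingEnd ℂ) a)
      - (starRingEnd ℂ) z / (1 - z * (starRingEnd ℂ) z)
      = ((starRingEnd ℂ) a - (starRingEnd ℂ) z)
        / ((1 - z * (starRingEnd ℂ) a) * (1 - z * (starRingEnd ℂ) z)) := by
    rw [div_sub_div _ _ hd1 hd2]; congr 1; ring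
  have habs1 : ‖1 - z * (starRingEnd ℂ) a‖ = ‖a - z‖ := by
    have hkey : (starRingEnd ℂ) a * (a - z) = 1 - z * (starRingEnd ℂ) a := by
      have : (starRingEnd ℂ) a * a = 1 := by
        rw [mul_comm, Complex.mul_conj]
        norm_cast
        rw [← Complex.sq_norm, ha]; norm_num
      linear_combination this
    calc ‖1 - z * (starRingEnd ℂ) a‖
        = ‖(starRingEnd ℂ) a * (a - z)‖ := by rw [hkey]
      _ = ‖a - z‖ := by rw [norm_mul, ha1, one_mul]
  have habsconj : ‖(starRingEnd ℂ) a - (starRingEnd ℂ) z‖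
      = ‖a - z‖ := by
    rw [← map_sub, Complex.norm_conj]
  have habs2 : ‖1 - z * (starRingEnd ℂ) z‖ = 1 - ‖z‖ ^ 2 := by
    rw [Complex.mul_conj, ← Complex.sq_norm]
    rw [show (1 : ℂ) - (((‖z‖ ^ 2 : ℝ)) : ℂ) = (((1 - ‖z‖ ^ 2 : ℝ)) : ℂ) by
      push_cast; ring]
    rw [Complex.norm_real, Real.norm_eq_abs, abs_of_pos (by nlinarith [norm_nonneg z])]
  have haz : ‖a - z‖ ≠ 0 := by
    rw [← habs1]; exact (norm_ne_zero_iff.mpr hd1)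
  have hD : (1:ℝ) - ‖z‖ ^ 2 ≠ 0 := by nlinarith [norm_nonneg z]
  rw [hid, norm_div, norm_mul, habs1, habsconj, habs2]
  rw [div_mul_eq_div_div, div_self haz, one_div]

private lemma abs_d2 {z : ℂ} (hz : ‖z‖ < 1) :
    ‖1 - z * (starRingEnd ℂ) z‖ = 1 - ‖z‖ ^ 2 := by
  rw [Complex.mul_conj, ← Complex.sq_norm]
  rw [show (1 : ℂ) - (((‖z‖ ^ 2 : ℝ)) : ℂ) = (((1 - ‖z‖ ^ 2 : ℝ)) : ℂ) by
    push_cast; ring]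
  rw [Complex.norm_real, Real.norm_eq_abs, abs_of_pos (by nlinarith [norm_nonneg z])]

private lemma abs_mul_conj_sphere (x : ℂ) (ζ : sphere (0:ℂ) 1) :
    ‖x * (starRingEnd ℂ) (ζ:ℂ)‖ = ‖x‖ := by
  rw [norm_mul, Complex.norm_conj, absSphere, mul_one]

private lemma integrable_cont {E : Type*} [NormedAddCommGroup E]
    (σ : Measure (sphere (0:ℂ) 1)) [IsProbabilityMeasure σ]
    {g : sphere (0:ℂ) 1 → E} (hg : Continuous g) : Integrable g σ := by
  rw [← integrableOn_univ]
  exact ContinuousOn.integrableOn_compact isCompact_univ hg.continuousOn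

private lemma cont_denom (x : ℂ) :
    Continuous fun ζ : sphere (0:ℂ) 1 => 1 - x * (starRingEnd ℂ) (ζ:ℂ) :=
  continuous_const.sub (continuous_const.mul (Complex.continuous_conj.comp continuous_subtype_val))

private lemma cont_log {x : ℂ} (hx : ‖x‖ < 1) :
    Continuous fun ζ : sphere (0:ℂ) 1 => Complex.log (1 - x * (starRingEnd ℂ) (ζ:ℂ)) := by
  apply (cont_denom x).clog
  intro ζ
  apply slit_aux; rw [abs_mul_conj_sphere]; exact hx

private lemma cont_frac {x : ℂ} (hx : ‖x‖ < 1) :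
    Continuous fun ζ : sphere (0:ℂ) 1 =>
      (starRingEnd ℂ) (ζ:ℂ) / (1 - x * (starRingEnd ℂ) (ζ:ℂ)) := by
  apply Continuous.div (Complex.continuous_conj.comp continuous_subtype_val) (cont_denom x)
  intro ζ
  apply ne_aux; rw [abs_mul_conj_sphere]; exact hx

private lemma G_hasDeriv (σ : Measure (sphere (0:ℂ) 1)) [IsProbabilityMeasure σ]
    {z : ℂ} (hz : ‖z‖ < 1) :
    HasDerivAt (fun w => ∫ ζ : sphere (0:ℂ) 1,
        Complex.log (1 - w * (starRingEnd ℂ) (ζ:ℂ)) ∂σ)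
      (∫ ζ : sphere (0:ℂ) 1,
        -((starRingEnd ℂ) (ζ:ℂ)) / (1 - z * (starRingEnd ℂ) (ζ:ℂ)) ∂σ) z := by
  set ε : ℝ := (1 - ‖z‖) / 2 with hε
  have hε0 : 0 < ε := by have := norm_nonneg z; simp only [hε]; linarith
  have hxlt : ∀ x ∈ ball z ε, ‖x‖ < 1 := by
    intro x hx
    have h1 : dist x z < ε := mem_ball.mp hx
    have h2 : ‖x - z‖ < ε := by rwa [Complex.dist_eq] at h1
    have : ‖x‖ - ‖z‖ ≤ ‖x - z‖ := by simpa using norm_sub_norm_le x z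
    simp only [hε] at h2 ⊢
    linarith [norm_nonneg z]
  have key := hasDerivAt_integral_of_dominated_loc_of_deriv_le (μ := σ)
    (F := fun x (ζ : sphere (0:ℂ) 1) => Complex.log (1 - x * (starRingEnd ℂ) (ζ:ℂ)))
    (F' := fun x (ζ : sphere (0:ℂ) 1) =>
      -((starRingEnd ℂ) (ζ:ℂ)) / (1 - x * (starRingEnd ℂ) (ζ:ℂ)))
    (x₀ := z) (bound := fun _ => 2 / (1 - ‖z‖)) (s := ball z ε) (ball_mem_nhds z hε0)
    ?_ ?_ ?_ ?_ ?_ ?_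
  · exact key.2
  · -- measurability of F x near z
    filter_upwards [isOpen_ball.mem_nhds (mem_ball_self hε0)] with x hx
    exact (cont_log (hxlt x hx)).aestronglyMeasurable
  · exact integrable_cont σ (cont_log hz)
  · exact ((Complex.continuous_conj.comp continuous_subtype_val).neg.div (cont_denom z)
      (fun ζ => by apply ne_aux; rw [abs_mul_conj_sphere]; exact hz)).aestronglyMeasurable
  · -- bound
    apply Filter.Eventually.of_forall
    intro ζ x hx
    have hx1 : ‖x‖ < 1 := hxlt x hx
    have hd : (1 : ℝ) - ‖x‖ ≤ ‖1 - x * (starRingEnd ℂ) (ζ:ℂ)‖ := by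
      have := abs_one_sub_ge (w := x * (starRingEnd ℂ) (ζ:ℂ))
      rwa [abs_mul_conj_sphere] at this
    have hhalf : (1 - ‖z‖) / 2 ≤ 1 - ‖x‖ := by
      have h1 : dist x z < ε := mem_ball.mp hx
      have h2 : ‖x - z‖ < ε := by rwa [Complex.dist_eq] at h1
      have : ‖x‖ - ‖z‖ ≤ ‖x - z‖ := by simpa using norm_sub_norm_le x z
      simp only [hε] at h2; linarith
    have hpos : (0:ℝ) < (1 - ‖z‖) / 2 := by linarith [hε0]
    rw [norm_div, norm_neg]
    have hnum : ‖(starRingEnd ℂ) (ζ:ℂ)‖ = 1 := by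
      rw [Complex.norm_conj, absSphere]
    rw [hnum]
    rw [div_le_div_iff₀ (by linarith) (by linarith [hε0])]
    nlinarith
  · exact integrable_const _
  · -- differentiability
    apply Filter.Eventually.of_forall
    intro ζ x hx
    have hslit : 1 - x * (starRingEnd ℂ) (ζ:ℂ) ∈ Complex.slitPlane := by
      apply slit_aux; rw [abs_mul_conj_sphere]; exact hxlt x hx
    have h1 : HasDerivAt (fun y : ℂ => 1 - y * (starRingEnd ℂ) (ζ:ℂ))
        (-(1 * (starRingEnd ℂ) (ζ:ℂ))) x :=
      ((hasDerivAt_id x).mul_const _).const_sub 1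
    simpa using h1.clog hslit

theorem stmt11 (β : ℝ) (hβ : 0 ≤ β) (hβ1 : β < 1)
    (μ : ℝ) (hμ0 : 0 < μ) (hμ2 : μ ≤ 2)
    (σ : Measure (sphere (0:ℂ) 1)) [IsProbabilityMeasure σ]
    (f : ℂ → ℂ)
    (hf : ∀ z ∈ ball (0 : ℂ) 1,
      f z = (1 - z) ^ (μ : ℂ) *
        Complex.exp (-(μ : ℂ) * (1 - (β : ℂ)) *
          ∫ ζ : sphere (0:ℂ) 1, Complex.log (1 - z * (starRingEnd ℂ) (ζ : ℂ)) ∂σ)) :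
    ∀ z ∈ ball (0 : ℂ) 1,
      ‖deriv f z‖ ≤
        2 * μ * ‖1 - z‖ ^ μ /
          ((1 - ‖z‖ ^ 2) * (1 - ‖z‖) ^ (μ * (1 - β))) := by
  intro z hz
  have hz1 : ‖z‖ < 1 := by
    have := mem_ball_zero_iff.mp hz
    simpa using this
  have ht0 : 0 ≤ ‖z‖ := norm_nonneg z
  have h1t : (0:ℝ) < 1 - ‖z‖ := by linarith
  have hD : (0:ℝ) < 1 - ‖z‖ ^ 2 := by nlinarith
  have hne : (1:ℂ) - z ≠ 0 := ne_aux hz1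
  have hslitz : (1:ℂ) - z ∈ Complex.slitPlane := slit_aux hz1
  set c : ℂ := -(μ:ℂ) * (1 - (β:ℂ)) with hc
  set G : ℂ → ℂ := fun w => ∫ ζ : sphere (0:ℂ) 1,
      Complex.log (1 - w * (starRingEnd ℂ) (ζ:ℂ)) ∂σ with hGdef
  set I : ℂ := ∫ ζ : sphere (0:ℂ) 1,
      (starRingEnd ℂ) (ζ:ℂ) / (1 - z * (starRingEnd ℂ) (ζ:ℂ)) ∂σ with hIdef
  -- derivative of G
  have hGd : HasDerivAt G (-I) z := by
    have h := G_hasDeriv σ hz1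
    have heq : (∫ ζ : sphere (0:ℂ) 1,
        -((starRingEnd ℂ) (ζ:ℂ)) / (1 - z * (starRingEnd ℂ) (ζ:ℂ)) ∂σ) = -I := by
      rw [hIdef, ← integral_neg]
      congr 1; funext ζ; rw [neg_div]
    rwa [heq] at h
  have hA : HasDerivAt (fun w : ℂ => (1 - w) ^ (μ:ℂ))
      ((μ:ℂ) * (1-z)^((μ:ℂ)-1) * (-1)) z :=
    HasDerivAt.cpow_const ((hasDerivAt_id z).const_sub 1) hslitz
  have hB : HasDerivAt (fun w => Complex.exp (c * G w))
      (Complex.exp (c * G z) * (c * -I)) z := (hGd.const_mul c).cexp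
  have hK : HasDerivAt (fun w => (1 - w) ^ (μ:ℂ) * Complex.exp (c * G w))
      ((μ:ℂ) * (1-z)^((μ:ℂ)-1) * (-1) * Complex.exp (c * G z)
        + (1 - z) ^ (μ:ℂ) * (Complex.exp (c * G z) * (c * -I))) z := hA.mul hB
  have hfK : f =ᶠ[nhds z] fun w => (1 - w) ^ (μ:ℂ) * Complex.exp (c * G w) := by
    filter_upwards [isOpen_ball.mem_nhds hz] with w hw
    exact hf w hw
  have hDf : HasDerivAt f
      ((μ:ℂ) * (1-z)^((μ:ℂ)-1) * (-1) * Complex.exp (c * G z)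
        + (1 - z) ^ (μ:ℂ) * (Complex.exp (c * G z) * (c * -I))) z :=
    hK.congr_of_eventuallyEq hfK
  have hpow : (1-z)^((μ:ℂ)-1) = (1-z)^(μ:ℂ) * (1-z)⁻¹ := by
    rw [Complex.cpow_sub _ _ hne, Complex.cpow_one, div_eq_mul_inv]
  have hD0 : (μ:ℂ) * (1-z)^((μ:ℂ)-1) * (-1) * Complex.exp (c * G z)
        + (1 - z) ^ (μ:ℂ) * (Complex.exp (c * G z) * (c * -I))
      = (1-z)^(μ:ℂ) * Complex.exp (c * G z)
        * ((μ:ℂ) * (-(1-z)⁻¹ + (1-(β:ℂ)) * I)) := by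
    rw [hpow, hc]; ring
  rw [hDf.deriv, hD0, norm_mul, norm_mul]
  -- Bound 1
  have hP1 : ‖(1-z)^(μ:ℂ)‖ = ‖1-z‖ ^ μ := by
    rw [Complex.norm_cpow_of_ne_zero hne]
    simp
  -- Bound 2
  have hP2 : ‖Complex.exp (c * G z)‖
      ≤ (1 - ‖z‖) ^ (-(μ*(1-β))) := by
    rw [Complex.norm_exp]
    have hcre : (c * G z).re = -(μ*(1-β)) * (G z).re := by
      rw [hc, show -(μ:ℂ)*(1-(β:ℂ)) = ((-(μ*(1-β)):ℝ):ℂ) by push_cast; ring,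
        Complex.re_ofReal_mul]
    have hca : Continuous fun ζ : sphere (0:ℂ) 1 =>
        ‖1 - z * (starRingEnd ℂ) (ζ:ℂ)‖ :=
      continuous_norm.comp (cont_denom z)
    have hcontlogabs : Continuous fun ζ : sphere (0:ℂ) 1 =>
        Real.log (‖1 - z * (starRingEnd ℂ) (ζ:ℂ)‖) := by
      apply hca.log
      intro ζ
      have := abs_one_sub_ge (w := z * (starRingEnd ℂ) (ζ:ℂ))
      rw [abs_mul_conj_sphere] at this
      have : (0:ℝ) < ‖1 - z * (starRingEnd ℂ) (ζ:ℂ)‖ := by linarith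
      exact this.ne'
    have hGz : (G z).re = ∫ ζ : sphere (0:ℂ) 1,
        Real.log (‖1 - z * (starRingEnd ℂ) (ζ:ℂ)‖) ∂σ := by
      have h := integral_re (μ := σ)
        (f := fun ζ : sphere (0:ℂ) 1 => Complex.log (1 - z * (starRingEnd ℂ) (ζ:ℂ)))
        (integrable_cont σ (cont_log hz1))
      simp only [RCLike.re_to_complex] at h
      show (∫ ζ : sphere (0:ℂ) 1, Complex.log (1 - z * (starRingEnd ℂ) (ζ:ℂ)) ∂σ).re = _
      rw [← h]
      congr 1
      funext ζ
      rw [Complex.log_re]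
    have hmono : Real.log (1 - ‖z‖) ≤ (G z).re := by
      rw [hGz]
      have h1 : (Real.log (1 - ‖z‖)) =
          ∫ _ζ : sphere (0:ℂ) 1, Real.log (1 - ‖z‖) ∂σ := by
        simp [measure_univ]
      rw [h1]
      apply integral_mono (integrable_const _) (integrable_cont σ hcontlogabs)
      intro ζ
      have hge : 1 - ‖z‖ ≤ ‖1 - z * (starRingEnd ℂ) (ζ:ℂ)‖ := by
        have := abs_one_sub_ge (w := z * (starRingEnd ℂ) (ζ:ℂ))
        rwa [abs_mul_conj_sphere] at this
      exact Real.log_le_log h1t hge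
    have hle : (c * G z).re ≤ -(μ*(1-β)) * Real.log (1 - ‖z‖) := by
      rw [hcre]
      apply mul_le_mul_of_nonpos_left hmono (by nlinarith)
    calc Real.exp ((c * G z).re) ≤ Real.exp (-(μ*(1-β)) * Real.log (1 - ‖z‖)) :=
          Real.exp_le_exp.mpr hle
      _ = (1 - ‖z‖) ^ (-(μ*(1-β))) := by
          rw [Real.rpow_def_of_pos h1t, mul_comm]
  -- Bound 3
  have hP3 : ‖(μ:ℂ) * (-(1-z)⁻¹ + (1-(β:ℂ)) * I)‖
      ≤ μ * (2 / (1 - ‖z‖ ^ 2)) := by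
    rw [norm_mul, show ‖(μ:ℂ)‖ = μ by rw [Complex.norm_real, Real.norm_eq_abs, abs_of_pos hμ0]]
    apply mul_le_mul_of_nonneg_left _ hμ0.le
    set d2 : ℂ := 1 - z * (starRingEnd ℂ) z with hd2def
    set e1 : ℂ := (1-z)⁻¹ - (starRingEnd ℂ) z / d2 with he1def
    set e2 : ℂ := (starRingEnd ℂ) z / d2 with he2def
    set e3 : ℂ := I - (starRingEnd ℂ) z / d2 with he3def
    have hXeq : -(1-z)⁻¹ + (1-(β:ℂ)) * I = -e1 + (-(β:ℂ)) * e2 + (1-(β:ℂ)) * e3 := by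
      rw [he1def, he2def, he3def]; ring
    have he1 : ‖e1‖ = 1 / (1 - ‖z‖ ^ 2) := by
      have h := key_id hz1 (a := 1) (by simp)
      rw [he1def, he2def, hd2def]
      simpa [one_div] using h
    have he2 : ‖e2‖ = ‖z‖ / (1 - ‖z‖ ^ 2) := by
      rw [he2def, norm_div, Complex.norm_conj, hd2def, abs_d2 hz1]
    have he3 : ‖e3‖ ≤ 1 / (1 - ‖z‖ ^ 2) := by
      have hint1 : Integrable (fun ζ : sphere (0:ℂ) 1 =>
          (starRingEnd ℂ) (ζ:ℂ) / (1 - z * (starRingEnd ℂ) (ζ:ℂ))) σ :=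
        integrable_cont σ (cont_frac hz1)
      have he3eq : e3 = ∫ ζ : sphere (0:ℂ) 1,
          ((starRingEnd ℂ) (ζ:ℂ) / (1 - z * (starRingEnd ℂ) (ζ:ℂ))
            - (starRingEnd ℂ) z / d2) ∂σ := by
        rw [he3def, hIdef, integral_sub hint1 (integrable_const _), integral_const]
        simp [measure_univ]
      have hnormle : ‖e3‖ ≤ ∫ ζ : sphere (0:ℂ) 1,
          ‖(starRingEnd ℂ) (ζ:ℂ) / (1 - z * (starRingEnd ℂ) (ζ:ℂ))
            - (starRingEnd ℂ) z / d2‖ ∂σ := by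
        rw [he3eq]; exact norm_integral_le_integral_norm _
      have hptw : ∀ ζ : sphere (0:ℂ) 1,
          ‖(starRingEnd ℂ) (ζ:ℂ) / (1 - z * (starRingEnd ℂ) (ζ:ℂ))
            - (starRingEnd ℂ) z / d2‖ = 1 / (1 - ‖z‖ ^ 2) := by
        intro ζ
        rw [hd2def]
        exact key_id hz1 (absSphere ζ)
      calc ‖e3‖ = ‖e3‖ := rfl
        _ ≤ ∫ ζ : sphere (0:ℂ) 1,
            ‖(starRingEnd ℂ) (ζ:ℂ) / (1 - z * (starRingEnd ℂ) (ζ:ℂ))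
              - (starRingEnd ℂ) z / d2‖ ∂σ := hnormle
        _ = ∫ _ζ : sphere (0:ℂ) 1, 1 / (1 - ‖z‖ ^ 2) ∂σ :=
            integral_congr_ae (Filter.Eventually.of_forall hptw)
        _ = 1 / (1 - ‖z‖ ^ 2) := by simp [measure_univ]
    have htri : ‖-e1 + (-(β:ℂ)) * e2 + (1-(β:ℂ)) * e3‖
        ≤ ‖e1‖ + β * ‖e2‖ + (1-β) * ‖e3‖ := by
      have habsb : ‖-(β:ℂ)‖ = β := by
        rw [norm_neg, Complex.norm_real, Real.norm_eq_abs, _root_.abs_of_nonneg hβ]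
      have habsb1 : ‖1-(β:ℂ)‖ = 1-β := by
        rw [show (1:ℂ)-(β:ℂ) = (((1-β:ℝ)):ℂ) by push_cast; ring, Complex.norm_real, Real.norm_eq_abs,
          _root_.abs_of_pos (by linarith)]
      calc ‖-e1 + (-(β:ℂ)) * e2 + (1-(β:ℂ)) * e3‖
          ≤ ‖-e1 + (-(β:ℂ)) * e2‖ + ‖(1-(β:ℂ)) * e3‖ :=
            norm_add_le _ _
        _ ≤ (‖-e1‖ + ‖(-(β:ℂ)) * e2‖) + ‖(1-(β:ℂ)) * e3‖ :=
            add_le_add_left (norm_add_le _ _) _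
        _ = ‖e1‖ + β * ‖e2‖ + (1-β) * ‖e3‖ := by
            rw [norm_neg, norm_mul, norm_mul, habsb, habsb1]
    rw [hXeq]
    have hu : (0:ℝ) ≤ 1 / (1 - ‖z‖ ^ 2) := by positivity
    calc ‖-e1 + (-(β:ℂ)) * e2 + (1-(β:ℂ)) * e3‖
        ≤ ‖e1‖ + β * ‖e2‖ + (1-β) * ‖e3‖ := htri
      _ ≤ 1 / (1 - ‖z‖ ^ 2) + β * (‖z‖ / (1 - ‖z‖ ^ 2))
          + (1-β) * (1 / (1 - ‖z‖ ^ 2)) := by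
          rw [he1, he2]
          have := mul_le_mul_of_nonneg_left he3 (by linarith : (0:ℝ) ≤ 1-β)
          linarith
      _ ≤ 2 / (1 - ‖z‖ ^ 2) := by
          rw [show ‖z‖ / (1 - ‖z‖ ^ 2)
            = ‖z‖ * (1 / (1 - ‖z‖ ^ 2)) by ring,
            show (2:ℝ) / (1 - ‖z‖ ^ 2) = 2 * (1 / (1 - ‖z‖ ^ 2)) by ring]
          nlinarith [mul_nonneg (mul_nonneg hβ hu) h1t.le]
  -- assemble
  have hfin : ‖1-z‖ ^ μ * ((1 - ‖z‖) ^ (-(μ*(1-β))))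
      * (μ * (2 / (1 - ‖z‖ ^ 2)))
      = 2 * μ * ‖1 - z‖ ^ μ /
        ((1 - ‖z‖ ^ 2) * (1 - ‖z‖) ^ (μ * (1 - β))) := by
    rw [Real.rpow_neg h1t.le]
    have hrp : (0:ℝ) < (1 - ‖z‖) ^ (μ * (1 - β)) := Real.rpow_pos_of_pos h1t _
    field_simp
  rw [← hfin]
  have hnn1 : (0:ℝ) ≤ ‖1-z‖ ^ μ := by positivity
  have hnn2 : (0:ℝ) ≤ (1 - ‖z‖) ^ (-(μ*(1-β))) := by positivity
  apply mul_le_mul (mul_le_mul (le_of_eq hP1) hP2 (norm_nonneg _) hnn1) hP3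
    (norm_nonneg _) (by positivity)
end

section
/- Let μ = r·e^{iφ} be a nonzero complex number with |μ−1| ≤ 1 (r > 0, φ ∈ (−π/2, π/2)), β ∈ [0,1), and let f be holomorphic and nonvanishing on Δ with f(0)=1. Define s(z) = z f(z)/(1−z)^μ. Then f satisfies Re((2/μ)·(zf'(z)/f(z)) + (1+z)/(1−z)) > β on Δ if and only if s satisfies Re(e^{−iφ}·z s'(z)/s(z)) > cos φ − r(1−β)/2 for all z ∈ Δ \ {0}. -/
open Complex MeasureTheory Metric

lemma stmt12_aux (r μ w a u : ℂ) (hμ : μ ≠ 0) (hw : w ≠ 0) (hu : u = 1 - w) :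
    r / μ * (1 + a + μ * u / w) = r / 2 * (2 / μ * a + (1 + u) / w) + r / μ - r / 2 := by
  subst hu
  field_simp
  ring_nf

theorem stmt12 (r φ : ℝ) (hr : 0 < r) (hφ : -(Real.pi / 2) < φ) (hφ' : φ < Real.pi / 2)
    (μ : ℂ) (hμdef : μ = (r : ℂ) * Complex.exp ((φ : ℂ) * Complex.I))
    (hμ0 : μ ≠ 0) (hμ : ‖μ - 1‖ ≤ 1)
    (β : ℝ) (hβ : 0 ≤ β) (hβ1 : β < 1)
    (f : ℂ → ℂ) (hfd : DifferentiableOn ℂ f (ball (0 : ℂ) 1))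
    (hf0 : f 0 = 1) (hfne : ∀ z ∈ ball (0 : ℂ) 1, f z ≠ 0)
    (s : ℂ → ℂ)
    (hs : ∀ z ∈ ball (0 : ℂ) 1, s z = z * f z / (1 - z) ^ μ) :
    (∀ z ∈ ball (0 : ℂ) 1,
        (β : ℝ) < ((2 / μ) * (z * deriv f z / f z) + (1 + z) / (1 - z)).re) ↔
    (∀ z ∈ ball (0 : ℂ) 1, z ≠ 0 →
        Real.cos φ - r * (1 - β) / 2 <
          (Complex.exp (-(φ : ℂ) * Complex.I) * (z * deriv s z / s z)).re) := by
  set E : ℂ := Complex.exp (-(φ : ℂ) * Complex.I) with hEdef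
  have hE : E = (r : ℂ) / μ := by
    rw [eq_div_iff hμ0, hμdef, hEdef, mul_comm ((r:ℂ)) _, ← mul_assoc,
      ← Complex.exp_add]
    ring_nf
    simp
  have hEre : E.re = Real.cos φ := by
    rw [hEdef, show -(φ:ℂ) = ((-φ : ℝ) : ℂ) by push_cast; ring,
      Complex.exp_ofReal_mul_I_re, Real.cos_neg]
  have key : ∀ z ∈ ball (0:ℂ) 1, z ≠ 0 →
      (E * (z * deriv s z / s z)).re
        = r / 2 * ((2 / μ * (z * deriv f z / f z) + (1 + z) / (1 - z)).re)
          + Real.cos φ - r / 2 := by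
    intro z hz hz0
    have hzabs : ‖z‖ < 1 := by simpa using hz
    have h1z : (1 : ℂ) - z ≠ 0 := by
      intro h
      have : z = 1 := by linear_combination -h
      simp [this] at hzabs
    have hfz : f z ≠ 0 := hfne z hz
    have hslit : (1 : ℂ) - z ∈ Complex.slitPlane := by
      rw [Complex.mem_slitPlane_iff]
      left
      have : z.re ≤ ‖z‖ := Complex.re_le_norm z
      simp only [Complex.sub_re, Complex.one_re]
      linarith
    have hpow : ((1:ℂ) - z) ^ μ ≠ 0 := by
      simp [Complex.cpow_eq_zero_iff, h1z]
    have hpow' : ((1:ℂ) - z) ^ μ = ((1:ℂ) - z) ^ (μ - 1) * (1 - z) := by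
      have := Complex.cpow_add (μ - 1) 1 h1z
      simp only [sub_add_cancel, Complex.cpow_one] at this
      rw [this]
    have hA : ((1:ℂ) - z) ^ (μ - 1) ≠ 0 := by
      intro h; rw [hpow', h, zero_mul] at hpow; exact hpow rfl
    -- derivative of f at z
    have hfda : HasDerivAt f (deriv f z) z :=
      ((hfd.differentiableAt (isOpen_ball.mem_nhds hz)).hasDerivAt)
    -- derivative of numerator
    have hnum : HasDerivAt (fun w : ℂ => w * f w) (f z + z * deriv f z) z := by
      have := (hasDerivAt_id' z).mul hfda; simp only [one_mul] at this; exact this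
    -- derivative of denominator
    have hden : HasDerivAt (fun w : ℂ => ((1:ℂ) - w) ^ μ)
        (μ * ((1:ℂ) - z) ^ (μ - 1) * (-1)) z := by
      have := HasDerivAt.cpow_const (c := μ)
        ((hasDerivAt_const z (1:ℂ)).sub (hasDerivAt_id z)) hslit
      simpa using this
    have hg : HasDerivAt (fun w : ℂ => w * f w / ((1:ℂ) - w) ^ μ)
        (((f z + z * deriv f z) * ((1:ℂ) - z) ^ μ -
          z * f z * (μ * ((1:ℂ) - z) ^ (μ - 1) * (-1))) / (((1:ℂ) - z) ^ μ) ^ 2) z :=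
      hnum.div hden hpow
    have hseq : s =ᶠ[nhds z] fun w : ℂ => w * f w / ((1:ℂ) - w) ^ μ :=
      Filter.eventuallyEq_of_mem (isOpen_ball.mem_nhds hz) hs
    have hds : deriv s z = ((f z + z * deriv f z) * ((1:ℂ) - z) ^ μ -
          z * f z * (μ * ((1:ℂ) - z) ^ (μ - 1) * (-1))) / (((1:ℂ) - z) ^ μ) ^ 2 := by
      rw [hseq.deriv_eq, hg.deriv]
    have hsz : s z = z * f z / ((1:ℂ) - z) ^ μ := hs z hz
    have hzs : z * deriv s z / s z = 1 + z * deriv f z / f z + μ * z / (1 - z) := by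
      rw [hds, hsz, hpow']
      field_simp
      ring
    have hmain : E * (z * deriv s z / s z)
        = (r : ℂ) / 2 * (2 / μ * (z * deriv f z / f z) + (1 + z) / (1 - z))
          + E - (r : ℂ) / 2 := by
      rw [hzs, hE]
      exact stmt12_aux (r : ℂ) μ (1 - z) (z * deriv f z / f z) z hμ0 h1z (by ring)
    rw [hmain]
    rw [show (r : ℂ) / 2 = ((r / 2 : ℝ) : ℂ) by push_cast; ring]
    simp only [Complex.add_re, Complex.sub_re, Complex.re_ofReal_mul, hEre,
      Complex.ofReal_re]
  constructor
  · intro h z hz hz0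
    have hk := key z hz hz0
    have hw := h z hz
    rw [hk]
    nlinarith [hw, hr]
  · intro h z hz
    by_cases hz0 : z = 0
    · subst hz0
      simp [hf0]
      linarith
    · have hk := key z hz hz0
      have hw := h z hz hz0
      rw [hk] at hw
      nlinarith [hw, hr]
end

section
/- For s ∈ (0,1], the function a_s(t) = (2cos(t/2))^{2s} + 1 − 2(2cos(t/2))^s cos(st/2) is monotonically increasing on [0, π), and for s ∈ (1,2] it is monotonically decreasing on [0, π). Moreover a_s(t) = |(1+e^{it})^s − 1|² for t ∈ (−π, π), where (1+e^{it})^s uses the principal branch. -/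
open Complex Real



lemma key_le {s u : ℝ} (hs0 : 0 < s) (hs1 : s ≤ 1) (hu0 : 0 < u) (hu : u < π / 2) :
    (2 * Real.cos u) ^ s * Real.sin u ≤ Real.sin ((1 + s) * u) := by
  have hsinu : 0 < Real.sin u := Real.sin_pos_of_pos_of_lt_pi hu0 (by linarith [Real.pi_pos])
  have hcos : 0 < Real.cos u := Real.cos_pos_of_mem_Ioo ⟨by linarith, hu⟩
  have hsin2u : 0 < Real.sin (2 * u) :=
    Real.sin_pos_of_pos_of_lt_pi (by linarith) (by linarith)
  have hgm : Real.sin u ^ (1 - s) * Real.sin (2 * u) ^ s ≤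
      (1 - s) * Real.sin u + s * Real.sin (2 * u) :=
    Real.geom_mean_le_arith_mean2_weighted (by linarith) hs0.le hsinu.le hsin2u.le (by ring)
  have hconc := strictConcaveOn_sin_Icc.concaveOn.2 (x := u) (y := 2 * u)
    ⟨hu0.le, by linarith [Real.pi_pos]⟩ ⟨by linarith, by linarith⟩
    (by linarith : (0:ℝ) ≤ 1 - s) hs0.le (by ring)
  simp only [smul_eq_mul] at hconc
  have hcomb : (1 - s) * u + s * (2 * u) = (1 + s) * u := by ring
  rw [hcomb] at hconc
  have heq : Real.sin u ^ (1 - s) * Real.sin (2 * u) ^ s = (2 * Real.cos u) ^ s * Real.sin u := by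
    rw [Real.sin_two_mul, show 2 * Real.sin u * Real.cos u = Real.sin u * (2 * Real.cos u) by ring,
      Real.mul_rpow hsinu.le (by linarith)]
    rw [show Real.sin u ^ (1 - s) * (Real.sin u ^ s * (2 * Real.cos u) ^ s)
        = Real.sin u ^ (1 - s) * Real.sin u ^ s * (2 * Real.cos u) ^ s by ring,
      ← Real.rpow_add hsinu]
    simp [Real.rpow_one]
    ring
  rw [heq] at hgm
  linarith

lemma key_ge {s u : ℝ} (hs1 : 1 ≤ s) (hs2 : s ≤ 2) (hu0 : 0 < u) (hu : u < π / 2) :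
    Real.sin ((1 + s) * u) ≤ (2 * Real.cos u) ^ s * Real.sin u := by
  have hs0 : 0 < s := by linarith
  have hsinu : 0 < Real.sin u := Real.sin_pos_of_pos_of_lt_pi hu0 (by linarith [Real.pi_pos])
  have hcos : 0 < Real.cos u := Real.cos_pos_of_mem_Ioo ⟨by linarith, hu⟩
  have hrhs : 0 ≤ (2 * Real.cos u) ^ s * Real.sin u := by positivity
  rcases lt_or_ge ((1 + s) * u) π with h | h
  · -- main case
    have hsin1su : 0 ≤ Real.sin ((1 + s) * u) :=
      Real.sin_nonneg_of_nonneg_of_le_pi (by positivity) h.le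
    have hsin2u : 0 < Real.sin (2 * u) :=
      Real.sin_pos_of_pos_of_lt_pi (by linarith) (by linarith)
    have hgm : Real.sin u ^ ((s - 1) / s) * Real.sin ((1 + s) * u) ^ (1 / s) ≤
        (s - 1) / s * Real.sin u + 1 / s * Real.sin ((1 + s) * u) :=
      Real.geom_mean_le_arith_mean2_weighted (div_nonneg (by linarith) hs0.le) (by positivity)
        hsinu.le hsin1su (by field_simp; ring)
    have hconc := strictConcaveOn_sin_Icc.concaveOn.2 (x := u) (y := (1 + s) * u)
      ⟨hu0.le, by linarith [Real.pi_pos]⟩ ⟨by positivity, h.le⟩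
      (div_nonneg (by linarith) hs0.le : (0:ℝ) ≤ (s - 1) / s) (by positivity : (0:ℝ) ≤ 1 / s) (by field_simp; ring)
    simp only [smul_eq_mul] at hconc
    have hcomb : (s - 1) / s * u + 1 / s * ((1 + s) * u) = 2 * u := by field_simp; ring
    rw [hcomb] at hconc
    have h1 : Real.sin u ^ ((s - 1) / s) * Real.sin ((1 + s) * u) ^ (1 / s) ≤ Real.sin (2 * u) :=
      le_trans hgm hconc
    have h2 : (Real.sin u ^ ((s - 1) / s) * Real.sin ((1 + s) * u) ^ (1 / s)) ^ s ≤
        Real.sin (2 * u) ^ s := Real.rpow_le_rpow (by positivity) h1 hs0.le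
    rw [Real.mul_rpow (by positivity) (by positivity)] at h2
    rw [← Real.rpow_mul hsinu.le, ← Real.rpow_mul hsin1su] at h2
    rw [show (s - 1) / s * s = s - 1 by field_simp, show 1 / s * s = 1 by field_simp,
      Real.rpow_one] at h2
    have hL : Real.sin (2 * u) ^ s = (2 * Real.cos u) ^ s * Real.sin u ^ s := by
      rw [Real.sin_two_mul, show 2 * Real.sin u * Real.cos u = 2 * Real.cos u * Real.sin u by ring,
        Real.mul_rpow (by positivity) hsinu.le]
    have hsplit : Real.sin u ^ s = Real.sin u ^ (s - 1) * Real.sin u := by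
      rw [show s = (s - 1) + 1 by ring, Real.rpow_add hsinu, Real.rpow_one]; ring_nf
    rw [hL, hsplit] at h2
    have hpos : 0 < Real.sin u ^ (s - 1) := Real.rpow_pos_of_pos hsinu _
    have := le_of_mul_le_mul_left (a := Real.sin u ^ (s - 1))
      (by linarith [h2] : Real.sin u ^ (s - 1) * Real.sin ((1 + s) * u) ≤
        Real.sin u ^ (s - 1) * ((2 * Real.cos u) ^ s * Real.sin u)) hpos
    linarith
  · have : Real.sin ((1 + s) * u) ≤ 0 := by
      have h1 : Real.sin ((1 + s) * u) = -Real.sin ((1 + s) * u - π) := by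
        rw [Real.sin_sub_pi]; ring
      rw [h1, neg_nonpos]
      exact Real.sin_nonneg_of_nonneg_of_le_pi (by linarith) (by nlinarith [Real.pi_pos])
    linarith
lemma hasDeriv_aux (s : ℝ) {t : ℝ} (ht0 : 0 < t) (htp : t < π) :
    HasDerivAt (fun t => (2 * Real.cos (t / 2)) ^ (2 * s) + 1 -
        2 * (2 * Real.cos (t / 2)) ^ s * Real.cos (s * t / 2))
      (2 * s * (2 * Real.cos (t / 2)) ^ (s - 1) *
        (Real.sin ((1 + s) * (t / 2)) - (2 * Real.cos (t / 2)) ^ s * Real.sin (t / 2))) t := by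
  have hc2 : 0 < Real.cos (t / 2) := Real.cos_pos_of_mem_Ioo ⟨by linarith, by linarith⟩
  have hcpos : 0 < 2 * Real.cos (t / 2) := by linarith
  have hcne : (2 : ℝ) * Real.cos (t / 2) ≠ 0 := ne_of_gt hcpos
  have hd : HasDerivAt (fun t : ℝ => 2 * Real.cos (t / 2))
      (2 * (-Real.sin (t / 2) * (1 / 2))) t :=
    (((hasDerivAt_id' t).div_const 2).cos).const_mul 2
  have h1 : HasDerivAt (fun t : ℝ => (2 * Real.cos (t / 2)) ^ (2 * s))
      (2 * (-Real.sin (t / 2) * (1 / 2)) * (2 * s) * (2 * Real.cos (t / 2)) ^ (2 * s - 1)) t :=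
    hd.rpow_const (Or.inl hcne)
  have h2 : HasDerivAt (fun t : ℝ => (2 * Real.cos (t / 2)) ^ s)
      (2 * (-Real.sin (t / 2) * (1 / 2)) * s * (2 * Real.cos (t / 2)) ^ (s - 1)) t :=
    hd.rpow_const (Or.inl hcne)
  have h3 : HasDerivAt (fun t : ℝ => Real.cos (s * t / 2))
      (-Real.sin (s * t / 2) * (s / 2)) t := by
    have := (((hasDerivAt_id' t).const_mul s).div_const 2).cos
    simpa [mul_comm, mul_div_assoc] using this
  have htot := (h1.add_const 1).sub ((h2.const_mul 2).mul h3)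
  refine htot.congr_deriv ?_
  have hsa : Real.sin ((1 + s) * (t / 2)) =
      Real.sin (t / 2) * Real.cos (s * t / 2) + Real.cos (t / 2) * Real.sin (s * t / 2) := by
    rw [show (1 + s) * (t / 2) = t / 2 + s * t / 2 by ring, Real.sin_add]
  have hA : (2 * Real.cos (t / 2)) ^ (2 * s - 1) =
      (2 * Real.cos (t / 2)) ^ (s - 1) * (2 * Real.cos (t / 2)) ^ s := by
    rw [← Real.rpow_add hcpos]; ring_nf
  have hB : (2 * Real.cos (t / 2)) ^ s =
      (2 * Real.cos (t / 2)) ^ (s - 1) * (2 * Real.cos (t / 2)) := by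
    rw [← Real.rpow_add_one hcne, show s - 1 + 1 = s by ring]
  rw [hsa, hA, hB]
  ring

lemma cont_aux (s : ℝ) (hs0 : 0 < s) :
    Continuous (fun t : ℝ => (2 * Real.cos (t / 2)) ^ (2 * s) + 1 -
        2 * (2 * Real.cos (t / 2)) ^ s * Real.cos (s * t / 2)) := by
  have hbase : Continuous fun t : ℝ => 2 * Real.cos (t / 2) := by continuity
  exact ((hbase.rpow_const fun x => Or.inr (by positivity)).add continuous_const).sub
    ((continuous_const.mul (hbase.rpow_const fun x => Or.inr hs0.le)).mul (by continuity))

theorem stmt14 (s : ℝ) (hs0 : 0 < s) (hs2 : s ≤ 2)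
    (a : ℝ → ℝ)
    (ha : ∀ t, a t = (2 * Real.cos (t / 2)) ^ (2 * s) + 1 -
        2 * (2 * Real.cos (t / 2)) ^ s * Real.cos (s * t / 2)) :
    (s ≤ 1 → MonotoneOn a (Set.Ico 0 Real.pi)) ∧
    (1 < s → AntitoneOn a (Set.Ico 0 Real.pi)) ∧
    (∀ t ∈ Set.Ioo (-Real.pi) Real.pi,
      a t = ‖(1 + Complex.exp (t * Complex.I)) ^ (s : ℂ) - 1‖ ^ 2) := by
  have haf : a = fun t => (2 * Real.cos (t / 2)) ^ (2 * s) + 1 -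
      2 * (2 * Real.cos (t / 2)) ^ s * Real.cos (s * t / 2) := funext ha
  subst haf
  refine ⟨?_, ?_, ?_⟩
  · intro hs1
    apply monotoneOn_of_deriv_nonneg (convex_Ico 0 π) (cont_aux s hs0).continuousOn
    · rw [interior_Ico]; intro x hx
      exact (hasDeriv_aux s hx.1 hx.2).differentiableAt.differentiableWithinAt
    · rw [interior_Ico]; intro x hx
      rw [(hasDeriv_aux s hx.1 hx.2).deriv]
      have hc2 : 0 < Real.cos (x / 2) :=
        Real.cos_pos_of_mem_Ioo ⟨by linarith [hx.1, Real.pi_pos], by linarith [hx.2]⟩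
      have hk := key_le hs0 hs1 (half_pos hx.1) (by linarith [hx.2] : x / 2 < π / 2)
      have h1 : (0:ℝ) ≤ 2 * s * (2 * Real.cos (x / 2)) ^ (s - 1) := by positivity
      exact mul_nonneg h1 (by linarith)
  · intro hs1
    apply antitoneOn_of_deriv_nonpos (convex_Ico 0 π) (cont_aux s hs0).continuousOn
    · rw [interior_Ico]; intro x hx
      exact (hasDeriv_aux s hx.1 hx.2).differentiableAt.differentiableWithinAt
    · rw [interior_Ico]; intro x hx
      rw [(hasDeriv_aux s hx.1 hx.2).deriv]
      have hc2 : 0 < Real.cos (x / 2) :=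
        Real.cos_pos_of_mem_Ioo ⟨by linarith [hx.1, Real.pi_pos], by linarith [hx.2]⟩
      have hk := key_ge hs1.le hs2 (half_pos hx.1) (by linarith [hx.2] : x / 2 < π / 2)
      have h1 : (0:ℝ) ≤ 2 * s * (2 * Real.cos (x / 2)) ^ (s - 1) := by positivity
      exact mul_nonpos_of_nonneg_of_nonpos h1 (by linarith)
  · intro t ht
    obtain ⟨ht1, ht2⟩ := ht
    have hc2 : 0 < Real.cos (t / 2) :=
      Real.cos_pos_of_mem_Ioo ⟨by linarith, by linarith⟩
    have hr : (0:ℝ) < 2 * Real.cos (t / 2) := by linarith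
    have hct : Real.cos t = 2 * Real.cos (t / 2) ^ 2 - 1 := by
      have := Real.cos_two_mul (t / 2); rwa [show 2 * (t / 2) = t by ring] at this
    have hst : Real.sin t = 2 * Real.sin (t / 2) * Real.cos (t / 2) := by
      have := Real.sin_two_mul (t / 2); rwa [show 2 * (t / 2) = t by ring] at this
    have hz : (1 : ℂ) + Complex.exp (t * Complex.I) =
        ((2 * Real.cos (t / 2) : ℝ) : ℂ) *
          (Complex.cos (((t / 2 : ℝ)) : ℂ) + Complex.sin (((t / 2 : ℝ)) : ℂ) * Complex.I) := by
      rw [Complex.exp_mul_I, ← Complex.ofReal_cos, ← Complex.ofReal_sin,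
        ← Complex.ofReal_cos, ← Complex.ofReal_sin, hct, hst]
      push_cast
      ring
    have habs : ‖1 + Complex.exp (t * Complex.I)‖ = 2 * Real.cos (t / 2) := by
      rw [hz, norm_mul, Complex.norm_cos_add_sin_mul_I, Complex.norm_real, Real.norm_of_nonneg hr.le, mul_one]
    have hz0 : (1 : ℂ) + Complex.exp (t * Complex.I) ≠ 0 := by
      intro h
      rw [h, norm_zero] at habs
      linarith
    have harg : (1 + Complex.exp (t * Complex.I)).arg = t / 2 := by
      rw [hz, Complex.arg_real_mul _ hr]
      exact Complex.arg_cos_add_sin_mul_I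
        ⟨by linarith [Real.pi_pos], by linarith [Real.pi_pos]⟩
    have hlog : Complex.log (1 + Complex.exp (t * Complex.I)) =
        ((Real.log (2 * Real.cos (t / 2)) : ℝ) : ℂ) + ((t / 2 : ℝ) : ℂ) * Complex.I := by
      apply Complex.ext
      · rw [Complex.log_re, habs]; simp
      · rw [Complex.log_im, harg]; simp
    have hw : (1 + Complex.exp (t * Complex.I)) ^ (s : ℂ) =
        (((2 * Real.cos (t / 2)) ^ s : ℝ) : ℂ) *
          (((Real.cos (s * t / 2) : ℝ) : ℂ) + ((Real.sin (s * t / 2) : ℝ) : ℂ) * Complex.I) := by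
      rw [Complex.cpow_def_of_ne_zero hz0, hlog]
      rw [show (((Real.log (2 * Real.cos (t / 2)) : ℝ) : ℂ) + ((t / 2 : ℝ) : ℂ) * Complex.I) * (s : ℂ)
          = ((Real.log (2 * Real.cos (t / 2)) * s : ℝ) : ℂ) + ((s * t / 2 : ℝ) : ℂ) * Complex.I by
        push_cast; ring]
      rw [Complex.exp_add, Complex.exp_mul_I, ← Complex.ofReal_exp, ← Real.rpow_def_of_pos hr,
        Complex.ofReal_cos, Complex.ofReal_sin]
    rw [ha t, hw, Complex.sq_norm, Complex.normSq_apply]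
    have hre : ((((2 * Real.cos (t / 2)) ^ s : ℝ) : ℂ) *
        (((Real.cos (s * t / 2) : ℝ) : ℂ) + ((Real.sin (s * t / 2) : ℝ) : ℂ) * Complex.I)
        - 1).re = (2 * Real.cos (t / 2)) ^ s * Real.cos (s * t / 2) - 1 := by
      simp only [Complex.sub_re, Complex.mul_re, Complex.add_re, Complex.add_im,
        Complex.ofReal_re, Complex.ofReal_im, Complex.mul_im, Complex.I_re, Complex.I_im,
        Complex.one_re]
      ring
    have him : ((((2 * Real.cos (t / 2)) ^ s : ℝ) : ℂ) *
        (((Real.cos (s * t / 2) : ℝ) : ℂ) + ((Real.sin (s * t / 2) : ℝ) : ℂ) * Complex.I)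
        - 1).im = (2 * Real.cos (t / 2)) ^ s * Real.sin (s * t / 2) := by
      simp only [Complex.sub_im, Complex.mul_im, Complex.add_re, Complex.add_im,
        Complex.ofReal_re, Complex.ofReal_im, Complex.mul_re, Complex.I_re, Complex.I_im,
        Complex.one_im]
      ring
    rw [hre, him]
    have hsq : (2 * Real.cos (t / 2)) ^ (2 * s)
        = (2 * Real.cos (t / 2)) ^ s * (2 * Real.cos (t / 2)) ^ s := by
      rw [show 2 * s = s + s by ring, Real.rpow_add hr]
    rw [hsq]
    nlinarith [Real.sin_sq_add_cos_sq (s * t / 2)]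
end

section
/- For s ∈ (0,1], the distance from the point 1 to the curve { (1−z)^s : |z| = 1, z ≠ 1 } equals √(1 + 2^{2s} − 2^{s+1}); for s ∈ (1,2] this distance equals 1. Here (1−z)^s uses the principal branch (defined since Re(1−z) ≥ 0 and 1−z ≠ 0 for z ≠ 1 on the circle). -/
open Complex Real Set


-- concavity of cos: σ cos ψ + (1-σ) ≤ cos (σψ)
lemma myL {σ ψ : ℝ} (h0 : 0 ≤ σ) (h1 : σ ≤ 1) (hψ0 : 0 ≤ ψ) (hψ : ψ ≤ π/2) :
    σ * Real.cos ψ + (1 - σ) ≤ Real.cos (σ * ψ) := by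
  have hmem : ψ ∈ Icc (-(π/2)) (π/2) := ⟨by linarith [Real.pi_pos], hψ⟩
  have hmem0 : (0:ℝ) ∈ Icc (-(π/2)) (π/2) := ⟨by linarith [Real.pi_pos], by linarith [Real.pi_pos]⟩
  have := strictConcaveOn_cos_Icc.concaveOn.2 hmem hmem0 h0
    (show (0:ℝ) ≤ 1 - σ by linarith) (show σ + (1 - σ) = 1 by ring)
  simpa [smul_eq_mul] using this

lemma myR {σ ψ : ℝ} (h0 : 0 ≤ σ) (h1 : σ ≤ 1) (hψ0 : 0 ≤ ψ) (hψ : ψ ≤ π/2) :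
    Real.cos ψ ^ σ ≤ Real.cos (σ * ψ) := by
  have hc : 0 ≤ Real.cos ψ := Real.cos_nonneg_of_mem_Icc ⟨by linarith [Real.pi_pos], hψ⟩
  have h := Real.geom_mean_le_arith_mean2_weighted h0 (by linarith : (0:ℝ) ≤ 1 - σ)
    hc zero_le_one (by ring)
  rw [Real.one_rpow, mul_one, mul_one] at h
  calc Real.cos ψ ^ σ ≤ σ * Real.cos ψ + (1 - σ) := h
    _ ≤ Real.cos (σ * ψ) := myL h0 h1 hψ0 hψ

lemma myQ {σ ψ : ℝ} (h0 : 0 ≤ σ) (h1 : σ ≤ 1) (hψ0 : 0 ≤ ψ) (hψ : ψ ≤ π/2) :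
    (2 * Real.cos ψ) ^ σ ≤ 2 * Real.cos (σ * ψ) := by
  have hc : 0 ≤ Real.cos ψ := Real.cos_nonneg_of_mem_Icc ⟨by linarith [Real.pi_pos], hψ⟩
  rw [Real.mul_rpow (by norm_num) hc]
  have h2 : (2:ℝ) ^ σ ≤ 2 := by
    calc (2:ℝ) ^ σ ≤ 2 ^ (1:ℝ) := Real.rpow_le_rpow_of_exponent_le one_le_two h1
    _ = 2 := Real.rpow_one 2
  exact mul_le_mul h2 (myR h0 h1 hψ0 hψ) (Real.rpow_nonneg hc σ) (by norm_num)

lemma myK {s φ : ℝ} (h0 : 0 ≤ s) (h1 : s ≤ 1) (hφ0 : 0 ≤ φ) (hφ : φ < π/2) :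
    Real.sin φ * (2 * Real.cos φ) ^ s ≤ Real.sin ((1+s) * φ) := by
  have hsin : 0 ≤ Real.sin φ := Real.sin_nonneg_of_nonneg_of_le_pi hφ0 (by linarith [Real.pi_pos])
  have hc : 0 ≤ Real.cos φ := Real.cos_nonneg_of_mem_Icc ⟨by linarith [Real.pi_pos], hφ.le⟩
  have bern : (2 * Real.cos φ) ^ s ≤ s * (2 * Real.cos φ) + (1 - s) := by
    have h := Real.geom_mean_le_arith_mean2_weighted h0 (by linarith : (0:ℝ) ≤ 1 - s)
      (by linarith : (0:ℝ) ≤ 2 * Real.cos φ) zero_le_one (by ring)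
    rw [Real.one_rpow, mul_one, mul_one] at h
    exact h
  have step1 : Real.sin φ * (2 * Real.cos φ) ^ s
      ≤ (1-s) * Real.sin φ + s * Real.sin (2*φ) := by
    have := mul_le_mul_of_nonneg_left bern hsin
    rw [Real.sin_two_mul]
    nlinarith
  have hmem1 : φ ∈ Icc (0:ℝ) π := ⟨hφ0, by linarith [Real.pi_pos]⟩
  have hmem2 : 2*φ ∈ Icc (0:ℝ) π := ⟨by linarith, by linarith⟩
  have conc := strictConcaveOn_sin_Icc.concaveOn.2 hmem1 hmem2
    (show (0:ℝ) ≤ 1 - s by linarith) h0 (show (1 - s) + s = 1 by ring)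
  rw [smul_eq_mul, smul_eq_mul, smul_eq_mul, smul_eq_mul] at conc
  have heq : (1-s) * φ + s * (2*φ) = (1+s) * φ := by ring
  rw [heq] at conc
  linarith

open Complex Real Set

noncomputable def myF (s φ : ℝ) : ℝ :=
  (2 * Real.cos φ) ^ (2*s) - 2 * ((2 * Real.cos φ) ^ s * Real.cos (s * φ)) + 1

lemma myF_hasDeriv (s : ℝ) {φ : ℝ} (hc : 0 < Real.cos φ) :
    HasDerivAt (myF s)
      ((2*s) * (2*Real.cos φ)^(2*s-1) * (2 * -Real.sin φ)
        - 2 * ((s * (2*Real.cos φ)^(s-1) * (2 * -Real.sin φ)) * Real.cos (s*φ)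
              + (2*Real.cos φ)^s * (-Real.sin (s*φ) * s))) φ := by
  have hB : (2 * Real.cos φ) ≠ 0 := by positivity
  have h2c : HasDerivAt (fun x : ℝ => 2 * Real.cos x) (2 * -Real.sin φ) φ :=
    (Real.hasDerivAt_cos φ).const_mul 2
  have hr1 : HasDerivAt (fun x : ℝ => x ^ (2*s)) ((2*s) * (2*Real.cos φ)^(2*s-1))
      (2*Real.cos φ) := Real.hasDerivAt_rpow_const (Or.inl hB)
  have hA : HasDerivAt (fun x : ℝ => (2 * Real.cos x) ^ (2*s))
      ((2*s) * (2*Real.cos φ)^(2*s-1) * (2 * -Real.sin φ)) φ := by have := hr1.comp φ h2c; exact this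
  have hr2 : HasDerivAt (fun x : ℝ => x ^ s) (s * (2*Real.cos φ)^(s-1))
      (2*Real.cos φ) := Real.hasDerivAt_rpow_const (Or.inl hB)
  have hB1 : HasDerivAt (fun x : ℝ => (2 * Real.cos x) ^ s)
      (s * (2*Real.cos φ)^(s-1) * (2 * -Real.sin φ)) φ := by have := hr2.comp φ h2c; exact this
  have hsφ : HasDerivAt (fun x : ℝ => s * x) s φ := by
    simpa using (hasDerivAt_id φ).const_mul s
  have hcos : HasDerivAt (fun x : ℝ => Real.cos (s * x)) (-Real.sin (s*φ) * s) φ :=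
    (Real.hasDerivAt_cos (s*φ)).comp φ hsφ
  have hprod : HasDerivAt (fun x : ℝ => (2 * Real.cos x) ^ s * Real.cos (s * x))
      ((s * (2*Real.cos φ)^(s-1) * (2 * -Real.sin φ)) * Real.cos (s*φ)
        + (2*Real.cos φ)^s * (-Real.sin (s*φ) * s)) φ := hB1.mul hcos
  exact (hA.sub (hprod.const_mul 2)).add_const 1

lemma myF_contAt (s : ℝ) (hs : 0 < s) (φ : ℝ) : ContinuousAt (myF s) φ := by
  have h1 : ContinuousAt (fun x : ℝ => (2 * Real.cos x) ^ (2*s)) φ := by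
    apply ContinuousAt.rpow_const (by fun_prop)
    right; positivity
  have h2 : ContinuousAt (fun x : ℝ => (2 * Real.cos x) ^ s) φ := by
    apply ContinuousAt.rpow_const (by fun_prop)
    right; positivity
  have h3 : ContinuousAt (fun x : ℝ => Real.cos (s * x)) φ := by fun_prop
  exact ((h1.sub ((h2.mul h3).const_mul 2)).add continuousAt_const)

lemma myF_mono {s : ℝ} (hs0 : 0 < s) (hs1 : s ≤ 1) :
    MonotoneOn (myF s) (Ico 0 (π/2)) := by
  apply monotoneOn_of_deriv_nonneg (convex_Ico _ _)
    (fun x _ => (myF_contAt s hs0 x).continuousWithinAt)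
  · intro x hx
    rw [interior_Ico] at hx
    have hcx : 0 < Real.cos x := Real.cos_pos_of_mem_Ioo ⟨by linarith [Real.pi_pos, hx.1], hx.2⟩
    exact (myF_hasDeriv s hcx).differentiableAt.differentiableWithinAt
  · intro x hx
    rw [interior_Ico] at hx
    have hcx : 0 < Real.cos x := Real.cos_pos_of_mem_Ioo ⟨by linarith [Real.pi_pos, hx.1], hx.2⟩
    rw [(myF_hasDeriv s hcx).deriv]
    set B := 2 * Real.cos x with hBdef
    have hB : 0 < B := by positivity
    have e1 : B ^ (2*s-1) = B ^ (s-1) * B ^ s := by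
      rw [← Real.rpow_add hB]; congr 1; ring
    have e2 : B ^ s = B ^ (s-1) * B := by
      rw [← Real.rpow_add_one hB.ne' (s-1)]; congr 1; ring
    have key : Real.sin x * B ^ s ≤ Real.sin ((1+s) * x) :=
      myK hs0.le hs1 hx.1.le hx.2
    rw [show (1+s) * x = x + s*x by ring, Real.sin_add] at key
    have hC : (0:ℝ) ≤ B ^ (s-1) := Real.rpow_nonneg hB.le _
    have expand : (2*s) * B^(2*s-1) * (2 * -Real.sin x)
        - 2 * ((s * B^(s-1) * (2 * -Real.sin x)) * Real.cos (s*x)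
              + B^s * (-Real.sin (s*x) * s))
        = (4*s*B^(s-1)) * ((Real.sin x * Real.cos (s*x) + Real.cos x * Real.sin (s*x))
            - Real.sin x * B^s) := by
      rw [e1, e2, hBdef]; ring
    have hpos : (0:ℝ) ≤ (4*s*B^(s-1)) * ((Real.sin x * Real.cos (s*x)
        + Real.cos x * Real.sin (s*x)) - Real.sin x * B^s) :=
      mul_nonneg (by positivity) (by linarith [key])
    linarith [hpos, expand]


lemma myF_even (s φ : ℝ) : myF s (-φ) = myF s φ := by
  simp [myF, mul_comm, Real.cos_neg, mul_neg]

lemma myF_ge1 {s φ : ℝ} (hs0 : 0 < s) (hs1 : s ≤ 1) (hφ : |φ| < π/2) :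
    ((2:ℝ)^s - 1)^2 ≤ myF s φ := by
  have habs : myF s φ = myF s |φ| := by
    rcases abs_cases φ with ⟨h, _⟩ | ⟨h, _⟩
    · rw [h]
    · rw [h, myF_even]
  have hmem : |φ| ∈ Ico (0:ℝ) (π/2) := ⟨abs_nonneg φ, hφ⟩
  have hmem0 : (0:ℝ) ∈ Ico (0:ℝ) (π/2) := ⟨le_refl 0, by positivity⟩
  have hmono := myF_mono hs0 hs1 hmem0 hmem (abs_nonneg φ)
  have h0 : myF s 0 = ((2:ℝ)^s - 1)^2 := by
    have h2 : (2:ℝ) ^ (2*s) = (2:ℝ)^s * (2:ℝ)^s := by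
      rw [two_mul, Real.rpow_add two_pos]
    simp only [myF, Real.cos_zero, mul_one, mul_zero]
    rw [h2]; ring
  rw [habs]; rw [h0] at hmono; linarith

lemma myF_ge2 {s φ : ℝ} (hs1 : 1 < s) (hs2 : s ≤ 2) (hφ : |φ| < π/2) :
    (1:ℝ) ≤ myF s φ := by
  have hs0 : (0:ℝ) < s := by linarith
  have habs : myF s φ = myF s |φ| := by
    rcases abs_cases φ with ⟨h, _⟩ | ⟨h, _⟩
    · rw [h]
    · rw [h, myF_even]
  rw [habs]
  set x := |φ| with hx
  have hx0 : 0 ≤ x := abs_nonneg φ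
  have hx2 : x < π/2 := hφ
  have hcx : 0 < Real.cos x := Real.cos_pos_of_mem_Ioo ⟨by linarith [Real.pi_pos], hx2⟩
  set B := 2 * Real.cos x with hB
  have hBpos : 0 < B := by positivity
  have key : 2 * (B ^ s * Real.cos (s * x)) ≤ B ^ (2*s) := by
    rcases le_or_gt (Real.cos (s*x)) 0 with hneg | hpos
    · have : 2 * (B ^ s * Real.cos (s*x)) ≤ 0 := by
        have : 0 ≤ B ^ s := Real.rpow_nonneg hBpos.le s
        nlinarith
      calc 2 * (B^s * Real.cos (s*x)) ≤ 0 := this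
        _ ≤ B ^ (2*s) := Real.rpow_nonneg hBpos.le _
    · -- cos (s x) > 0, and s*x ∈ [0, π) so s*x < π/2
      have hsxlt : s * x < π/2 := by
        by_contra h
        push_neg at h
        have : Real.cos (s*x) ≤ 0 :=
          Real.cos_nonpos_of_pi_div_two_le_of_le h (by nlinarith [Real.pi_pos])
        linarith
      have hq := myQ (show (0:ℝ) ≤ 1/s by positivity)
        (show 1/s ≤ 1 by rw [div_le_one hs0]; linarith)
        (show 0 ≤ s * x by positivity) hsxlt.le
      -- hq : (2 * cos (s*x)) ^ (1/s) ≤ 2 * cos ((1/s) * (s*x))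
      have harg : (1/s) * (s*x) = x := by field_simp
      rw [harg] at hq
      have hcs : 0 ≤ 2 * Real.cos (s*x) := by linarith
      have hq2 : 2 * Real.cos (s*x) ≤ B ^ s := by
        have h := Real.rpow_le_rpow (Real.rpow_nonneg hcs (1/s)) hq hs0.le
        rw [← Real.rpow_mul hcs, one_div, inv_mul_cancel₀ hs0.ne', Real.rpow_one] at h
        exact h
      have hBs : 0 ≤ B ^ s := Real.rpow_nonneg hBpos.le s
      have h2s : B ^ (2*s) = B ^ s * B ^ s := by
        rw [two_mul, Real.rpow_add hBpos]
      nlinarith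
  simp only [myF]
  linarith


lemma myMain {s : ℝ} (hs : 0 < s) {z : ℂ} (hz : ‖z‖ = 1) (hz1 : z ≠ 1) :
    |Complex.arg (1 - z)| < π/2 ∧
    (‖(1 - z) ^ (s:ℂ) - 1‖)^2 = myF s (Complex.arg (1 - z)) := by
  have hu : (1 : ℂ) - z ≠ 0 := sub_ne_zero.mpr (Ne.symm hz1)
  set u : ℂ := 1 - z with hudef
  set r := ‖u‖ with hrdef
  set φ := Complex.arg u with hφdef
  have hr : 0 < r := norm_pos_iff.mpr hu
  have hzre : z.re ≤ 1 := by
    have h := Complex.abs_re_le_norm z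
    rw [hz] at h
    exact (abs_le.1 h).2
  have hure : u.re = 1 - z.re := by simp [hudef]
  have hre : 0 ≤ u.re := by rw [hure]; linarith
  have hφle : |φ| ≤ π/2 := Complex.abs_arg_le_pi_div_two_iff.mpr hre
  have hcos : Real.cos φ = u.re / r := Complex.cos_arg hu
  have hcosr : Real.cos φ * r = u.re := by rw [hcos]; field_simp
  have hz2 : z.re^2 + z.im^2 = 1 := by
    have h := Complex.sq_norm z
    rw [hz] at h
    rw [Complex.normSq_apply] at h
    nlinarith
  have hnormsq : r^2 = 2 * u.re := by
    rw [hrdef, Complex.sq_norm, Complex.normSq_apply]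
    have h1 : u.im = -z.im := by simp [hudef]
    rw [hure, h1]
    nlinarith
  have hrcos : r = 2 * Real.cos φ := by
    have h3 : (r - 2*Real.cos φ) * r = 0 := by linear_combination hnormsq - 2*hcosr
    rcases mul_eq_zero.1 h3 with h | h
    · linarith
    · exact absurd h hr.ne'
  have hcosφpos : 0 < Real.cos φ := by linarith
  have hφlt : |φ| < π/2 := by
    rcases lt_or_eq_of_le hφle with h | h
    · exact h
    · exfalso
      have : Real.cos φ = 0 := by rw [← Real.cos_abs, h, Real.cos_pi_div_two]
      linarith
  refine ⟨hφlt, ?_⟩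
  have hcpow : u ^ (s:ℂ) = ((r ^ s : ℝ) : ℂ) * Complex.exp (((s * φ : ℝ) : ℂ) * I) := by
    rw [Complex.cpow_def_of_ne_zero hu]
    have hlog : Complex.log u = ((Real.log r : ℝ) : ℂ) + ((φ : ℝ) : ℂ) * I := rfl
    rw [hlog, add_mul, Complex.exp_add]
    congr 1
    · rw [show ((Real.log r : ℝ) : ℂ) * (s : ℂ) = ((Real.log r * s : ℝ) : ℂ) by push_cast; ring,
        ← Complex.ofReal_exp, ← Real.rpow_def_of_pos hr]
    · congr 1
      push_cast
      ring
  have hw : u ^ (s:ℂ) - 1 = Complex.ofReal (r^s * Real.cos (s*φ) - 1)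
      + Complex.ofReal (r^s * Real.sin (s*φ)) * I := by
    rw [hcpow, Complex.exp_mul_I, ← Complex.ofReal_cos, ← Complex.ofReal_sin]
    push_cast
    ring
  have habs2 : (‖u^(s:ℂ) - 1‖)^2
      = (r^s * Real.cos (s*φ) - 1)^2 + (r^s * Real.sin (s*φ))^2 := by
    have hre' : (u^(s:ℂ) - 1).re = r^s * Real.cos (s*φ) - 1 := by
      rw [hw]
      simp only [Complex.add_re, Complex.ofReal_re, Complex.mul_re, Complex.ofReal_im,
        Complex.I_re, Complex.I_im]
      ring
    have him' : (u^(s:ℂ) - 1).im = r^s * Real.sin (s*φ) := by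
      rw [hw]
      simp only [Complex.add_im, Complex.ofReal_im, Complex.mul_im, Complex.ofReal_re,
        Complex.I_re, Complex.I_im]
      ring
    rw [Complex.sq_norm, Complex.normSq_apply, hre', him']
    ring
  rw [habs2, myF, ← hrcos]
  have hr2s : r ^ (2*s) = r^s * r^s := by rw [two_mul, Real.rpow_add hr]
  rw [hr2s]
  linear_combination (r^s)^2 * (Real.sin_sq_add_cos_sq (s*φ))


theorem stmt15 (s : ℝ) (hs0 : 0 < s) (hs2 : s ≤ 2) :
    (s ≤ 1 →
      sInf {d : ℝ | ∃ z : ℂ, ‖z‖ = 1 ∧ z ≠ 1 ∧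
          d = ‖(1 - z) ^ (s : ℂ) - 1‖} =
        Real.sqrt (1 + 2 ^ (2 * s) - 2 ^ (s + 1))) ∧
    (1 < s →
      sInf {d : ℝ | ∃ z : ℂ, ‖z‖ = 1 ∧ z ≠ 1 ∧
          d = ‖(1 - z) ^ (s : ℂ) - 1‖} = 1) := by
  have hone : (1:ℝ) ≤ (2:ℝ) ^ s := by
    calc (1:ℝ) = (2:ℝ) ^ (0:ℝ) := (Real.rpow_zero 2).symm
    _ ≤ (2:ℝ) ^ s := Real.rpow_le_rpow_of_exponent_le one_le_two hs0.le
  have hmem : ((2:ℝ)^s - 1) ∈ {d : ℝ | ∃ z : ℂ, ‖z‖ = 1 ∧ z ≠ 1 ∧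
      d = ‖(1 - z) ^ (s : ℂ) - 1‖} := by
    refine ⟨-1, by simp, by norm_num, ?_⟩
    have h2 : (1:ℂ) - (-1) = ((2:ℝ):ℂ) := by norm_num
    rw [h2, ← Complex.ofReal_cpow (by norm_num : (0:ℝ) ≤ 2) s]
    rw [show (((2:ℝ)^s : ℝ):ℂ) - 1 = (((2:ℝ)^s - 1 : ℝ):ℂ) by push_cast; ring]
    rw [Complex.norm_real, Real.norm_eq_abs, _root_.abs_of_nonneg (show (0:ℝ) ≤ 2^s - 1 by linarith)]
  have hbdd : BddBelow {d : ℝ | ∃ z : ℂ, ‖z‖ = 1 ∧ z ≠ 1 ∧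
      d = ‖(1 - z) ^ (s : ℂ) - 1‖} := by
    refine ⟨0, fun d hd => ?_⟩
    obtain ⟨z, _, _, rfl⟩ := hd
    exact norm_nonneg _
  constructor
  · intro hs1
    have hsqrt : Real.sqrt (1 + 2^(2*s) - 2^(s+1)) = (2:ℝ)^s - 1 := by
      have h1 : (1:ℝ) + 2^(2*s) - 2^(s+1) = ((2:ℝ)^s - 1)^2 := by
        rw [show (2:ℝ)^(2*s) = 2^s * 2^s by rw [two_mul, Real.rpow_add two_pos],
          show (2:ℝ)^(s+1) = 2^s * 2 by rw [Real.rpow_add two_pos, Real.rpow_one]]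
        ring
      rw [h1, Real.sqrt_sq (by linarith)]
    rw [hsqrt]
    refine le_antisymm (csInf_le hbdd hmem) (le_csInf ⟨_, hmem⟩ ?_)
    rintro d ⟨z, hz, hz1, rfl⟩
    obtain ⟨hφ, heq⟩ := myMain hs0 hz hz1
    have hge := myF_ge1 hs0 hs1 hφ
    rw [← heq] at hge
    nlinarith [norm_nonneg ((1-z)^(s:ℂ) - 1)]
  · intro hs1
    refine le_antisymm ?_ (le_csInf ⟨_, hmem⟩ ?_)
    · apply le_of_forall_pos_le_add
      intro ε hε
      set m := min 1 (ε ^ (1/s)) with hm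
      have hm0 : 0 < m := lt_min one_pos (Real.rpow_pos_of_pos hε _)
      have hm1 : m ≤ 1 := min_le_left _ _
      set θ := m / 4 with hθ
      have hθ0 : 0 < θ := by positivity
      have hθ1 : θ ≤ 1 := by rw [hθ]; linarith
      set z := Complex.exp ((θ:ℂ) * I) with hzdef
      have hz : ‖z‖ = 1 := Complex.norm_exp_ofReal_mul_I θ
      have hz1 : z ≠ 1 := by
        intro h
        obtain ⟨n, hn⟩ := Complex.exp_eq_one_iff.mp h
        have hn' : (θ:ℂ) = (n:ℂ) * (2*(π:ℝ)) := by
          apply mul_right_cancel₀ Complex.I_ne_zero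
          rw [hn]; push_cast; ring
        have hθn : θ = (n:ℝ) * (2*π) := by exact_mod_cast hn'
        rcases le_or_gt (n:ℝ) 0 with h1 | h1
        · nlinarith [Real.pi_pos]
        · have : (1:ℝ) ≤ (n:ℝ) := by exact_mod_cast h1
          nlinarith [Real.pi_gt_three]
      have habsθ : ‖(θ:ℂ) * I‖ = θ := by
        rw [norm_mul, Complex.norm_I, Complex.norm_real, Real.norm_eq_abs, abs_of_pos hθ0, mul_one]
      have habs1z : ‖1 - z‖ ≤ 2*θ := by
        have h := Complex.norm_exp_sub_one_le (x := (θ:ℂ)*I) (by rw [habsθ]; exact hθ1)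
        rw [habsθ] at h
        calc ‖1 - z‖ = ‖z - 1‖ := by
              rw [show (1:ℂ) - z = -(z-1) by ring, norm_neg]
        _ ≤ 2*θ := h
      have hlt : ‖1-z‖ ^ s < ε := by
        have h1 : ‖1-z‖ ^ s ≤ (2*θ)^s :=
          Real.rpow_le_rpow (norm_nonneg _) habs1z hs0.le
        have h2 : ((2:ℝ)*θ)^s < m^s := by
          apply Real.rpow_lt_rpow (by positivity) _ hs0
          rw [hθ]; linarith
        have h3 : m^s ≤ (ε^(1/s))^s := by
          apply Real.rpow_le_rpow hm0.le (min_le_right _ _) hs0.le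
        have h4 : (ε^(1/s))^s = ε := by
          rw [← Real.rpow_mul hε.le, one_div, inv_mul_cancel₀ hs0.ne', Real.rpow_one]
        linarith
      have hd : ‖(1-z)^(s:ℂ) - 1‖ ≤ 1 + ε := by
        have htri : ‖(1-z)^(s:ℂ) - 1‖
            ≤ ‖(1-z)^(s:ℂ)‖ + 1 := by
          have := norm_sub_le ((1-z)^(s:ℂ)) 1
          simpa using this
        have hcp : ‖(1-z)^(s:ℂ)‖ = ‖1-z‖ ^ s :=
          Complex.norm_cpow_real _ _
        rw [hcp] at htri
        linarith
      calc sInf {d : ℝ | ∃ z : ℂ, ‖z‖ = 1 ∧ z ≠ 1 ∧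
            d = ‖(1 - z) ^ (s : ℂ) - 1‖}
          ≤ ‖(1-z)^(s:ℂ) - 1‖ := csInf_le hbdd ⟨z, hz, hz1, rfl⟩
        _ ≤ 1 + ε := hd
    · rintro d ⟨z, hz, hz1, rfl⟩
      obtain ⟨hφ, heq⟩ := myMain hs0 hz hz1
      have hge := myF_ge2 hs1 hs2 hφ
      rw [← heq] at hge
      nlinarith [norm_nonneg ((1-z)^(s:ℂ) - 1)]
end

section
/- Let β ∈ (0,1), n ∈ ℕ, let ζ₁,…,ζₙ be points on the unit circle, and σ₁,…,σₙ ≥ 0 with Σσⱼ = 1. Define f(z) = (1−z)·∏ⱼ (1−z ζ̄ⱼ)^{−(1−β)σⱼ} on the open unit disk (principal branch powers). Then the image f(Δ) contains the image f₀(Δ) where f₀(z) = (1−z)^β; i.e., f₀ is subordinate to f: there exists a holomorphic ω: Δ → Δ with ω(0)=0 and f₀ = f ∘ ω. -/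
open Complex Metric Set

set_option maxHeartbeats 1000000
noncomputable section

namespace Complex

/-- compatibility: the complex absolute value as an `AbsoluteValue` -/
def abs : AbsoluteValue ℂ ℝ where
  toFun z := ‖z‖
  map_mul' := norm_mul
  nonneg' := norm_nonneg
  eq_zero' _ := norm_eq_zero
  add_le' := norm_add_le

theorem abs_conj (z : ℂ) : abs ((starRingEnd ℂ) z) = abs z := Complex.norm_conj z

theorem abs_ofReal (r : ℝ) : abs (r : ℂ) = |r| := Complex.norm_real r

theorem sq_abs (z : ℂ) : abs z ^ 2 = normSq z := Complex.sq_norm z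

theorem abs_exp (z : ℂ) : abs (exp z) = Real.exp z.re := Complex.norm_exp z

theorem abs_re_le_abs (z : ℂ) : |z.re| ≤ abs z := Complex.abs_re_le_norm z

theorem continuous_abs : Continuous abs := continuous_norm

theorem abs_apply (z : ℂ) : abs z = ‖z‖ := rfl

theorem abs_le_abs_of_mapsTo_ball_self {f : ℂ → ℂ} {R : ℝ} {z : ℂ}
    (hd : DifferentiableOn ℂ f (ball 0 R)) (h_maps : MapsTo f (ball 0 R) (ball 0 R))
    (h₀ : f 0 = 0) (hz : abs z < R) : abs (f z) ≤ abs z :=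
  norm_le_norm_of_mapsTo_ball hd (h_maps.mono_right ball_subset_closedBall) h₀ hz

end Complex

namespace Stmt17

/-- Möbius map of the disk -/
def mob (a v : ℂ) : ℂ := (a - v) / (1 - (starRingEnd ℂ) a * v)

lemma normSq_identity (a v : ℂ) :
    normSq (1 - (starRingEnd ℂ) a * v) - normSq (a - v) = (1 - normSq a) * (1 - normSq v) := by
  simp only [normSq_apply, Complex.sub_re, Complex.sub_im, Complex.mul_re, Complex.mul_im,
    Complex.one_re, Complex.one_im, Complex.conj_re, Complex.conj_im]
  ring

lemma denom_ne_zero {a v : ℂ} (ha : abs a < 1) (hv : abs v < 1) :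
    1 - (starRingEnd ℂ) a * v ≠ 0 := by
  intro h
  have h1 : (1 : ℂ) = (starRingEnd ℂ) a * v := by linear_combination h
  have : (1:ℝ) = abs ((starRingEnd ℂ) a * v) := by rw [← h1]; simp
  rw [map_mul, Complex.abs_conj] at this
  nlinarith [Complex.abs.nonneg a, Complex.abs.nonneg v]

lemma abs_denom_pos {a v : ℂ} (ha : abs a < 1) (hv : abs v < 1) :
    0 < abs (1 - (starRingEnd ℂ) a * v) :=
  (Complex.abs.pos_iff).2 (denom_ne_zero ha hv)

lemma mob_mem {a v : ℂ} (ha : abs a < 1) (hv : abs v < 1) : abs (mob a v) < 1 := by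
  rw [mob, map_div₀, div_lt_one (abs_denom_pos ha hv)]
  have h := normSq_identity a v
  have h1 : normSq a < 1 := by rw [← Complex.sq_abs]; nlinarith [Complex.abs.nonneg a]
  have h2 : normSq v < 1 := by rw [← Complex.sq_abs]; nlinarith [Complex.abs.nonneg v]
  have : normSq (a - v) < normSq (1 - (starRingEnd ℂ) a * v) := by nlinarith
  have h3 : (abs (a-v))^2 < (abs (1 - (starRingEnd ℂ) a * v))^2 := by
    rwa [Complex.sq_abs, Complex.sq_abs]
  nlinarith [Complex.abs.nonneg (a - v), abs_denom_pos ha hv]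

lemma mob_self (a : ℂ) : mob a a = 0 := by simp [mob]

lemma mob_mob {a v : ℂ} (ha : abs a < 1) (hv : abs v < 1) : mob a (mob a v) = v := by
  have h1 : 1 - (starRingEnd ℂ) a * v ≠ 0 := denom_ne_zero ha hv
  have h2 : 1 - (starRingEnd ℂ) a * mob a v ≠ 0 := denom_ne_zero ha (mob_mem ha hv)
  rw [mob, div_eq_iff h2]
  rw [mob] at h2 ⊢
  field_simp at h2 ⊢
  ring

lemma hasDerivAt_mob (x : ℂ) {u : ℂ} (h : 1 - (starRingEnd ℂ) x * u ≠ 0) :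
    HasDerivAt (mob x) ((normSq x - 1)/(1 - (starRingEnd ℂ) x * u)^2) u := by
  have h1 : HasDerivAt (fun v => x - v) (-1) u := by
    simpa using ((hasDerivAt_id u).const_sub x)
  have h2 : HasDerivAt (fun v => 1 - (starRingEnd ℂ) x * v) (-((starRingEnd ℂ) x)) u := by
    simpa using ((hasDerivAt_id u).const_mul ((starRingEnd ℂ) x)).const_sub 1
  have := h1.div h2 h
  refine this.congr_deriv ?_
  have : (starRingEnd ℂ) x * x = (normSq x : ℂ) := by
    rw [mul_comm, Complex.mul_conj]
  rw [div_left_inj' (pow_ne_zero 2 h)]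
  linear_combination (1 : ℂ) * this

lemma differentiableOn_mob {x : ℂ} (hx : abs x < 1) :
    DifferentiableOn ℂ (mob x) (ball (0:ℂ) 1) := by
  intro v hv
  rw [mem_ball_zero_iff] at hv
  exact ((hasDerivAt_mob x (denom_ne_zero hx hv)).differentiableAt).differentiableWithinAt

lemma le_of_sq_le_sq {A B : ℝ} (hB : 0 ≤ B) (h : A^2 ≤ B^2) (hA : 0 ≤ A) : A ≤ B := by
  nlinarith [mul_self_nonneg (A - B), mul_self_nonneg (A + B)]

lemma abs_eq_norm (z : ℂ) : abs z = ‖z‖ := rfl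

/-- pseudo-hyperbolic triangle bound: if `ρ(y,x) ≤ t` and `|y| ≤ c` then `|x| ≤ (c+t)/(1+ct)`. -/
lemma triangle_bound {x y : ℂ} {c t : ℝ} (hx : abs x < 1) (hy : abs y < 1)
    (hyc : abs y ≤ c) (hc : c < 1) (h : abs (mob y x) ≤ t) (ht0 : 0 ≤ t) (ht : t < 1) :
    abs x ≤ (c + t)/(1 + c*t) := by
  have hc0 : (0:ℝ) ≤ c := le_trans (Complex.abs.nonneg y) hyc
  set p := abs y with hp
  set q := abs x with hq
  set d := abs (y - x) with hd
  set m := abs (1 - (starRingEnd ℂ) y * x) with hm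
  have hm0 : 0 < m := abs_denom_pos hy hx
  have hmsq : m^2 = d^2 + (1 - p^2)*(1 - q^2) := by
    have h0 := normSq_identity y x
    rw [← Complex.sq_abs, ← Complex.sq_abs, ← Complex.sq_abs, ← Complex.sq_abs] at h0
    nlinarith [h0]
  have hd0 : 0 ≤ d := Complex.abs.nonneg _
  have hp0 : 0 ≤ p := Complex.abs.nonneg _
  have hq0 : 0 ≤ q := Complex.abs.nonneg _
  have hdqp : q - p ≤ d := by
    have h1 : ‖x‖ - ‖y‖ ≤ ‖x - y‖ := norm_sub_norm_le x y
    have h2 : ‖x - y‖ = ‖y - x‖ := norm_sub_rev x y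
    rw [h2] at h1
    exact h1
  have key : (q - p) * m ≤ d * (1 - p*q) := by
    rcases le_or_gt q p with hqp | hqp
    · have h1 : (q-p)*m ≤ 0 := mul_nonpos_of_nonpos_of_nonneg (by linarith) hm0.le
      have h2 : (0:ℝ) ≤ d*(1-p*q) := mul_nonneg hd0 (by nlinarith)
      linarith
    · have expand : (d*(1-p*q))^2 - ((q-p)*m)^2
          = (d^2 - (q-p)^2)*(1-p^2)*(1-q^2) := by
        linear_combination (-((q-p)^2)) * hmsq
      have h1 : (q-p)^2 ≤ d^2 := by nlinarith
      have pos : (0:ℝ) ≤ (d^2 - (q-p)^2)*(1-p^2)*(1-q^2) :=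
        mul_nonneg (mul_nonneg (by linarith) (by nlinarith)) (by nlinarith)
      have hsq : ((q-p)*m)^2 ≤ (d*(1-p*q))^2 := by linarith [expand, pos]
      have h2 : 0 ≤ d * (1 - p*q) := mul_nonneg hd0 (by nlinarith)
      exact le_of_sq_le_sq h2 hsq (mul_nonneg (by linarith) hm0.le)
  have habs : abs (mob y x) = d / m := by rw [mob, map_div₀]
  have hdt : d ≤ t * m := by
    rw [habs, div_le_iff₀ hm0] at h; linarith
  have step : q - p ≤ t * (1 - p*q) := by
    have h3 : (q - p) * m ≤ t * (1 - p*q) * m := by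
      calc (q-p)*m ≤ d*(1-p*q) := key
        _ ≤ t*m*(1-p*q) := by
              have hpq : (0:ℝ) ≤ 1 - p*q := by nlinarith
              exact mul_le_mul_of_nonneg_right hdt hpq
        _ = t*(1-p*q)*m := by ring
    exact le_of_mul_le_mul_right h3 hm0
  have h1tp : 0 < 1 + c*t := by nlinarith
  rw [le_div_iff₀ h1tp]
  nlinarith [mul_nonneg (sub_nonneg.2 hyc) (show (0:ℝ) ≤ 1 - q*t by nlinarith),
    mul_nonneg ht0 hq0]

/-- diameter bound: two points of the `r`-ball have pseudo-distance `≤ 2r/(1+r²)`. -/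
lemma rho_le_of_mem {a b : ℂ} {r : ℝ} (ha : abs a ≤ r) (hb : abs b ≤ r) (hr : r < 1) :
    abs (mob b a) ≤ 2*r/(1+r^2) := by
  have hr0 : 0 ≤ r := le_trans (Complex.abs.nonneg a) ha
  have ha1 : abs a < 1 := lt_of_le_of_lt ha hr
  have hb1 : abs b < 1 := lt_of_le_of_lt hb hr
  set d := abs (b - a) with hd
  set m := abs (1 - (starRingEnd ℂ) b * a) with hm
  have hm0 : 0 < m := abs_denom_pos hb1 ha1
  have hmsq : m^2 = d^2 + (1 - (abs b)^2)*(1 - (abs a)^2) := by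
    have h0 := normSq_identity b a
    rw [← Complex.sq_abs, ← Complex.sq_abs, ← Complex.sq_abs, ← Complex.sq_abs] at h0
    nlinarith [h0]
  have hd0 : 0 ≤ d := Complex.abs.nonneg _
  have hd2r : d ≤ 2*r := by
    have h1 : ‖b - a‖ ≤ ‖b‖ + ‖a‖ := norm_sub_le b a
    have h2 : d ≤ abs b + abs a := h1
    linarith
  have hmlow : d^2 + (1-r^2)^2 ≤ m^2 := by
    have h1 : (1 - r^2) ≤ 1 - (abs b)^2 := by nlinarith [Complex.abs.nonneg b]
    have h2 : (1 - r^2) ≤ 1 - (abs a)^2 := by nlinarith [Complex.abs.nonneg a]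
    have h3 : (0:ℝ) ≤ 1 - r^2 := by nlinarith
    nlinarith
  have h4 : d^2 ≤ (2*r)^2 := by nlinarith
  have hsq : (d*(1+r^2))^2 ≤ (2*r*m)^2 := by
    nlinarith [mul_le_mul_of_nonneg_left hmlow (by positivity : (0:ℝ) ≤ 4*r^2),
      mul_nonneg (sub_nonneg.2 h4) (sq_nonneg (1-r^2))]
  have habs : abs (mob b a) = d / m := by rw [mob, map_div₀]
  rw [habs, div_le_div_iff₀ hm0 (by nlinarith : (0:ℝ) < 1 + r^2)]
  have := le_of_sq_le_sq (mul_nonneg (mul_nonneg (by norm_num) hr0) hm0.le) hsq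
    (mul_nonneg hd0 (by nlinarith))
  linarith

open Real in
lemma concave_log_two_cos : ConcaveOn ℝ (Ioo (-(π/2)) (π/2)) (fun y => Real.log (2 * Real.cos y)) := by
  have hconv : Convex ℝ (Ioo (-(π/2):ℝ) (π/2)) := convex_Ioo _ _
  have hder : ∀ y ∈ Ioo (-(π/2):ℝ) (π/2),
      deriv (fun y => Real.log (2 * Real.cos y)) y = -Real.sin y / Real.cos y := by
    intro y hy
    have hc : 0 < Real.cos y := Real.cos_pos_of_mem_Ioo hy
    have h1 : HasDerivAt (fun t => 2 * Real.cos t) (2 * (-Real.sin y)) y :=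
      (Real.hasDerivAt_cos y).const_mul 2
    have h2 := h1.log (by positivity)
    rw [h2.deriv]
    field_simp
  apply concaveOn_of_deriv2_nonpos hconv
  · apply ContinuousOn.log
    · exact (continuous_const.mul Real.continuous_cos).continuousOn
    · intro x hx
      have : 0 < Real.cos x := Real.cos_pos_of_mem_Ioo hx
      positivity
  · rw [interior_Ioo]
    intro x hx
    have hc : 0 < Real.cos x := Real.cos_pos_of_mem_Ioo hx
    have h1 : HasDerivAt (fun y => 2 * Real.cos y) (2 * (-Real.sin x)) x :=
      (Real.hasDerivAt_cos x).const_mul 2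
    exact ((h1.log (by positivity)).differentiableAt).differentiableWithinAt
  · rw [interior_Ioo]
    apply DifferentiableOn.congr (f := fun y => -Real.sin y / Real.cos y)
    · intro y hy
      have hc : 0 < Real.cos y := Real.cos_pos_of_mem_Ioo hy
      exact ((Real.differentiable_sin y).neg.div (Real.differentiable_cos y)
        hc.ne').differentiableWithinAt
    · exact hder
  · rw [interior_Ioo]
    intro x hx
    have hc : 0 < Real.cos x := Real.cos_pos_of_mem_Ioo hx
    have hiter : deriv^[2] (fun y => Real.log (2 * Real.cos y)) x
        = deriv (deriv (fun y => Real.log (2 * Real.cos y))) x := by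
      simp [Function.iterate_succ_apply']
    rw [hiter]
    have hEv : deriv (fun y => Real.log (2 * Real.cos y))
        =ᶠ[nhds x] (fun y => -Real.sin y / Real.cos y) := by
      filter_upwards [Ioo_mem_nhds hx.1 hx.2] with y hy using hder y hy
    rw [hEv.deriv_eq]
    have hg : HasDerivAt (fun y => -Real.sin y / Real.cos y)
        ((-Real.cos x * Real.cos x - -Real.sin x * -Real.sin x)/(Real.cos x)^2) x :=
      (Real.hasDerivAt_sin x).neg.div (Real.hasDerivAt_cos x) hc.ne'
    rw [hg.deriv]
    apply div_nonpos_of_nonpos_of_nonneg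
    · nlinarith [Real.sin_sq_add_cos_sq x]
    · positivity

open Real in
lemma unit_facts {u : ℂ} (hu : abs (1 - u) < 1) :
    u ≠ 0 ∧ 0 < u.re ∧ |(Complex.log u).im| < π/2 ∧
      Real.exp ((Complex.log u).re) < 2*Real.cos ((Complex.log u).im) := by
  have hne : u ≠ 0 := by
    rintro rfl; simp at hu
  have habs : 0 < abs u := Complex.abs.pos hne
  have hn : normSq (1 - u) < 1 := by
    rw [← Complex.sq_abs]; nlinarith [Complex.abs.nonneg (1-u)]
  have hexpand : normSq (1 - u) = 1 - 2*u.re + normSq u := by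
    simp only [normSq_apply, Complex.sub_re, Complex.sub_im, Complex.one_re, Complex.one_im]
    ring
  have hre : 0 < u.re := by
    have h1 : 0 < normSq u := normSq_pos.2 hne
    nlinarith
  have harg : |(Complex.log u).im| < π/2 := by
    rw [Complex.log_im]
    exact Complex.abs_arg_lt_pi_div_two_iff.2 (Or.inl hre)
  refine ⟨hne, hre, harg, ?_⟩
  rw [Complex.log_re, Complex.log_im, show ‖u‖ = Complex.abs u from rfl, Real.exp_log habs]
  have hcos : Real.cos (Complex.arg u) = u.re / abs u := Complex.cos_arg hne
  rw [hcos]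
  have h2 : (abs u)^2 = normSq u := Complex.sq_abs u
  rw [show 2*(u.re/Complex.abs u) = (2*u.re)/Complex.abs u by ring, lt_div_iff₀ habs]
  nlinarith

open Real in
lemma main_ineq {m : ℕ} (t : Fin m → ℝ) (u : Fin m → ℂ) (ht : ∀ i, 0 ≤ t i)
    (ht1 : ∑ i, t i = 1) (hu : ∀ i, abs (1 - u i) < 1) :
    Real.exp (∑ i, t i * (Complex.log (u i)).re) < 2 * Real.cos (∑ i, t i * (Complex.log (u i)).im) := by
  set x := fun i => (Complex.log (u i)).re with hx
  set y := fun i => (Complex.log (u i)).im with hy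
  have hfacts := fun i => unit_facts (hu i)
  have hymem : ∀ i, y i ∈ Ioo (-(π/2):ℝ) (π/2) := by
    intro i
    have := (hfacts i).2.2.1
    rw [abs_lt] at this
    exact ⟨this.1, this.2⟩
  have hYmem : (∑ i, t i * y i) ∈ Ioo (-(π/2):ℝ) (π/2) := by
    have := (convex_Ioo (-(π/2):ℝ) (π/2)).sum_mem (fun i _ => ht i) ht1 (fun i _ => hymem i)
    simpa using this
  have hcosY : 0 < Real.cos (∑ i, t i * y i) := Real.cos_pos_of_mem_Ioo hYmem
  -- Jensen
  have hjensen : ∑ i, t i * Real.log (2 * Real.cos (y i)) ≤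
      Real.log (2 * Real.cos (∑ i, t i * y i)) := by
    have := concave_log_two_cos.le_map_sum (t := Finset.univ) (w := t) (p := y)
      (fun i _ => ht i) ht1 (fun i _ => hymem i)
    simpa using this
  -- strict comparison of x i with log(2 cos y i)
  have hxi : ∀ i, x i < Real.log (2 * Real.cos (y i)) := by
    intro i
    have h1 := (hfacts i).2.2.2
    have hcos : 0 < Real.cos (y i) := Real.cos_pos_of_mem_Ioo (hymem i)
    have := Real.log_lt_log (Real.exp_pos _) h1
    rwa [Real.log_exp] at this
  have hex : ∃ j, 0 < t j := by
    by_contra hcon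
    push_neg at hcon
    have : ∑ i, t i = 0 := Finset.sum_eq_zero (fun i _ => le_antisymm (hcon i) (ht i))
    rw [this] at ht1; norm_num at ht1
  obtain ⟨j, hj⟩ := hex
  have hsum : ∑ i, t i * x i < ∑ i, t i * Real.log (2 * Real.cos (y i)) := by
    apply Finset.sum_lt_sum
    · intro i _
      exact mul_le_mul_of_nonneg_left (hxi i).le (ht i)
    · exact ⟨j, Finset.mem_univ j, by exact (mul_lt_mul_iff_right₀ hj).2 (hxi j)⟩
  calc Real.exp (∑ i, t i * x i) < Real.exp (∑ i, t i * Real.log (2 * Real.cos (y i))) :=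
        Real.exp_lt_exp.2 (lt_of_lt_of_le hsum le_rfl)
    _ ≤ Real.exp (Real.log (2 * Real.cos (∑ i, t i * y i))) := Real.exp_le_exp.2 hjensen
    _ = 2 * Real.cos (∑ i, t i * y i) := Real.exp_log (by positivity)

/-- the exponential part -/
def Efun (β : ℝ) {n : ℕ} (ζ : Fin n → ℂ) (σ : Fin n → ℝ) (z w : ℂ) : ℂ :=
  Complex.exp ((β:ℂ) * Complex.log (1-z)
    + ∑ j, (((1-β)*σ j : ℝ):ℂ) * Complex.log (1 - w * (starRingEnd ℂ) (ζ j)))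

def Tfun (β : ℝ) {n : ℕ} (ζ : Fin n → ℂ) (σ : Fin n → ℝ) (z w : ℂ) : ℂ :=
  1 - Efun β ζ σ z w

section Data

variable {β : ℝ} {n : ℕ} {ζ : Fin n → ℂ} {σ : Fin n → ℝ}

lemma Efun_re_im (hβ0 : 0 < β) (hβ1 : β < 1) (hζ : ∀ j, abs (ζ j) = 1)
    (hσ : ∀ j, 0 ≤ σ j) (hσ1 : ∑ j, σ j = 1) {z w : ℂ} (hz : abs z < 1) (hw : abs w < 1) :
    ∃ X Y : ℝ, Real.exp X < 2 * Real.cos Y ∧ abs (Efun β ζ σ z w) = Real.exp X ∧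
      (Efun β ζ σ z w).re = Real.exp X * Real.cos Y := by
  set t' : Fin (n+1) → ℝ := Fin.cons β (fun j => (1-β)*σ j) with ht'def
  set u' : Fin (n+1) → ℂ := Fin.cons (1-z) (fun j => 1 - w * (starRingEnd ℂ) (ζ j)) with hu'def
  have ht' : ∀ i, 0 ≤ t' i := by
    refine Fin.cases ?_ ?_
    · simpa [ht'def] using hβ0.le
    · intro j; simp only [ht'def, Fin.cons_succ]
      exact mul_nonneg (by linarith) (hσ j)
  have ht1 : ∑ i, t' i = 1 := by
    rw [Fin.sum_univ_succ]
    simp only [ht'def, Fin.cons_zero, Fin.cons_succ]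
    rw [← Finset.mul_sum, hσ1]
    ring
  have hu : ∀ i, abs (1 - u' i) < 1 := by
    refine Fin.cases ?_ ?_
    · simpa [hu'def] using hz
    · intro j
      simp only [hu'def, Fin.cons_succ]
      have : (1 : ℂ) - (1 - w * (starRingEnd ℂ) (ζ j)) = w * (starRingEnd ℂ) (ζ j) := by ring
      rw [this, map_mul, Complex.abs_conj, hζ j, mul_one]
      exact hw
  have hA : (β:ℂ) * Complex.log (1-z)
      + ∑ j, (((1-β)*σ j : ℝ):ℂ) * Complex.log (1 - w * (starRingEnd ℂ) (ζ j))
      = ∑ i, ((t' i : ℝ):ℂ) * Complex.log (u' i) := by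
    rw [Fin.sum_univ_succ]
    simp only [ht'def, hu'def, Fin.cons_zero, Fin.cons_succ, Complex.ofReal_mul]
  set A := ∑ i, ((t' i : ℝ):ℂ) * Complex.log (u' i) with hAdef
  have hre : A.re = ∑ i, t' i * (Complex.log (u' i)).re := by
    rw [hAdef, Complex.re_sum]
    congr 1; ext i
    simp [Complex.mul_re]
  have him : A.im = ∑ i, t' i * (Complex.log (u' i)).im := by
    rw [hAdef, Complex.im_sum]
    congr 1; ext i
    simp [Complex.mul_im]
  refine ⟨A.re, A.im, ?_, ?_, ?_⟩
  · rw [hre, him]; exact main_ineq t' u' ht' ht1 hu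
  · rw [Efun, hA, Complex.abs_exp]
  · rw [Efun, hA, Complex.exp_re]

lemma Tfun_mem (hβ0 : 0 < β) (hβ1 : β < 1) (hζ : ∀ j, abs (ζ j) = 1)
    (hσ : ∀ j, 0 ≤ σ j) (hσ1 : ∑ j, σ j = 1) {z w : ℂ} (hz : abs z < 1) (hw : abs w < 1) :
    abs (Tfun β ζ σ z w) < 1 := by
  obtain ⟨X, Y, hXY, habs, hre⟩ := Efun_re_im hβ0 hβ1 hζ hσ hσ1 hz hw
  set E := Efun β ζ σ z w with hE
  have h1 : normSq (1 - E) = 1 - 2*E.re + normSq E := by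
    simp only [normSq_apply, Complex.sub_re, Complex.sub_im, Complex.one_re, Complex.one_im]
    ring
  have h2 : normSq E = (Real.exp X)^2 := by
    rw [← Complex.sq_abs, habs]
  have hx : 0 < Real.exp X := Real.exp_pos X
  have h3 : normSq (1 - E) < 1 := by
    rw [h1, h2, hre]; nlinarith
  have h4 : (abs (Tfun β ζ σ z w))^2 = normSq (1 - E) := by
    rw [Tfun, Complex.sq_abs]
  nlinarith [Complex.abs.nonneg (Tfun β ζ σ z w)]

lemma Tfun_zero : Tfun β ζ σ 0 0 = 0 := by
  simp [Tfun, Efun, Complex.log_one]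

lemma Efun_abs_le (hβ0 : 0 < β) (hβ1 : β < 1) (hζ : ∀ j, abs (ζ j) = 1)
    (hσ : ∀ j, 0 ≤ σ j) (hσ1 : ∑ j, σ j = 1) {z w : ℂ} (hz : abs z < 1) (hw : abs w < 1) :
    abs (Efun β ζ σ z w) ≤ Real.exp (β * Real.log (abs (1-z)) + (1-β)*Real.log 2) := by
  have h1z : (1:ℂ) - z ≠ 0 := by
    intro h
    have : z = 1 := by linear_combination -h
    rw [this] at hz; simp at hz
  have hterm : ∀ j, (1:ℂ) - w * (starRingEnd ℂ) (ζ j) ≠ 0 := by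
    intro j h
    have h2 : w * (starRingEnd ℂ) (ζ j) = 1 := by linear_combination -h
    have := congrArg Complex.abs h2
    rw [map_mul, Complex.abs_conj, hζ j, mul_one] at this
    simp at this; rw [this] at hw; exact lt_irrefl _ hw
  rw [Efun, Complex.abs_exp]
  apply Real.exp_le_exp.2
  have hre : ((β:ℂ) * Complex.log (1-z)
      + ∑ j, (((1-β)*σ j : ℝ):ℂ) * Complex.log (1 - w * (starRingEnd ℂ) (ζ j))).re
      = β * Real.log (abs (1-z))
        + ∑ j, (1-β)*σ j * Real.log (abs (1 - w * (starRingEnd ℂ) (ζ j))) := by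
    rw [Complex.add_re, Complex.re_sum]
    congr 1
    · simp [Complex.mul_re, Complex.log_re, Complex.abs_apply]
    · congr 1; ext j; simp [Complex.mul_re, Complex.log_re, Complex.abs_apply]
  rw [hre]
  have hlog2 : ∀ j, Real.log (abs (1 - w * (starRingEnd ℂ) (ζ j))) ≤ Real.log 2 := by
    intro j
    apply Real.log_le_log (Complex.abs.pos (hterm j))
    calc abs (1 - w * (starRingEnd ℂ) (ζ j)) ≤ abs (1:ℂ) + abs (w * (starRingEnd ℂ) (ζ j)) :=
          Complex.abs.sub_le_add _ _
      _ ≤ 1 + 1 := by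
          rw [map_one, map_mul, Complex.abs_conj, hζ j, mul_one]
          linarith
      _ = 2 := by norm_num
  have hsum : ∑ j, (1-β)*σ j * Real.log (abs (1 - w * (starRingEnd ℂ) (ζ j)))
      ≤ ∑ j, (1-β)*σ j * Real.log 2 := by
    apply Finset.sum_le_sum
    intro j _
    exact mul_le_mul_of_nonneg_left (hlog2 j) (mul_nonneg (by linarith) (hσ j))
  have hsum2 : ∑ j, (1-β)*σ j * Real.log 2 = (1-β) * Real.log 2 := by
    rw [← Finset.sum_mul, ← Finset.mul_sum, hσ1]; ring
  linarith

lemma omitted_value (hβ0 : 0 < β) (hβ1 : β < 1) (hζ : ∀ j, abs (ζ j) = 1)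
    (hσ : ∀ j, 0 ≤ σ j) (hσ1 : ∑ j, σ j = 1) {z : ℂ} (hz : abs z < 1) :
    ∃ y₀ : ℂ, abs y₀ < 1 ∧ ∀ w, abs w < 1 → Tfun β ζ σ z w ≠ y₀ := by
  set Rz := Real.exp (β * Real.log (abs (1-z)) + (1-β)*Real.log 2) with hRz
  have h1z : (1:ℂ) - z ≠ 0 := by
    intro h
    have : z = 1 := by linear_combination -h
    rw [this] at hz; simp at hz
  have hRz2 : Rz < 2 := by
    have habs2 : abs (1-z) < 2 := by
      calc abs (1-z) ≤ abs (1:ℂ) + abs z := Complex.abs.sub_le_add _ _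
        _ < 2 := by rw [map_one]; linarith
    have hlog : Real.log (abs (1-z)) < Real.log 2 :=
      Real.log_lt_log (Complex.abs.pos h1z) habs2
    have : β * Real.log (abs (1-z)) + (1-β)*Real.log 2 < Real.log 2 := by nlinarith
    calc Rz < Real.exp (Real.log 2) := Real.exp_lt_exp.2 this
      _ = 2 := Real.exp_log (by norm_num)
  have hRz0 : 0 < Rz := Real.exp_pos _
  set R' := (Rz + 2)/2 with hR'
  refine ⟨((1 - R' : ℝ):ℂ), ?_, ?_⟩
  · rw [Complex.abs_ofReal]
    rw [abs_lt]; constructor <;> [nlinarith; nlinarith]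
  · intro w hw hcon
    have hE : Efun β ζ σ z w = ((R' : ℝ):ℂ) := by
      rw [Tfun] at hcon
      have : (1:ℂ) - Efun β ζ σ z w = 1 - ((R':ℝ):ℂ) := by
        rw [hcon]; push_cast; ring
      linear_combination -this
    have := Efun_abs_le hβ0 hβ1 hζ hσ hσ1 hz hw
    rw [hE, Complex.abs_ofReal] at this
    rw [_root_.abs_of_nonneg (by nlinarith : (0:ℝ) ≤ R')] at this
    rw [← hRz] at this
    nlinarith

lemma slit_of_abs_lt {x : ℂ} (h : abs x < 1) : (1 - x) ∈ Complex.slitPlane := by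
  rw [Complex.mem_slitPlane_iff]
  left
  have h1 : |x.re| ≤ abs x := Complex.abs_re_le_abs x
  have : (1 - x).re = 1 - x.re := by simp
  rw [this]
  cases' abs_le.1 h1 with h2 h3
  linarith

lemma one_sub_ne_zero {x : ℂ} (h : abs x < 1) : (1:ℂ) - x ≠ 0 := by
  intro hc
  have : x = 1 := by linear_combination -hc
  rw [this] at h; simp at h

lemma abs_mul_conj_lt {w ζj : ℂ} (hw : abs w < 1) (hζj : abs ζj = 1) :
    abs (w * (starRingEnd ℂ) ζj) < 1 := by
  rw [map_mul, Complex.abs_conj, hζj, mul_one]; exact hw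

/-- derivative of `Tfun` in the second variable -/
def DT (β : ℝ) {n : ℕ} (ζ : Fin n → ℂ) (σ : Fin n → ℝ) (z w : ℂ) : ℂ :=
  Efun β ζ σ z w * ∑ j, (((1-β)*σ j : ℝ):ℂ) * (starRingEnd ℂ) (ζ j)
    / (1 - w * (starRingEnd ℂ) (ζ j))

lemma hasDerivAt_Tfun (hζ : ∀ j, abs (ζ j) = 1) {z w : ℂ} (hw : abs w < 1) :
    HasDerivAt (Tfun β ζ σ z) (DT β ζ σ z w) w := by
  have hterm : ∀ j : Fin n,
      HasDerivAt (fun v => (((1-β)*σ j : ℝ):ℂ) * Complex.log (1 - v * (starRingEnd ℂ) (ζ j)))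
        ((((1-β)*σ j : ℝ):ℂ) * (-(starRingEnd ℂ) (ζ j) / (1 - w * (starRingEnd ℂ) (ζ j)))) w := by
    intro j
    have h1 : HasDerivAt (fun v : ℂ => 1 - v * (starRingEnd ℂ) (ζ j))
        (-(starRingEnd ℂ) (ζ j)) w := by
      simpa using ((hasDerivAt_id w).mul_const ((starRingEnd ℂ) (ζ j))).const_sub 1
    have h2 := h1.clog (slit_of_abs_lt (abs_mul_conj_lt hw (hζ j)))
    exact h2.const_mul _
  have hsum : HasDerivAt (fun v => (β:ℂ) * Complex.log (1-z)
      + ∑ j, (((1-β)*σ j : ℝ):ℂ) * Complex.log (1 - v * (starRingEnd ℂ) (ζ j)))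
      (∑ j, (((1-β)*σ j : ℝ):ℂ) * (-(starRingEnd ℂ) (ζ j) / (1 - w * (starRingEnd ℂ) (ζ j)))) w := by
    exact (HasDerivAt.fun_sum (fun j _ => hterm j)).const_add _
  have hexp := hsum.cexp
  have hT := hexp.const_sub 1
  have : Tfun β ζ σ z = fun v => 1 - Complex.exp ((β:ℂ) * Complex.log (1-z)
      + ∑ j, (((1-β)*σ j : ℝ):ℂ) * Complex.log (1 - v * (starRingEnd ℂ) (ζ j))) := by
    funext v; rw [Tfun, Efun]
  rw [this]
  refine hT.congr_deriv ?_
  rw [DT, Efun]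
  have hsum2 : (∑ j, (((1-β)*σ j : ℝ):ℂ) * (-(starRingEnd ℂ) (ζ j) / (1 - w * (starRingEnd ℂ) (ζ j))))
      = -(∑ j, (((1-β)*σ j : ℝ):ℂ) * (starRingEnd ℂ) (ζ j) / (1 - w * (starRingEnd ℂ) (ζ j))) := by
    rw [← Finset.sum_neg_distrib]
    apply Finset.sum_congr rfl
    intro j _
    ring
  rw [hsum2]
  ring

lemma diffOn_Tfun_w (hζ : ∀ j, abs (ζ j) = 1) {z : ℂ} :
    DifferentiableOn ℂ (Tfun β ζ σ z) (ball (0:ℂ) 1) := by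
  intro w hw
  rw [mem_ball_zero_iff] at hw
  exact (hasDerivAt_Tfun hζ hw).differentiableAt.differentiableWithinAt

lemma diffOn_comp (hζ : ∀ j, abs (ζ j) = 1) {g : ℂ → ℂ}
    (hg : DifferentiableOn ℂ g (ball (0:ℂ) 1)) (hgm : ∀ z ∈ ball (0:ℂ) 1, abs (g z) < 1) :
    DifferentiableOn ℂ (fun z => Tfun β ζ σ z (g z)) (ball (0:ℂ) 1) := by
  have h1 : DifferentiableOn ℂ (fun z : ℂ => (β:ℂ) * Complex.log (1-z)) (ball (0:ℂ) 1) := by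
    apply DifferentiableOn.const_mul
    apply DifferentiableOn.clog ((differentiableOn_const 1).sub differentiableOn_id)
    intro z hz
    exact slit_of_abs_lt (mem_ball_zero_iff.1 hz)
  have h2 : DifferentiableOn ℂ (fun z =>
      ∑ j, (((1-β)*σ j : ℝ):ℂ) * Complex.log (1 - g z * (starRingEnd ℂ) (ζ j)))
      (ball (0:ℂ) 1) := by
    apply DifferentiableOn.fun_sum
    intro j _
    apply DifferentiableOn.const_mul
    apply DifferentiableOn.clog ((differentiableOn_const 1).sub (hg.mul_const _))
    intro z hz
    exact slit_of_abs_lt (abs_mul_conj_lt (hgm z hz) (hζ j))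
  have := ((h1.add h2).cexp).const_sub (1:ℂ)
  exact this

/-- joint continuity of `Tfun` and `DT` on the open polydisc -/
lemma contOn_Tfun (hζ : ∀ j, abs (ζ j) = 1) : ContinuousOn (fun p : ℂ × ℂ => Tfun β ζ σ p.1 p.2)
    {p : ℂ × ℂ | abs p.1 < 1 ∧ abs p.2 < 1} := by
  apply ContinuousOn.sub continuousOn_const
  apply ContinuousOn.cexp
  apply ContinuousOn.add
  · apply ContinuousOn.mul continuousOn_const
    apply ContinuousOn.clog (continuousOn_const.sub continuous_fst.continuousOn)
    intro p hp
    exact slit_of_abs_lt hp.1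
  · apply continuousOn_finset_sum
    intro j _
    apply ContinuousOn.mul continuousOn_const
    apply ContinuousOn.clog (continuousOn_const.sub (continuous_snd.continuousOn.mul
      continuousOn_const))
    intro p hp
    exact slit_of_abs_lt (abs_mul_conj_lt hp.2 (hζ j))

lemma contOn_DT (hζ : ∀ j, abs (ζ j) = 1) : ContinuousOn (fun p : ℂ × ℂ => DT β ζ σ p.1 p.2)
    {p : ℂ × ℂ | abs p.1 < 1 ∧ abs p.2 < 1} := by
  have hE : ContinuousOn (fun p : ℂ × ℂ => Efun β ζ σ p.1 p.2)
      {p : ℂ × ℂ | abs p.1 < 1 ∧ abs p.2 < 1} := by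
    have := contOn_Tfun (β := β) (σ := σ) hζ
    have h2 : (fun p : ℂ × ℂ => Efun β ζ σ p.1 p.2)
        = fun p => 1 - Tfun β ζ σ p.1 p.2 := by
      funext p; rw [Tfun]; ring
    rw [h2]
    exact continuousOn_const.sub this
  apply ContinuousOn.mul hE
  apply continuousOn_finset_sum
  intro j _
  apply ContinuousOn.div continuousOn_const
  · exact continuousOn_const.sub (continuous_snd.continuousOn.mul continuousOn_const)
  · intro p hp
    exact one_sub_ne_zero (abs_mul_conj_lt hp.2 (hζ j))

end Data

section Glemma

/-- The normalized composite map `G` and the norm of its derivative at `0`. -/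
lemma G_props (F : ℂ → ℂ) (hFd : DifferentiableOn ℂ F (ball (0:ℂ) 1))
    (hFm : ∀ w ∈ ball (0:ℂ) 1, abs (F w) < 1) {b : ℂ} (hb : abs b < 1) :
    DifferentiableOn ℂ (fun u => mob (F b) (F (mob b u))) (ball (0:ℂ) 1) ∧
    (∀ u ∈ ball (0:ℂ) 1, abs (mob (F b) (F (mob b u))) < 1) ∧
    mob (F b) (F (mob b 0)) = 0 ∧
    abs (deriv (fun u => mob (F b) (F (mob b u))) 0)
      = abs (deriv F b) * (1 - normSq b) / (1 - normSq (F b)) := by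
  have hbmem : b ∈ ball (0:ℂ) 1 := mem_ball_zero_iff.2 hb
  have hFb : abs (F b) < 1 := hFm b hbmem
  have hmob0 : mob b 0 = b := by simp [mob]
  have hmobmem : ∀ u ∈ ball (0:ℂ) 1, mob b u ∈ ball (0:ℂ) 1 := by
    intro u hu
    exact mem_ball_zero_iff.2 (mob_mem hb (mem_ball_zero_iff.1 hu))
  have hGd : DifferentiableOn ℂ (fun u => mob (F b) (F (mob b u))) (ball (0:ℂ) 1) := by
    apply DifferentiableOn.comp (differentiableOn_mob hFb)
    · apply DifferentiableOn.comp hFd (differentiableOn_mob hb) hmobmem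
    · intro u hu
      exact mem_ball_zero_iff.2 (hFm _ (hmobmem u hu))
  have hGm : ∀ u ∈ ball (0:ℂ) 1, abs (mob (F b) (F (mob b u))) < 1 := by
    intro u hu
    exact mob_mem hFb (hFm _ (hmobmem u hu))
  have hG0 : mob (F b) (F (mob b 0)) = 0 := by rw [hmob0, mob_self]
  refine ⟨hGd, hGm, hG0, ?_⟩
  -- derivative computation
  have hFder : HasDerivAt F (deriv F b) b :=
    (hFd.differentiableAt (isOpen_ball.mem_nhds hbmem)).hasDerivAt
  have h1 : HasDerivAt (mob b) (normSq b - 1) 0 := by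
    have := hasDerivAt_mob b (u := 0) (by simp)
    simpa using this
  have h2 : HasDerivAt (mob (F b))
      ((normSq (F b) - 1)/(1 - (starRingEnd ℂ) (F b) * (F b))^2) (F b) :=
    hasDerivAt_mob (F b) (denom_ne_zero hFb hFb)
  have hinner : HasDerivAt (fun u => F (mob b u)) (deriv F b * (normSq b - 1)) 0 := by
    have hF' : HasDerivAt F (deriv F b) (mob b 0) := by rw [hmob0]; exact hFder
    have := hF'.comp 0 h1
    exact this
  have hchain : HasDerivAt (fun u => mob (F b) (F (mob b u)))
      ((normSq (F b) - 1)/(1 - (starRingEnd ℂ) (F b) * (F b))^2 * (deriv F b * (normSq b - 1))) 0 := by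
    have h2' : HasDerivAt (mob (F b))
        ((normSq (F b) - 1)/(1 - (starRingEnd ℂ) (F b) * (F b))^2) ((fun u => F (mob b u)) 0) := by
      simp only [hmob0]; exact h2
    have := h2'.comp 0 hinner
    exact this
  rw [hchain.deriv]
  have hconj : 1 - (starRingEnd ℂ) (F b) * (F b) = ((1 - normSq (F b) : ℝ) : ℂ) := by
    rw [mul_comm, Complex.mul_conj]
    push_cast
    ring
  rw [hconj]
  rw [map_mul, map_div₀, map_mul, map_pow, Complex.abs_ofReal]
  have hnb : normSq b < 1 := by rw [← Complex.sq_abs]; nlinarith [Complex.abs.nonneg b]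
  have hnFb : normSq (F b) < 1 := by rw [← Complex.sq_abs]; nlinarith [Complex.abs.nonneg (F b)]
  have e1 : abs ((normSq (F b) : ℂ) - 1) = 1 - normSq (F b) := by
    rw [show ((normSq (F b) : ℂ) - 1) = (((normSq (F b) - 1 : ℝ)) : ℂ) by push_cast; ring,
      Complex.abs_ofReal]
    rw [_root_.abs_of_nonpos (by linarith)]
    ring
  have e2 : abs ((normSq b : ℂ) - 1) = 1 - normSq b := by
    rw [show ((normSq b : ℂ) - 1) = (((normSq b - 1 : ℝ)) : ℂ) by push_cast; ring,
      Complex.abs_ofReal]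
    rw [_root_.abs_of_nonpos (by linarith)]
    ring
  rw [e1, e2]
  rw [_root_.abs_of_nonneg (by linarith : (0:ℝ) ≤ 1 - normSq (F b))]
  have hpos : (0:ℝ) < 1 - normSq (F b) := by linarith
  field_simp

end Glemma

lemma deriv_bound_lt (F : ℂ → ℂ) (hFd : DifferentiableOn ℂ F (ball (0:ℂ) 1))
    (hFm : ∀ w ∈ ball (0:ℂ) 1, abs (F w) < 1)
    (homit : ∃ y₀, abs y₀ < 1 ∧ ∀ w, abs w < 1 → F w ≠ y₀) {b : ℂ} (hb : abs b < 1) :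
    abs (deriv F b) * (1 - normSq b) < 1 - normSq (F b) := by
  obtain ⟨hGd, hGm, hG0, hnorm⟩ := G_props F hFd hFm hb
  set G := fun u => mob (F b) (F (mob b u)) with hGdef
  have hbmem : b ∈ ball (0:ℂ) 1 := mem_ball_zero_iff.2 hb
  have hFb : abs (F b) < 1 := hFm b hbmem
  have hnFb : normSq (F b) < 1 := by
    rw [← Complex.sq_abs]; nlinarith [Complex.abs.nonneg (F b)]
  have hGmaps : MapsTo G (ball (0:ℂ) 1) (ball (G 0) 1) := by
    intro u hu
    rw [show G 0 = 0 from hG0]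
    exact mem_ball_zero_iff.2 (hGm u hu)
  have hSP : ‖dslope G 0 0‖ ≤ 1 := by
    have := Complex.norm_dslope_le_div_of_mapsTo_ball hGd (hGmaps.mono_right ball_subset_closedBall) (mem_ball_self one_pos)
    simpa using this
  rw [dslope_same] at hSP
  have hQ0 : abs (deriv G 0) = abs (deriv F b) * (1 - normSq b) / (1 - normSq (F b)) := hnorm
  rcases lt_or_eq_of_le hSP with hlt | heq
  · have : abs (deriv G 0) < 1 := hlt
    rw [hQ0] at this
    rw [div_lt_one (by linarith)] at this
    exact this
  · -- equality case: G is affine, F surjective, contradiction with omitted value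
    exfalso
    have heq' : ‖dslope G 0 0‖ = 1/1 := by rw [dslope_same, heq]; norm_num
    obtain ⟨C, hC, hEq⟩ := Complex.affine_of_mapsTo_ball_of_exists_norm_dslope_eq_div' hGd (hGmaps.mono_right ball_subset_closedBall)
      ⟨0, mem_ball_self one_pos, heq'⟩
    obtain ⟨y₀, hy₀, hom⟩ := homit
    have hC1 : abs C = 1 := by rw [abs_eq_norm, hC]; norm_num
    have hCne : C ≠ 0 := by
      intro h; rw [h] at hC1; simp at hC1
    set x := mob (F b) y₀ with hx
    have hx1 : abs x < 1 := mob_mem hFb hy₀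
    set u := x * C⁻¹ with hu
    have hu1 : abs u < 1 := by
      rw [hu, map_mul, map_inv₀]
      rw [hC1]
      simpa using hx1
    have hGu : G u = x := by
      have := hEq (mem_ball_zero_iff.2 hu1)
      rw [this]
      simp only [hG0]
      rw [show G 0 = 0 from hG0]
      rw [smul_eq_mul]
      rw [hu]
      field_simp
      ring
    have hFval : F (mob b u) = y₀ := by
      have h1 : mob (F b) (G u) = mob (F b) x := by rw [hGu]
      rw [hGdef] at h1
      simp only at h1
      rw [mob_mob hFb (hFm _ (mem_ball_zero_iff.2 (mob_mem hb hu1)))] at h1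
      rw [hx, mob_mob hFb hy₀] at h1
      exact h1
    exact hom _ (mob_mem hb hu1) hFval

section Data2

variable {β : ℝ} {n : ℕ} {ζ : Fin n → ℂ} {σ : Fin n → ℝ}

lemma exists_c (hβ0 : 0 < β) (hβ1 : β < 1) (hζ : ∀ j, abs (ζ j) = 1)
    (hσ : ∀ j, 0 ≤ σ j) (hσ1 : ∑ j, σ j = 1) {r : ℝ} (hr0 : 0 ≤ r) (hr : r < 1) :
    ∃ c, 0 ≤ c ∧ c < 1 ∧ ∀ z b : ℂ, abs z ≤ r → abs b ≤ r →
      abs (deriv (Tfun β ζ σ z) b) * (1 - normSq b) ≤ c * (1 - normSq (Tfun β ζ σ z b)) := by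
  set Γ : ℂ × ℂ → ℝ := fun p =>
    abs (DT β ζ σ p.1 p.2) * (1 - normSq p.2) / (1 - normSq (Tfun β ζ σ p.1 p.2)) with hΓ
  set K : Set (ℂ × ℂ) := (closedBall (0:ℂ) r) ×ˢ (closedBall (0:ℂ) r) with hK
  have hKc : IsCompact K := (isCompact_closedBall _ _).prod (isCompact_closedBall _ _)
  have hKne : K.Nonempty := ⟨(0,0), by simp [hK, hr0]⟩
  have hKsub : ∀ p ∈ K, abs p.1 < 1 ∧ abs p.2 < 1 := by
    intro p hp
    rw [hK, Set.mem_prod, mem_closedBall_zero_iff, mem_closedBall_zero_iff] at hp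
    exact ⟨lt_of_le_of_lt hp.1 hr, lt_of_le_of_lt hp.2 hr⟩
  have habsT : ∀ p ∈ K, abs (Tfun β ζ σ p.1 p.2) < 1 := fun p hp =>
    Tfun_mem hβ0 hβ1 hζ hσ hσ1 (hKsub p hp).1 (hKsub p hp).2
  have hdenom : ∀ p ∈ K, (0:ℝ) < 1 - normSq (Tfun β ζ σ p.1 p.2) := by
    intro p hp
    have := habsT p hp
    rw [← Complex.sq_abs] at *
    nlinarith [Complex.abs.nonneg (Tfun β ζ σ p.1 p.2)]
  have hΓcont : ContinuousOn Γ K := by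
    apply ContinuousOn.div
    · apply ContinuousOn.mul
      · exact (Complex.continuous_abs.comp_continuousOn
          ((contOn_DT hζ).mono (fun p hp => hKsub p hp)))
      · exact (continuous_const.sub (continuous_normSq.comp continuous_snd)).continuousOn
    · apply ContinuousOn.sub continuousOn_const
      exact continuous_normSq.comp_continuousOn
        ((contOn_Tfun hζ).mono (fun p hp => hKsub p hp))
    · intro p hp
      exact (hdenom p hp).ne'
  obtain ⟨p₀, hp₀K, hmax⟩ := hKc.exists_isMaxOn hKne hΓcont
  set c := Γ p₀ with hc
  have hderiv_eq : ∀ p ∈ K, deriv (Tfun β ζ σ p.1) p.2 = DT β ζ σ p.1 p.2 := by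
    intro p hp
    exact (hasDerivAt_Tfun hζ (hKsub p hp).2).deriv
  have hc1 : c < 1 := by
    have hstrict := deriv_bound_lt (Tfun β ζ σ p₀.1) (diffOn_Tfun_w hζ)
      (fun w hw => Tfun_mem hβ0 hβ1 hζ hσ hσ1 (hKsub p₀ hp₀K).1 (mem_ball_zero_iff.1 hw))
      (omitted_value hβ0 hβ1 hζ hσ hσ1 (hKsub p₀ hp₀K).1) (hKsub p₀ hp₀K).2
    rw [hderiv_eq p₀ hp₀K] at hstrict
    rw [hc, hΓ]
    rw [div_lt_one (hdenom p₀ hp₀K)]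
    exact hstrict
  have hc0 : 0 ≤ c := by
    have h00 : Γ (0,0) ≤ c := hmax (by simp [hK, hr0])
    have : 0 ≤ Γ (0,0) := by
      apply div_nonneg
      · apply mul_nonneg (Complex.abs.nonneg _)
        have : normSq (0:ℂ) = 0 := by simp
        simp [this]
      · exact (hdenom (0,0) (by simp [hK, hr0])).le
    linarith
  refine ⟨c, hc0, hc1, ?_⟩
  intro z b hz hb
  have hpK : (z, b) ∈ K := by
    rw [hK, Set.mem_prod, mem_closedBall_zero_iff, mem_closedBall_zero_iff]
    exact ⟨hz, hb⟩
  have h1 : Γ (z, b) ≤ c := hmax hpK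
  rw [hΓ] at h1
  simp only at h1
  rw [div_le_iff₀ (hdenom (z,b) hpK)] at h1
  rw [hderiv_eq (z,b) hpK]
  exact h1

end Data2

lemma Qbound {Q : ℂ → ℂ} {c t : ℝ} (hQd : DifferentiableOn ℂ Q (ball (0:ℂ) 1))
    (hQ1 : ∀ u ∈ ball (0:ℂ) 1, abs (Q u) ≤ 1) (hQ0c : abs (Q 0) ≤ c)
    (hc0 : 0 ≤ c) (hc1 : c < 1) {u : ℂ} (hu : abs u < 1) (hut : abs u ≤ t)
    (ht0 : 0 ≤ t) (ht1 : t < 1) : abs (Q u) ≤ (c + t)/(1 + c*t) := by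
  have hBnn : (0:ℝ) ≤ (c+t)/(1+c*t) := div_nonneg (by linarith) (by nlinarith)
  have hkey : ∀ ε : ℝ, 0 < ε → abs (Q u) ≤ (1+ε) * ((c + t)/(1 + c*t)) := by
    intro ε hε
    have h1ε : (0:ℝ) < 1 + ε := by linarith
    set Qe : ℂ → ℂ := fun v => Q v / (((1+ε : ℝ)):ℂ) with hQe
    have habsQe : ∀ v, abs (Qe v) = abs (Q v) / (1+ε) := by
      intro v
      rw [hQe]
      simp only [map_div₀, Complex.abs_ofReal]
      rw [_root_.abs_of_pos h1ε]
    have hQem : ∀ v ∈ ball (0:ℂ) 1, abs (Qe v) < 1 := by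
      intro v hv
      rw [habsQe v]
      rw [div_lt_one h1ε]
      linarith [hQ1 v hv]
    have h0mem : (0:ℂ) ∈ ball (0:ℂ) 1 := mem_ball_self one_pos
    have hQe0 : abs (Qe 0) ≤ c := by
      rw [habsQe 0]
      calc abs (Q 0) / (1+ε) ≤ abs (Q 0) :=
            div_le_self (Complex.abs.nonneg _) (by linarith)
        _ ≤ c := hQ0c
    have hQed : DifferentiableOn ℂ Qe (ball (0:ℂ) 1) := hQd.div_const _
    set H : ℂ → ℂ := fun v => mob (Qe 0) (Qe v) with hH
    have hH0 : H 0 = 0 := mob_self _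
    have hHd : DifferentiableOn ℂ H (ball (0:ℂ) 1) := by
      apply DifferentiableOn.comp (differentiableOn_mob (hQem 0 h0mem)) hQed
      intro v hv
      exact mem_ball_zero_iff.2 (hQem v hv)
    have hHm : MapsTo H (ball (0:ℂ) 1) (ball (0:ℂ) 1) := by
      intro v hv
      exact mem_ball_zero_iff.2 (mob_mem (hQem 0 h0mem) (hQem v hv))
    have hSch : abs (H u) ≤ abs u :=
      Complex.abs_le_abs_of_mapsTo_ball_self hHd hHm hH0 (by simpa using hu)
    have htri : abs (Qe u) ≤ (c + t)/(1 + c*t) := by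
      apply triangle_bound (hQem u (mem_ball_zero_iff.2 hu)) (hQem 0 h0mem) hQe0 hc1
        (le_trans hSch hut) ht0 ht1
    rw [habsQe u, div_le_iff₀ h1ε] at htri
    calc abs (Q u) ≤ (c+t)/(1+c*t) * (1+ε) := htri
      _ = (1+ε) * ((c+t)/(1+c*t)) := by ring
  rcases eq_or_lt_of_le hBnn with hB0 | hBpos
  · have := hkey 1 one_pos
    rw [← hB0] at this ⊢
    linarith
  · apply le_of_forall_pos_le_add
    intro δ hδ
    have := hkey (δ / ((c+t)/(1+c*t))) (div_pos hδ hBpos)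
    calc abs (Q u) ≤ (1 + δ / ((c+t)/(1+c*t))) * ((c+t)/(1+c*t)) := this
      _ = (c+t)/(1+c*t) + δ := by
            have hden : (0:ℝ) < 1 + c*t := by nlinarith
            have hct : (0:ℝ) < c + t := by
              by_contra hcon
              push_neg at hcon
              have : (c+t)/(1+c*t) ≤ 0 := div_nonpos_of_nonpos_of_nonneg hcon hden.le
              linarith
            field_simp

/-- The master two-point contraction estimate. -/
lemma contraction {F : ℂ → ℂ} (hFd : DifferentiableOn ℂ F (ball (0:ℂ) 1))
    (hFm : ∀ w ∈ ball (0:ℂ) 1, abs (F w) < 1) {r c : ℝ} (hr0 : 0 ≤ r) (hr : r < 1)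
    (hc0 : 0 ≤ c) (hc1 : c < 1)
    (hder : ∀ b : ℂ, abs b ≤ r →
      abs (deriv F b) * (1 - normSq b) ≤ c * (1 - normSq (F b)))
    {a b : ℂ} (ha : abs a ≤ r) (hb : abs b ≤ r) :
    abs (mob (F b) (F a)) ≤
      ((c + 2*r/(1+r^2))/(1 + c*(2*r/(1+r^2)))) * abs (mob b a) := by
  set t := 2*r/(1+r^2) with htdef
  have hrsq : (0:ℝ) < 1 + r^2 := by nlinarith
  have ht0 : 0 ≤ t := div_nonneg (by linarith) hrsq.le
  have ht1 : t < 1 := by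
    rw [htdef, div_lt_one hrsq]
    nlinarith [sq_nonneg (1-r)]
  have ha1 : abs a < 1 := lt_of_le_of_lt ha hr
  have hb1 : abs b < 1 := lt_of_le_of_lt hb hr
  obtain ⟨hGd, hGm, hG0, hnorm⟩ := G_props F hFd hFm hb1
  set G := fun u => mob (F b) (F (mob b u)) with hGdef
  have hFb : abs (F b) < 1 := hFm b (mem_ball_zero_iff.2 hb1)
  have hnFb : normSq (F b) < 1 := by
    rw [← Complex.sq_abs]; nlinarith [Complex.abs.nonneg (F b)]
  set Q := dslope G 0 with hQdef
  have hQd : DifferentiableOn ℂ Q (ball (0:ℂ) 1) :=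
    (differentiableOn_dslope (isOpen_ball.mem_nhds (mem_ball_self one_pos))).2 hGd
  have hGmaps : MapsTo G (ball (0:ℂ) 1) (ball (G 0) 1) := by
    intro v hv
    rw [show G 0 = 0 from hG0]
    exact mem_ball_zero_iff.2 (hGm v hv)
  have hQ1 : ∀ v ∈ ball (0:ℂ) 1, abs (Q v) ≤ 1 := by
    intro v hv
    have := Complex.norm_dslope_le_div_of_mapsTo_ball hGd (hGmaps.mono_right ball_subset_closedBall) hv
    simpa [Complex.abs_apply] using this
  have hQ0c : abs (Q 0) ≤ c := by
    rw [hQdef, dslope_same]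
    rw [hnorm]
    rw [div_le_iff₀ (by linarith : (0:ℝ) < 1 - normSq (F b))]
    calc abs (deriv F b) * (1 - normSq b) ≤ c * (1 - normSq (F b)) := hder b hb
      _ = c * (1 - normSq (F b)) := rfl
  set u := mob b a with hudef
  have hu1 : abs u < 1 := mob_mem hb1 ha1
  have hut : abs u ≤ t := rho_le_of_mem ha hb hr
  have hQu := Qbound hQd hQ1 hQ0c hc0 hc1 hu1 hut ht0 ht1
  have hGu : G u = u * Q u := by
    have h1 := sub_smul_dslope G 0 u
    rw [sub_zero, smul_eq_mul] at h1
    rw [show G 0 = 0 from hG0, sub_zero] at h1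
    rw [← h1, hQdef]
  have hGval : G u = mob (F b) (F a) := by
    rw [hGdef]
    simp only
    rw [hudef, mob_mob hb1 ha1]
  rw [← hGval, hGu, map_mul]
  calc abs u * abs (Q u) ≤ abs u * ((c+t)/(1+c*t)) :=
        mul_le_mul_of_nonneg_left hQu (Complex.abs.nonneg u)
    _ = ((c+t)/(1+c*t)) * abs (mob b a) := by rw [hudef]; ring

def phi (β : ℝ) {n : ℕ} (ζ : Fin n → ℂ) (σ : Fin n → ℝ) : ℕ → ℂ → ℂ
  | 0 => fun _ => 0
  | (k+1) => fun z => Tfun β ζ σ z (phi β ζ σ k z)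

section Iter

variable {β : ℝ} {n : ℕ} {ζ : Fin n → ℂ} {σ : Fin n → ℝ}

lemma phi_succ (k : ℕ) (z : ℂ) : phi β ζ σ (k+1) z = Tfun β ζ σ z (phi β ζ σ k z) := rfl

lemma phi_props (hβ0 : 0 < β) (hβ1 : β < 1) (hζ : ∀ j, abs (ζ j) = 1)
    (hσ : ∀ j, 0 ≤ σ j) (hσ1 : ∑ j, σ j = 1) :
    ∀ k, DifferentiableOn ℂ (phi β ζ σ k) (ball (0:ℂ) 1) ∧
      (∀ z ∈ ball (0:ℂ) 1, abs (phi β ζ σ k z) < 1) ∧ phi β ζ σ k 0 = 0 := by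
  intro k
  induction k with
  | zero =>
    refine ⟨differentiableOn_const 0, ?_, rfl⟩
    intro z _; simp [phi]
  | succ k ih =>
    obtain ⟨ihd, ihm, ih0⟩ := ih
    refine ⟨?_, ?_, ?_⟩
    · exact diffOn_comp hζ ihd ihm
    · intro z hz
      exact Tfun_mem hβ0 hβ1 hζ hσ hσ1 (mem_ball_zero_iff.1 hz)
        (ihm z hz)
    · rw [phi_succ, ih0, Tfun_zero]

lemma phi_schwarz (hβ0 : 0 < β) (hβ1 : β < 1) (hζ : ∀ j, abs (ζ j) = 1)
    (hσ : ∀ j, 0 ≤ σ j) (hσ1 : ∑ j, σ j = 1) (k : ℕ) {z : ℂ} (hz : abs z < 1) :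
    abs (phi β ζ σ k z) ≤ abs z := by
  obtain ⟨hd, hm, h0⟩ := phi_props hβ0 hβ1 hζ hσ hσ1 k
  exact Complex.abs_le_abs_of_mapsTo_ball_self hd
    (fun w hw => mem_ball_zero_iff.2 (hm w hw)) h0 hz

lemma iter_est (hβ0 : 0 < β) (hβ1 : β < 1) (hζ : ∀ j, abs (ζ j) = 1)
    (hσ : ∀ j, 0 ≤ σ j) (hσ1 : ∑ j, σ j = 1) {r : ℝ} (hr0 : 0 ≤ r) (hr : r < 1) :
    ∃ κ : ℝ, 0 ≤ κ ∧ κ < 1 ∧ ∀ z : ℂ, abs z ≤ r → ∀ k : ℕ,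
      dist (phi β ζ σ k z) (phi β ζ σ (k+1) z) ≤ 2 * κ^k := by
  obtain ⟨c, hc0, hc1, hcb⟩ := exists_c hβ0 hβ1 hζ hσ hσ1 hr0 hr
  set t := 2*r/(1+r^2) with htdef
  have hrsq : (0:ℝ) < 1 + r^2 := by nlinarith
  have ht0 : 0 ≤ t := div_nonneg (by linarith) hrsq.le
  have ht1 : t < 1 := by
    rw [htdef, div_lt_one hrsq]; nlinarith [sq_nonneg (1-r)]
  set κ := (c+t)/(1+c*t) with hκdef
  have hden : (0:ℝ) < 1 + c*t := by nlinarith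
  have hκ0 : 0 ≤ κ := div_nonneg (by linarith) hden.le
  have hκ1 : κ < 1 := by
    rw [hκdef, div_lt_one hden]; nlinarith [mul_pos (sub_pos.2 hc1) (sub_pos.2 ht1)]
  refine ⟨κ, hκ0, hκ1, ?_⟩
  intro z hz k
  have hz1 : abs z < 1 := lt_of_le_of_lt hz hr
  -- first the pseudo-distance bound by induction
  have hrho : ∀ k : ℕ, abs (mob (phi β ζ σ k z) (phi β ζ σ (k+1) z)) ≤ κ^k := by
    intro k
    induction k with
    | zero =>
      have h1 : abs (phi β ζ σ 1 z) < 1 :=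
        (phi_props hβ0 hβ1 hζ hσ hσ1 1).2.1 z (mem_ball_zero_iff.2 hz1)
      have : mob (phi β ζ σ 0 z) (phi β ζ σ 1 z) = -(phi β ζ σ 1 z) := by
        show mob 0 _ = _
        rw [mob]
        simp
      rw [this, pow_zero, map_neg_eq_map]
      exact h1.le
    | succ k ih =>
      have hbnd := contraction (diffOn_Tfun_w (β := β) (σ := σ) (z := z) hζ)
        (fun w hw => Tfun_mem hβ0 hβ1 hζ hσ hσ1 hz1 (mem_ball_zero_iff.1 hw))
        hr0 hr hc0 hc1 (fun b hb => hcb z b hz hb)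
        (a := phi β ζ σ (k+1) z) (b := phi β ζ σ k z)
        (le_trans (phi_schwarz hβ0 hβ1 hζ hσ hσ1 (k+1) hz1) hz)
        (le_trans (phi_schwarz hβ0 hβ1 hζ hσ hσ1 k hz1) hz)
      rw [← phi_succ, ← phi_succ] at hbnd
      calc abs (mob (phi β ζ σ (k+1) z) (phi β ζ σ (k+2) z))
          ≤ κ * abs (mob (phi β ζ σ k z) (phi β ζ σ (k+1) z)) := hbnd
        _ ≤ κ * κ^k := mul_le_mul_of_nonneg_left ih hκ0
        _ = κ^(k+1) := by ring
  -- convert to euclidean distance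
  have hbk : abs (phi β ζ σ k z) < 1 :=
    (phi_props hβ0 hβ1 hζ hσ hσ1 k).2.1 z (mem_ball_zero_iff.2 hz1)
  have hak : abs (phi β ζ σ (k+1) z) < 1 :=
    (phi_props hβ0 hβ1 hζ hσ hσ1 (k+1)).2.1 z (mem_ball_zero_iff.2 hz1)
  set b := phi β ζ σ k z
  set a := phi β ζ σ (k+1) z
  have hmobeq : b - a = mob b a * (1 - (starRingEnd ℂ) b * a) := by
    have hne := denom_ne_zero hbk hak
    rw [mob]
    rw [div_mul_cancel₀ _ hne]
  have hdist : dist b a = abs (b - a) := Complex.dist_eq b a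
  rw [hdist, hmobeq, map_mul]
  have h2 : abs (1 - (starRingEnd ℂ) b * a) ≤ 2 := by
    calc abs (1 - (starRingEnd ℂ) b * a) ≤ abs (1:ℂ) + abs ((starRingEnd ℂ) b * a) :=
          Complex.abs.sub_le_add _ _
      _ ≤ 1 + 1 := by
          rw [map_one, map_mul, Complex.abs_conj]
          nlinarith [Complex.abs.nonneg b, Complex.abs.nonneg a]
      _ = 2 := by norm_num
  calc abs (mob b a) * abs (1 - (starRingEnd ℂ) b * a) ≤ κ^k * 2 := by
        apply mul_le_mul (hrho k) h2 (Complex.abs.nonneg _) (pow_nonneg hκ0 k)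
    _ = 2 * κ^k := by ring

end Iter

end Stmt17

open Stmt17 in
theorem stmt17 (β : ℝ) (hβ0 : 0 < β) (hβ1 : β < 1)
    (n : ℕ) (ζ : Fin n → ℂ) (hζ : ∀ j, ‖ζ j‖ = 1)
    (σ : Fin n → ℝ) (hσ : ∀ j, 0 ≤ σ j) (hσ1 : ∑ j, σ j = 1)
    (f : ℂ → ℂ)
    (hf : ∀ z ∈ ball (0 : ℂ) 1,
      f z = (1 - z) *
        ∏ j, (1 - z * (starRingEnd ℂ) (ζ j)) ^ (-(((1 - β) * σ j : ℝ) : ℂ))) :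
    ∃ ω : ℂ → ℂ, DifferentiableOn ℂ ω (ball (0 : ℂ) 1) ∧ ω 0 = 0 ∧
      (∀ z ∈ ball (0 : ℂ) 1, ω z ∈ ball (0 : ℂ) 1) ∧
      (∀ z ∈ ball (0 : ℂ) 1, (1 - z) ^ ((β : ℂ)) = f (ω z)) := by
  have hprops := phi_props hβ0 hβ1 hζ hσ hσ1
  -- pointwise convergence
  have hconv : ∀ z : ℂ, ∃ L : ℂ, Complex.abs z < 1 →
      Filter.Tendsto (fun k => phi β ζ σ k z) Filter.atTop (nhds L) := by
    intro z
    by_cases hz : Complex.abs z < 1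
    · obtain ⟨κ, hκ0, hκ1, hest⟩ := iter_est hβ0 hβ1 hζ hσ hσ1 (Complex.abs.nonneg z) hz
      have hcs : CauchySeq (fun k => phi β ζ σ k z) :=
        cauchySeq_of_le_geometric κ 2 hκ1 (fun k => hest z le_rfl k)
      obtain ⟨L, hL⟩ := cauchySeq_tendsto_of_complete hcs
      exact ⟨L, fun _ => hL⟩
    · exact ⟨0, fun h => absurd h hz⟩
  choose ω hω using hconv
  -- tail estimate on closed sub-balls
  have htail : ∀ r : ℝ, 0 ≤ r → r < 1 → ∃ κ : ℝ, 0 ≤ κ ∧ κ < 1 ∧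
      ∀ z : ℂ, Complex.abs z ≤ r → ∀ k : ℕ,
        dist (phi β ζ σ k z) (ω z) ≤ 2 * κ^k / (1 - κ) := by
    intro r hr0 hr
    obtain ⟨κ, hκ0, hκ1, hest⟩ := iter_est hβ0 hβ1 hζ hσ hσ1 hr0 hr
    refine ⟨κ, hκ0, hκ1, ?_⟩
    intro z hz k
    have hz1 : Complex.abs z < 1 := lt_of_le_of_lt hz hr
    exact dist_le_of_le_geometric_of_tendsto κ 2 hκ1 (fun k => hest z hz k) (hω z hz1) k
  -- locally uniform convergence
  have hTLU : TendstoLocallyUniformlyOn (fun k => phi β ζ σ k) ω Filter.atTop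
      (ball (0:ℂ) 1) := by
    rw [tendstoLocallyUniformlyOn_iff_forall_isCompact isOpen_ball]
    intro K hKsub hKc
    rcases K.eq_empty_or_nonempty with rfl | hne
    · exact tendstoUniformlyOn_empty
    · obtain ⟨z₀, hz₀K, hmax⟩ := hKc.exists_isMaxOn hne Complex.continuous_abs.continuousOn
      set r := Complex.abs z₀ with hrdef
      have hr1 : r < 1 := mem_ball_zero_iff.1 (hKsub hz₀K)
      obtain ⟨κ, hκ0, hκ1, htl⟩ := htail r (Complex.abs.nonneg z₀) hr1
      rw [Metric.tendstoUniformlyOn_iff]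
      intro ε hε
      have htend : Filter.Tendsto (fun k : ℕ => 2 * κ^k / (1-κ)) Filter.atTop (nhds 0) := by
        have h1 : Filter.Tendsto (fun k : ℕ => κ^k) Filter.atTop (nhds 0) :=
          tendsto_pow_atTop_nhds_zero_of_lt_one hκ0 hκ1
        have := (h1.const_mul 2).div_const (1-κ)
        simpa using this
      filter_upwards [htend.eventually (gt_mem_nhds hε)] with k hk z hzK
      have hzr : Complex.abs z ≤ r := hmax hzK
      have := htl z hzr k
      rw [dist_comm] at this
      exact lt_of_le_of_lt this hk
  have hωd : DifferentiableOn ℂ ω (ball (0:ℂ) 1) :=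
    hTLU.differentiableOn (Filter.Eventually.of_forall (fun k => (hprops k).1)) isOpen_ball
  have hωabs : ∀ z : ℂ, Complex.abs z < 1 → Complex.abs (ω z) ≤ Complex.abs z := by
    intro z hz
    have h1 : Filter.Tendsto (fun k => Complex.abs (phi β ζ σ k z)) Filter.atTop
        (nhds (Complex.abs (ω z))) :=
      (Complex.continuous_abs.tendsto _).comp (hω z hz)
    apply le_of_tendsto h1
    exact Filter.Eventually.of_forall (fun k => phi_schwarz hβ0 hβ1 hζ hσ hσ1 k hz)
  have hω0 : ω 0 = 0 := by
    have h0 : Complex.abs (0:ℂ) < 1 := by simp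
    have h1 : Filter.Tendsto (fun k => phi β ζ σ k 0) Filter.atTop (nhds 0) := by
      have : (fun k => phi β ζ σ k 0) = fun _ => (0:ℂ) := by
        funext k; exact (hprops k).2.2
      rw [this]; exact tendsto_const_nhds
    exact tendsto_nhds_unique (hω 0 h0) h1
  have hfix : ∀ z : ℂ, Complex.abs z < 1 → Tfun β ζ σ z (ω z) = ω z := by
    intro z hz
    have hωz : Complex.abs (ω z) < 1 := lt_of_le_of_lt (hωabs z hz) hz
    have h1 : Filter.Tendsto (fun k => phi β ζ σ (k+1) z) Filter.atTop (nhds (ω z)) :=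
      (hω z hz).comp (Filter.tendsto_add_atTop_nat 1)
    have h2 : Filter.Tendsto (fun k => Tfun β ζ σ z (phi β ζ σ k z)) Filter.atTop
        (nhds (Tfun β ζ σ z (ω z))) := by
      have hcont : ContinuousAt (Tfun β ζ σ z) (ω z) :=
        (hasDerivAt_Tfun hζ hωz).differentiableAt.continuousAt
      exact hcont.tendsto.comp (hω z hz)
    have h3 : (fun k => phi β ζ σ (k+1) z) = fun k => Tfun β ζ σ z (phi β ζ σ k z) := by
      funext k; exact phi_succ k z
    rw [h3] at h1
    exact tendsto_nhds_unique h2 h1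
  refine ⟨ω, hωd, hω0, ?_, ?_⟩
  · intro z hz
    rw [mem_ball_zero_iff] at hz ⊢
    exact lt_of_le_of_lt (hωabs z hz) hz
  · intro z hzmem
    have hz : Complex.abs z < 1 := mem_ball_zero_iff.1 hzmem
    have hωz : Complex.abs (ω z) < 1 := lt_of_le_of_lt (hωabs z hz) hz
    rw [hf (ω z) (mem_ball_zero_iff.2 hωz)]
    have hE : Efun β ζ σ z (ω z) = 1 - ω z := by
      have := hfix z hz
      rw [Tfun] at this
      linear_combination -this
    have haj : ∀ j : Fin n, (1:ℂ) - ω z * (starRingEnd ℂ) (ζ j) ≠ 0 :=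
      fun j => one_sub_ne_zero (abs_mul_conj_lt hωz (hζ j))
    have h1z : (1:ℂ) - z ≠ 0 := one_sub_ne_zero hz
    have hEexp : Efun β ζ σ z (ω z) = (1-z)^((β:ℂ)) *
        ∏ j, (1 - ω z * (starRingEnd ℂ) (ζ j)) ^ ((((1 - β) * σ j : ℝ) : ℂ)) := by
      rw [Efun, Complex.exp_add, Complex.exp_sum]
      congr 1
      · rw [Complex.cpow_def_of_ne_zero h1z, mul_comm]
      · apply Finset.prod_congr rfl
        intro j _
        rw [Complex.cpow_def_of_ne_zero (haj j), mul_comm]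
    rw [← hE, hEexp]
    rw [mul_assoc, ← Finset.prod_mul_distrib]
    have hprod : ∏ j, ((1 - ω z * (starRingEnd ℂ) (ζ j)) ^ ((((1 - β) * σ j : ℝ) : ℂ)) *
        (1 - ω z * (starRingEnd ℂ) (ζ j)) ^ (-(((1 - β) * σ j : ℝ) : ℂ))) = 1 := by
      apply Finset.prod_eq_one
      intro j _
      rw [← Complex.cpow_add _ _ (haj j)]
      simp
    rw [hprod, mul_one]
end
end
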